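/- arXiv:1610.09965 — 4 statements merged into one kernel-verified Lean document; each statement's English description precedes it below -/
import Mathlib

section
/- Let (A_n,B_n)_{n≥1} be a bivariate sequence of iid real-valued random vectors. Then the following assertions are equivalent: (a) A_1B_2+B_1=g(A_1A_2) a.s. for some measurable function g:R→R; (b) for some c∈R, either A_1c+B_1=c a.s., or (A_1,B_1)=(1,c) a.s. -/
open MeasureTheory ProbabilityTheory Filter
open scoped ENNReal NNReal Topology

noncomputable section

namespace Perpetuities

/-- The positive part of the logarithm, with the convention `log⁺ 0 = 0`. -/
def logplus (x : ℝ) : ℝ := max (Real.log x) 0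

/-- `Pprod A n = Π_n = A_1 ⋯ A_n` (with `Π_0 = 1`); here `A n` is the paper's `A_{n+1}`. -/
def Pprod {Ω : Type*} (A : ℕ → Ω → ℝ) (n : ℕ) (ω : Ω) : ℝ := ∏ k ∈ Finset.range n, A k ω

/-- `Ssum A B n = ∑_{k=1}^n Π_{k-1} B_k = Ψ_1 ∘ ⋯ ∘ Ψ_n (0)`. -/
def Ssum {Ω : Type*} (A B : ℕ → Ω → ℝ) (n : ℕ) (ω : Ω) : ℝ :=
  ∑ k ∈ Finset.range n, Pprod A k ω * B k ω

/-- The perpetuity `Z_∞ = ∑_{n ≥ 1} Π_{n-1} B_n`. -/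
def Zinf {Ω : Type*} (A B : ℕ → Ω → ℝ) (ω : Ω) : ℝ := ∑' n, Pprod A n ω * B n ω

/-- `(A_n, B_n)_{n ≥ 1}` is a sequence of iid `ℝ²`-valued random vectors under `P`. -/
def IsIIDSeq {Ω : Type*} [MeasurableSpace Ω] (P : Measure Ω) (A B : ℕ → Ω → ℝ) : Prop :=
  (∀ n, Measurable (A n)) ∧ (∀ n, Measurable (B n)) ∧
    iIndepFun (fun n ω => (A n ω, B n ω)) P ∧
    ∀ n, P.map (fun ω => (A n ω, B n ω)) = P.map (fun ω => (A 0 ω, B 0 ω))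

/-- The function `J` associated with the random variable `X = - log |A|`: `J(0) = 1`, and
for `x > 0`, `J(x) = x / E(X⁺ ∧ x)` if `P(X > 0) > 0`, and `J(x) = x` otherwise. -/
def J {Ω : Type*} [MeasurableSpace Ω] (P : Measure Ω) (A : Ω → ℝ) (x : ℝ) : ℝ :=
  if x = 0 then 1
  else if 0 < P {ω | 0 < - Real.log |A ω|} then
    x / ∫ ω, min (max (- Real.log |A ω|) 0) x ∂ P
  else x

/-- `|f n| → ∞` in `μ`-probability. -/
def TendstoInfInMeasure {Ω : Type*} [MeasurableSpace Ω] (μ : Measure Ω) (f : ℕ → Ω → ℝ) : Prop :=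
  ∀ x : ℝ, 0 < x → Tendsto (fun n => μ {ω | |f n ω| ≤ x}) atTop (nhds 0)

end Perpetuities

namespace Perpetuities


lemma key_grincevicius (μ : MeasureTheory.Measure (ℝ × ℝ)) [IsProbabilityMeasure μ]
    (g : ℝ → ℝ) (hg : Measurable g)
    (h : ∀ᵐ z ∂ μ.prod μ, z.1.1 * z.2.2 + z.1.2 = g (z.1.1 * z.2.1)) :
    ∃ c : ℝ, (∀ᵐ x ∂ μ, x.1 * c + x.2 = c) ∨ (∀ᵐ x ∂ μ, x.1 = 1 ∧ x.2 = c) := by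
  have hmeas : MeasurableSet {z : (ℝ × ℝ) × ℝ × ℝ | z.1.1 * z.2.2 + z.1.2 = g (z.1.1 * z.2.1)} := by
    apply measurableSet_eq_fun <;> fun_prop
  have hswap : ∀ᵐ z ∂ μ.prod μ, z.2.1 * z.1.2 + z.2.2 = g (z.2.1 * z.1.1) := by
    have h2 : ∀ᵐ z ∂ (μ.prod μ).map Prod.swap,
        z.1.1 * z.2.2 + z.1.2 = g (z.1.1 * z.2.1) := by
      rwa [Measure.prod_swap]
    have := (ae_map_iff measurable_swap.aemeasurable hmeas).mp h2
    filter_upwards [this] with z hz using hz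
  have hdet : ∀ᵐ z ∂ μ.prod μ, z.2.2 * (z.1.1 - 1) = z.1.2 * (z.2.1 - 1) := by
    filter_upwards [h, hswap] with z h1 h2
    rw [mul_comm z.2.1 z.1.1] at h2
    nlinarith [h1, h2]
  have hdd : ∀ᵐ x ∂ μ, ∀ᵐ y ∂ μ, y.2 * (x.1 - 1) = x.2 * (y.1 - 1) :=
    Measure.ae_ae_of_ae_prod hdet
  by_cases hA : ∀ᵐ x ∂ μ, x.1 = 1
  · have h1 : ∀ᵐ z ∂ μ.prod μ, z.1.1 = 1 := by
      have heq : (μ.prod μ).map Prod.fst = μ := by simp [Measure.map_fst_prod]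
      have hA' := hA; rw [← heq] at hA'
      exact (ae_map_iff measurable_fst.aemeasurable
        (by apply measurableSet_eq_fun <;> fun_prop : MeasurableSet {x : ℝ × ℝ | x.1 = 1})).mp hA'
    have h2 : ∀ᵐ z ∂ μ.prod μ, z.2.1 = 1 := by
      have heq : (μ.prod μ).map Prod.snd = μ := by simp [Measure.map_snd_prod]
      have hA' := hA; rw [← heq] at hA'
      exact (ae_map_iff measurable_snd.aemeasurable
        (by apply measurableSet_eq_fun <;> fun_prop : MeasurableSet {x : ℝ × ℝ | x.1 = 1})).mp hA'
    have hsum : ∀ᵐ z ∂ μ.prod μ, z.2.2 + z.1.2 = g 1 := by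
      filter_upwards [h, h1, h2] with z hz ha hb
      rw [ha, hb] at hz; simpa using hz
    obtain ⟨x₀, hx₀⟩ := (Measure.ae_ae_of_ae_prod hsum).exists
    refine ⟨g 1 - x₀.2, Or.inr ?_⟩
    filter_upwards [hA, hx₀] with y hy1 hy2
    exact ⟨hy1, by linarith⟩
  · have hfreq : ∃ᵐ x ∂ μ, x.1 ≠ 1 := by
      rwa [Filter.not_eventually] at hA
    obtain ⟨x₀, hQ, hne⟩ := (hdd.and_frequently hfreq).exists
    set c : ℝ := x₀.2 / (x₀.1 - 1) with hc
    have hne' : x₀.1 - 1 ≠ 0 := sub_ne_zero.mpr hne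
    refine ⟨-c, Or.inl ?_⟩
    filter_upwards [hQ] with y hy
    have : y.2 = c * (y.1 - 1) := by
      rw [hc, div_mul_eq_mul_div, eq_div_iff hne']
      linarith [hy]
    nlinarith [this]

/-- **Lemma 4.2** (Grincevičius). Let `(A_n, B_n)_{n ≥ 1}` be a sequence of iid
`ℝ²`-valued random vectors. Then the following are equivalent:
(a) `A_1 B_2 + B_1 = g(A_1 A_2)` a.s. for some measurable function `g : ℝ → ℝ`;
(b) for some `c ∈ ℝ`, either `A_1 c + B_1 = c` a.s., or `(A_1, B_1) = (1, c)` a.s. -/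
theorem grincevicius
    {Ω : Type*} [MeasurableSpace Ω] (P : Measure Ω) [IsProbabilityMeasure P]
    (A B : ℕ → Ω → ℝ) (hiid : IsIIDSeq P A B) :
    (∃ g : ℝ → ℝ, Measurable g ∧
        ∀ᵐ ω ∂ P, A 0 ω * B 1 ω + B 0 ω = g (A 0 ω * A 1 ω)) ↔
      (∃ c : ℝ, (∀ᵐ ω ∂ P, A 0 ω * c + B 0 ω = c) ∨
        (∀ᵐ ω ∂ P, A 0 ω = 1 ∧ B 0 ω = c)) := by
  obtain ⟨hA, hB, hindep, hident⟩ := hiid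
  set X : ℕ → Ω → ℝ × ℝ := fun n ω => (A n ω, B n ω) with hX
  have hXm : ∀ n, Measurable (X n) := fun n => (hA n).prodMk (hB n)
  set μ : Measure (ℝ × ℝ) := P.map (X 0) with hμ
  have : IsProbabilityMeasure μ := Measure.isProbabilityMeasure_map (hXm 0).aemeasurable
  have hjoint : P.map (fun ω => (X 0 ω, X 1 ω)) = μ.prod μ := by
    have h01 : IndepFun (X 0) (X 1) P := hindep.indepFun (by norm_num)
    rw [(indepFun_iff_map_prod_eq_prod_map_map (hXm 0).aemeasurable
      (hXm 1).aemeasurable).mp h01, hμ, hident 1]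
  have hX1law : P.map (X 1) = μ := hident 1
  constructor
  · rintro ⟨g, hg, hae⟩
    have hmeas : MeasurableSet {z : (ℝ × ℝ) × ℝ × ℝ |
        z.1.1 * z.2.2 + z.1.2 = g (z.1.1 * z.2.1)} := by
      apply measurableSet_eq_fun <;> fun_prop
    have hprod : ∀ᵐ z ∂ μ.prod μ, z.1.1 * z.2.2 + z.1.2 = g (z.1.1 * z.2.1) := by
      rw [← hjoint]
      rw [ae_map_iff ((hXm 0).prodMk (hXm 1)).aemeasurable hmeas]
      exact hae
    obtain ⟨c, hc⟩ := key_grincevicius μ g hg hprod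
    refine ⟨c, ?_⟩
    rcases hc with hc | hc
    · left
      have hm : MeasurableSet {x : ℝ × ℝ | x.1 * c + x.2 = c} := by
        apply measurableSet_eq_fun <;> fun_prop
      exact (ae_map_iff (hXm 0).aemeasurable hm).mp (hμ ▸ hc)
    · right
      have hm : MeasurableSet {x : ℝ × ℝ | x.1 = 1 ∧ x.2 = c} := by
        apply MeasurableSet.inter <;> (apply measurableSet_eq_fun <;> fun_prop)
      exact (ae_map_iff (hXm 0).aemeasurable hm).mp (hμ ▸ hc)
  · rintro ⟨c, hc | hc⟩
    · have hm : MeasurableSet {x : ℝ × ℝ | x.1 * c + x.2 = c} := by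
        apply measurableSet_eq_fun <;> fun_prop
      have h0 : ∀ᵐ x ∂ μ, x.1 * c + x.2 = c :=
        (ae_map_iff (hXm 0).aemeasurable hm).mpr hc
      have h1 : ∀ᵐ ω ∂ P, A 1 ω * c + B 1 ω = c :=
        (ae_map_iff (hXm 1).aemeasurable hm).mp (hX1law ▸ h0)
      refine ⟨fun x => c - c * x, (measurable_const.sub (measurable_const.mul measurable_id)), ?_⟩
      filter_upwards [hc, h1] with ω e0 e1
      have hb1 : B 1 ω = c - A 1 ω * c := by linarith
      have hb0 : B 0 ω = c - A 0 ω * c := by linarith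
      rw [hb0, hb1]; ring
    · have hm : MeasurableSet {x : ℝ × ℝ | x.1 = 1 ∧ x.2 = c} := by
        apply MeasurableSet.inter <;> (apply measurableSet_eq_fun <;> fun_prop)
      have h0 : ∀ᵐ x ∂ μ, x.1 = 1 ∧ x.2 = c :=
        (ae_map_iff (hXm 0).aemeasurable hm).mpr hc
      have h1 : ∀ᵐ ω ∂ P, A 1 ω = 1 ∧ B 1 ω = c :=
        (ae_map_iff (hXm 1).aemeasurable hm).mp (hX1law ▸ h0)
      refine ⟨fun _ => 2 * c, measurable_const, ?_⟩
      filter_upwards [hc, h1] with ω e0 e1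
      rw [e0.1, e0.2, e1.2]; ring


end Perpetuities
end
end

section
/- In the Markov-modulated setting, if P_i(A_1^i=1)=1 for some i∈S, then P_j(A_1^j=1)=1 for all j∈S. -/
open MeasureTheory ProbabilityTheory Filter
open scoped ENNReal NNReal Topology

noncomputable section

namespace Perpetuities

/-- Weak convergence of a sequence of (probability) measures on `ℝ`. -/
def WeakLim (μ : ℕ → Measure ℝ) (ν : Measure ℝ) : Prop :=
  ∀ f : BoundedContinuousFunction ℝ ℝ,
    Tendsto (fun n => ∫ x, f x ∂ μ n) atTop (nhds (∫ x, f x ∂ ν))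

/-- `d` is the lattice span (period) of the distribution of the `ℕ`-valued random
variable `T` under `μ`, i.e. `d` is the greatest common divisor of the support. -/
def LatticeSpan {Ω : Type*} [MeasurableSpace Ω] (μ : Measure Ω) (T : Ω → ℕ) (d : ℕ) : Prop :=
  (∀ n, 0 < μ {ω | T ω = n} → d ∣ n) ∧ ∀ e : ℕ, (∀ n, 0 < μ {ω | T ω = n} → e ∣ n) → e ∣ d

/-- The Markov-modulated setting: an ergodic (irreducible, aperiodic, positive recurrent)
Markov chain `M` on a countable state space `S` with transition matrix `p` and stationary
distribution `π`, modulating a sequence `(A_n, B_n)_{n ≥ 1}` of real random pairs (indexed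
here so that `A n`, `B n` are the paper's `A_{n+1}`, `B_{n+1}`): conditionally on the whole
path of the chain, the pairs are independent and the conditional law of `(A_{n+1}, B_{n+1})`
given the path depends only on `(M_n, M_{n+1})`, via the stochastic kernel `K`.
`P i` is the underlying probability measure conditioned on `M 0 = i`. -/
structure MMSetting (S : Type*) (Ω : Type*) [MeasurableSpace S] [MeasurableSingletonClass S]
    [Countable S] [MeasurableSpace Ω] where
  P : S → Measure Ω
  prob : ∀ i, IsProbabilityMeasure (P i)
  π : S → ℝ≥0∞
  πsum : ∑' i, π i = 1
  πpos : ∀ i, 0 < π i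
  p : S → S → ℝ≥0∞
  psum : ∀ i, ∑' j, p i j = 1
  stationary : ∀ j, ∑' i, π i * p i j = π j
  K : S → S → Measure (ℝ × ℝ)
  Kprob : ∀ i j, IsProbabilityMeasure (K i j)
  M : ℕ → Ω → S
  A : ℕ → Ω → ℝ
  B : ℕ → Ω → ℝ
  measM : ∀ n, Measurable (M n)
  measA : ∀ n, Measurable (A n)
  measB : ∀ n, Measurable (B n)
  start : ∀ i, P i {ω | M 0 ω = i} = 1
  chain : ∀ (i : S) (n : ℕ) (path : ℕ → S), path 0 = i →
    P i (⋂ k ∈ Finset.range (n + 1), {ω | M k ω = path k})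
      = ∏ k ∈ Finset.range n, p (path k) (path (k + 1))
  modulated : ∀ (i : S) (n : ℕ) (path : ℕ → S) (E : ℕ → Set (ℝ × ℝ)), path 0 = i →
    (∀ k, MeasurableSet (E k)) →
    P i ((⋂ k ∈ Finset.range (n + 1), {ω | M k ω = path k}) ∩
        ⋂ k ∈ Finset.range n, {ω | (A k ω, B k ω) ∈ E k})
      = P i (⋂ k ∈ Finset.range (n + 1), {ω | M k ω = path k})
        * ∏ k ∈ Finset.range n, K (path k) (path (k + 1)) (E k)
  irreducible : ∀ i j, ∃ n, 0 < P i {ω | M n ω = j}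
  recurrent : ∀ i, P i {ω | ∃ n, 0 < n ∧ M n ω = i} = 1
  posRecurrent : ∀ i, ∫⁻ ω, ((sInf {n | 0 < n ∧ M n ω = i} : ℕ) : ℝ≥0∞) ∂ P i < ⊤
  aperiodic : ∀ (i : S) (d : ℕ), (∀ n, 0 < n → 0 < P i {ω | M n ω = i} → d ∣ n) → d = 1

namespace MMSetting

variable {S : Type*} [MeasurableSpace S] [MeasurableSingletonClass S] [Countable S]
variable {Ω : Type*} [MeasurableSpace Ω]
variable (X : MMSetting S Ω)

/-- `Pπ = ∑ i, π i • P i`, the stationary (unconditional) probability measure. -/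
def Pπ : Measure Ω := Measure.sum fun i => X.π i • X.P i

/-- `Pprod n = Π_n = A_1 ⋯ A_n`, with `Π_0 = 1`. -/
def Pprod (n : ℕ) (ω : Ω) : ℝ := ∏ k ∈ Finset.range n, X.A k ω

/-- `Ssum n = ∑_{k=1}^n Π_{k-1} B_k`, the value `Ψ_1 ∘ ⋯ ∘ Ψ_n (0)` of the backward
iteration started at `0`. -/
def Ssum (n : ℕ) (ω : Ω) : ℝ := ∑ k ∈ Finset.range n, X.Pprod k ω * X.B k ω

/-- `Zb Z n = Ψ_1 ∘ ⋯ ∘ Ψ_n (Z) = Π_n Z + ∑_{k=1}^n Π_{k-1} B_k`, the backward iteration. -/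
def Zb (Z : Ω → ℝ) (n : ℕ) (ω : Ω) : ℝ := X.Pprod n ω * Z ω + X.Ssum n ω

/-- `Zf Z n = Ψ_n ∘ ⋯ ∘ Ψ_1 (Z)`, the forward iteration. -/
def Zf (Z : Ω → ℝ) : ℕ → Ω → ℝ
  | 0 => Z
  | n + 1 => fun ω => X.A n ω * Zf Z n ω + X.B n ω

/-- The perpetuity `Z_∞ = ∑_{n ≥ 1} Π_{n-1} B_n`. -/
def Zinf (ω : Ω) : ℝ := ∑' n, X.Pprod n ω * X.B n ω

/-- `tau i n = τ_n(i)`, the `n`-th return time of the driving chain to the state `i`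
(`τ_0(i) = 0`). -/
def tau (i : S) : ℕ → Ω → ℕ
  | 0 => fun _ => 0
  | n + 1 => fun ω => sInf {k | tau i n ω < k ∧ X.M k ω = i}

/-- `A_1^i = Π_{τ(i)}`. -/
def Ai (i : S) (ω : Ω) : ℝ := X.Pprod (X.tau i 1 ω) ω

/-- `B_1^i = ∑_{k=1}^{τ(i)} Π_{k-1} B_k`. -/
def Bi (i : S) (ω : Ω) : ℝ := X.Ssum (X.tau i 1 ω) ω

/-- `W^i = max_{1 ≤ k ≤ τ(i)} |Π_{k-1} B_k|`. -/
def Wi (i : S) (ω : Ω) : ℝ :=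
  (((Finset.range (X.tau i 1 ω)).sup fun k => ‖X.Pprod k ω * X.B k ω‖₊ : ℝ≥0) : ℝ)

/-- `S_{τ(i)} = - log |Π_{τ(i)}|`. -/
def Stau (i : S) (ω : Ω) : ℝ := - Real.log |X.Ai i ω|

/-- The function `J_i`: `J_i(0) = 1`, and for `x > 0`, `J_i(x) = x / E_i (S_{τ(i)}⁺ ∧ x)`
if `P_i(S_{τ(i)} ≤ 0) < 1`, and `J_i(x) = x` otherwise. -/
def Ji (i : S) (x : ℝ) : ℝ :=
  if x = 0 then 1
  else if X.P i {ω | X.Stau i ω ≤ 0} < 1 then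
    x / ∫ ω, min (max (X.Stau i ω) 0) x ∂ X.P i
  else x

/-- `τ̂(i) = inf {k ≥ 1 : M_k = i, Π_k = 1}`. -/
def hatτ (i : S) (ω : Ω) : ℕ := sInf {k | 0 < k ∧ X.M k ω = i ∧ X.Pprod k ω = 1}

/-- `Z` is an admissible initial value: it is (conditionally on `M 0`, i.e. under each `P i`)
independent of the modulated sequence `(M_n, A_n, B_n)_{n ≥ 1}`. -/
def Admissible (Z : Ω → ℝ) : Prop :=
  Measurable Z ∧
    ∀ i : S, IndepFun Z (fun ω => fun n : ℕ => (X.M (n + 1) ω, X.A n ω, X.B n ω)) (X.P i)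

/-- The degeneracy condition: `A_1 c_{M_1} + B_1 = c_{M_0}` a.s. for the family `c`. -/
def DegenD (c : S → ℝ) : Prop :=
  ∀ᵐ ω ∂ X.Pπ, X.A 0 ω * c (X.M 1 ω) + X.B 0 ω = c (X.M 0 ω)

/-- The dual degeneracy condition: `A_1 c_{M_0} + B_1 = c_{M_1}` a.s. for the family `c`. -/
def DegenDdual (c : S → ℝ) : Prop :=
  ∀ᵐ ω ∂ X.Pπ, X.A 0 ω * c (X.M 0 ω) + X.B 0 ω = c (X.M 1 ω)

end MMSetting

end Perpetuities

namespace Perpetuities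

open MMSetting

section
open MeasureTheory Filter
open scoped ENNReal

lemma dirac_unique {μ : Measure ℝ} [IsProbabilityMeasure μ] {a b : ℝ}
    (ha : μ {a} = 1) (hb : μ {b} = 1) : a = b := by
  by_contra hne
  have hd : Disjoint ({a} : Set ℝ) {b} := by simp [Set.disjoint_singleton, hne]
  have hm2 := measure_union (μ := μ) hd (measurableSet_singleton b)
  have hle : μ ({a} ∪ {b}) ≤ 1 := prob_le_one
  rw [hm2, ha, hb] at hle
  norm_num at hle

lemma ae_eq_one_of_lintegral {α : Type*} [MeasurableSpace α] (ν : Measure α)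
    [IsProbabilityMeasure ν] {h : α → ℝ≥0∞} (hm : Measurable h) (hle : ∀ y, h y ≤ 1)
    (hint : ∫⁻ y, h y ∂ν = 1) : ∀ᵐ y ∂ν, h y = 1 := by
  have hsub : ∫⁻ y, (1 - h y) ∂ν = 0 := by
    rw [lintegral_sub hm (by simp [hint]) (Filter.Eventually.of_forall hle)]
    simp [hint]
  have := (lintegral_eq_zero_iff (by fun_prop)).1 hsub
  filter_upwards [this] with y hy
  have : 1 - h y = 0 := hy
  have h1 := hle y
  have : (1:ℝ≥0∞) ≤ h y := by
    have := tsub_eq_zero_iff_le.mp this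
    exact this
  exact le_antisymm h1 this


lemma pi_prod_eq_const : ∀ {n : ℕ} (κ : Fin n → Measure ℝ), (∀ k, IsProbabilityMeasure (κ k)) →
    ∀ {r : ℝ}, r ≠ 0 → Measure.pi κ {a | ∏ k, a k = r} = 1 →
    ∃ c : Fin n → ℝ, (∀ k, κ k {c k} = 1) ∧ ∏ k, c k = r := by
  intro n
  induction n with
  | zero =>
    intro κ hκ r hr h
    refine ⟨Fin.elim0, fun k => k.elim0, ?_⟩
    have : {a : Fin 0 → ℝ | ∏ k, a k = r}.Nonempty := by
      by_contra hne
      rw [Set.not_nonempty_iff_eq_empty] at hne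
      rw [hne] at h; simp at h
    obtain ⟨a, ha⟩ := this
    simpa using ha
  | succ n IH =>
    intro κ hκ r hr h
    haveI := hκ
    haveI : ∀ k : Fin n, IsProbabilityMeasure ((fun j => κ ((0:Fin (n+1)).succAbove j)) k) :=
      fun k => hκ _
    set ν := Measure.pi (fun j => κ ((0:Fin (n+1)).succAbove j)) with hν
    haveI : IsProbabilityMeasure ν := by infer_instance
    set g : (Fin n → ℝ) → ℝ := fun y => ∏ j, y j with hg
    have hgmeas : Measurable g := by fun_prop
    set E : Set (ℝ × (Fin n → ℝ)) := {p | p.1 * g p.2 = r} with hE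
    have hEmeas : MeasurableSet E := by
      have : Measurable (fun p : ℝ × (Fin n → ℝ) => p.1 * g p.2) := by fun_prop
      exact this (measurableSet_singleton r)
    have hpre : (⇑(MeasurableEquiv.piFinSuccAbove (fun _ => ℝ) 0)) ⁻¹' E
        = {a : Fin (n+1) → ℝ | ∏ k, a k = r} := by
      ext a
      simp only [Set.mem_preimage, MeasurableEquiv.piFinSuccAbove, hE, Set.mem_setOf_eq, hg]
      rw [Fin.prod_univ_succAbove (fun k => a k) 0]
      rfl
    have hmp := measurePreserving_piFinSuccAbove κ 0
    have hprod : ((κ 0).prod ν) E = 1 := by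
      rw [← hmp.map_eq, Measure.map_apply hmp.measurable hEmeas, hpre]
      exact h
    have hslice : ∀ᵐ y ∂ν, κ 0 ((fun x => (x, y)) ⁻¹' E) = 1 := by
      apply ae_eq_one_of_lintegral ν (measurable_measure_prodMk_right hEmeas)
        (fun y => prob_le_one)
      rw [← Measure.prod_apply_symm hEmeas, hprod]
    have hslice2 : ∀ᵐ y ∂ν, g y ≠ 0 ∧ κ 0 {r / g y} = 1 := by
      filter_upwards [hslice] with y hy
      by_cases hgy : g y = 0
      · exfalso
        have : ((fun x => (x, y)) ⁻¹' E) = ∅ := by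
          ext x; simp only [hE, Set.mem_preimage, Set.mem_setOf_eq, hgy, mul_zero, Set.mem_empty_iff_false, iff_false]
          exact fun h' => hr h'.symm
        rw [this] at hy; simp at hy
      · refine ⟨hgy, ?_⟩
        have : ((fun x => (x, y)) ⁻¹' E) = {r / g y} := by
          ext x
          simp only [hE, Set.mem_preimage, Set.mem_setOf_eq, Set.mem_singleton_iff]
          rw [eq_div_iff hgy]
        rwa [this] at hy
    haveI : (ae ν).NeBot := ae_neBot.2 (IsProbabilityMeasure.ne_zero ν)
    obtain ⟨y₀, hy₀⟩ := hslice2.exists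
    set c₀ := r / g y₀ with hc₀
    have hc₀ne : c₀ ≠ 0 := div_ne_zero hr hy₀.1
    have hgconst : ∀ᵐ y ∂ν, g y = r / c₀ := by
      filter_upwards [hslice2] with y hy
      have h1 : r / g y = c₀ := dirac_unique hy.2 hy₀.2
      have h2 : r = c₀ * g y := (div_eq_iff hy.1).mp h1
      rw [eq_div_iff hc₀ne, h2]; ring
    have hνset : ν {y | g y = r / c₀} = 1 := by
      have hms : MeasurableSet {y | g y = r / c₀} := hgmeas (measurableSet_singleton _)
      rw [← prob_compl_eq_zero_iff hms] at *
      · rw [ae_iff] at hgconst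
        convert hgconst using 2
        rfl
    obtain ⟨c', hc', hc'prod⟩ := IH _ (fun k => hκ _) (div_ne_zero hr hc₀ne) hνset
    refine ⟨Fin.cons c₀ c', ?_, ?_⟩
    · intro k
      refine Fin.cases ?_ ?_ k
      · simpa using hy₀.2
      · intro j
        have := hc' j
        simpa using this
    · rw [Fin.prod_univ_succ]
      simp only [Fin.cons_zero, Fin.cons_succ]
      have : ∏ j : Fin n, c' j = r / c₀ := hc'prod
      rw [this]
      field_simp

lemma pi_prod_of_dirac {n : ℕ} (κ : Fin n → Measure ℝ) [∀ k, IsProbabilityMeasure (κ k)]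
    (c : Fin n → ℝ) (hc : ∀ k, κ k {c k} = 1) :
    Measure.pi κ {a | ∏ k, a k = ∏ k, c k} = 1 := by
  haveI : IsProbabilityMeasure (Measure.pi κ) := by infer_instance
  have hsub : {a : Fin n → ℝ | ∏ k, a k = ∏ k, c k}ᶜ ⊆ ⋃ k, {a : Fin n → ℝ | a k ≠ c k} := by
    intro a ha
    by_contra hcon
    simp only [Set.mem_iUnion, not_exists, Set.mem_setOf_eq, not_not] at hcon
    exact ha (by simp only [Set.mem_setOf_eq]; exact Finset.prod_congr rfl (fun k _ => hcon k))
  have hnull : ∀ k, Measure.pi κ {a : Fin n → ℝ | a k ≠ c k} = 0 := by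
    intro k
    have : {a : Fin n → ℝ | a k ≠ c k} = Set.univ.pi (fun j => if j = k then ({c k}ᶜ : Set ℝ) else Set.univ) := by
      ext a
      simp only [Set.mem_setOf_eq, Set.mem_pi, Set.mem_univ, true_implies]
      constructor
      · intro h j; by_cases hj : j = k <;> simp [hj]; subst hj; exact h
      · intro h; have := h k; simpa using this
    rw [this, Measure.pi_pi]
    apply Finset.prod_eq_zero (Finset.mem_univ k)
    simp only [eq_self_iff_true, if_true]
    rw [measure_compl (measurableSet_singleton _) (measure_ne_top _ _), hc k]
    simp
  have : Measure.pi κ {a : Fin n → ℝ | ∏ k, a k = ∏ k, c k}ᶜ = 0 :=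
    le_antisymm (le_trans (measure_mono hsub) (le_of_eq (by
      refine measure_iUnion_null fun k => hnull k))) zero_le
  have hms : MeasurableSet {a : Fin n → ℝ | ∏ k, a k = ∏ k, c k} := by
    have : Measurable (fun a : Fin n → ℝ => ∏ k, a k) := by fun_prop
    exact this (measurableSet_singleton _)
  rwa [prob_compl_eq_zero_iff hms] at this

end

namespace MMSetting

variable {S : Type*} [MeasurableSpace S] [MeasurableSingletonClass S] [Countable S]
variable {Ω : Type*} [MeasurableSpace Ω]
variable (X : MMSetting S Ω)

/-- The event that the chain follows path `s` up to time `n`. -/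
def pathEvent (n : ℕ) (s : ℕ → S) : Set Ω := ⋂ k ∈ Finset.range (n+1), {ω | X.M k ω = s k}

/-- The law of `A` over edge `(s, t)`. -/
def edgeLaw (s t : S) : Measure ℝ := (X.K s t).map Prod.fst

instance edgeLaw_prob (s t : S) : IsProbabilityMeasure (X.edgeLaw s t) := by
  haveI := X.Kprob s t
  exact Measure.isProbabilityMeasure_map measurable_fst.aemeasurable

lemma pathEvent_measurable (n : ℕ) (s : ℕ → S) : MeasurableSet (X.pathEvent n s) := by
  refine Set.Finite.measurableSet_biInter (Finset.finite_toSet _) (fun k _ => ?_)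
  exact (X.measM k) (measurableSet_singleton (s k))

lemma mem_pathEvent_iff {n : ℕ} {s : ℕ → S} {ω : Ω} :
    ω ∈ X.pathEvent n s ↔ ∀ k ≤ n, X.M k ω = s k := by
  simp [pathEvent, Nat.lt_succ_iff]

lemma law_A (i : S) (n : ℕ) (s : ℕ → S) (h0 : s 0 = i) {T : Set (Fin n → ℝ)}
    (hT : MeasurableSet T) :
    X.P i (X.pathEvent n s ∩ {ω | (fun k : Fin n => X.A k ω) ∈ T})
      = X.P i (X.pathEvent n s)
        * Measure.pi (fun k : Fin n => X.edgeLaw (s k) (s (k+1))) T := by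
  haveI := X.prob i
  set PE := X.pathEvent n s with hPE
  have hPEm : MeasurableSet PE := X.pathEvent_measurable n s
  set κ : Fin n → Measure ℝ := fun k => X.edgeLaw (s k) (s (k+1)) with hκ
  haveI : ∀ k, IsProbabilityMeasure (κ k) := fun k => X.edgeLaw_prob _ _
  set vec : Ω → (Fin n → ℝ) := fun ω (k : Fin n) => X.A k ω with hvec
  have hvecm : Measurable vec := measurable_pi_lambda _ (fun k => X.measA k)
  have key : ∀ F : Fin n → Set ℝ, (∀ k, MeasurableSet (F k)) →
      X.P i (PE ∩ vec ⁻¹' Set.univ.pi F) = X.P i PE * ∏ k, κ k (F k) := by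
    intro F hF
    set E : ℕ → Set (ℝ × ℝ) := fun k =>
      if h : k < n then (F ⟨k, h⟩ ×ˢ (Set.univ : Set ℝ)) else Set.univ with hE
    have hEm : ∀ k, MeasurableSet (E k) := by
      intro k
      by_cases h : k < n
      · simp only [hE, dif_pos h]; exact (hF _).prod MeasurableSet.univ
      · simp only [hE, dif_neg h]; exact MeasurableSet.univ
    have hset : vec ⁻¹' Set.univ.pi F
        = ⋂ k ∈ Finset.range n, {ω | (X.A k ω, X.B k ω) ∈ E k} := by
      ext ω
      simp only [Set.mem_preimage, Set.mem_pi, Set.mem_univ, true_implies, Set.mem_iInter,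
        Finset.mem_range, Set.mem_setOf_eq, hvec]
      constructor
      · intro hω k hk
        simp only [hE, dif_pos hk, Set.mem_prod, Set.mem_univ, and_true]
        exact hω ⟨k, hk⟩
      · intro hω k
        have := hω k k.isLt
        simpa only [hE, dif_pos k.isLt, Set.mem_prod, Set.mem_univ, and_true] using this
    have hKE : ∀ k : Fin n, X.K (s k) (s (k+1)) (E k) = κ k (F k) := by
      intro k
      have h1 : E k = F k ×ˢ Set.univ := by
        simp only [hE, dif_pos k.isLt]
      rw [h1, hκ]
      simp only [edgeLaw]
      rw [Measure.map_apply measurable_fst (hF k)]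
      congr 1
      ext p
      simp
    have hmod := X.modulated i n s E h0 hEm
    rw [hset, hPE]
    unfold pathEvent
    rw [hmod]
    congr 1
    rw [← Fin.prod_univ_eq_prod_range (fun k => X.K (s k) (s (k+1)) (E k)) n]
    exact Finset.prod_congr rfl (fun k _ => hKE k)
  by_cases hz : X.P i PE = 0
  · rw [hz, zero_mul]
    exact le_antisymm (le_trans (measure_mono Set.inter_subset_left) (le_of_eq hz)) zero_le
  · have hfin : X.P i PE ≠ ⊤ := measure_ne_top _ _
    set μ : Measure (Fin n → ℝ) := ((X.P i).restrict PE).map vec with hμ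
    have hμap : ∀ {U : Set (Fin n → ℝ)}, MeasurableSet U → μ U = X.P i (PE ∩ vec ⁻¹' U) := by
      intro U hU
      rw [hμ, Measure.map_apply hvecm hU, Measure.restrict_apply (hvecm hU), Set.inter_comm]
    have hpi : Measure.pi κ = (X.P i PE)⁻¹ • μ := by
      apply Measure.pi_eq
      intro F hF
      rw [Measure.smul_apply, smul_eq_mul, hμap (MeasurableSet.univ_pi hF), key F hF,
        ← mul_assoc, ENNReal.inv_mul_cancel hz hfin, one_mul]
    have : Measure.pi κ T = (X.P i PE)⁻¹ * μ T := by rw [hpi]; rfl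
    rw [this, hμap hT, ← mul_assoc, ENNReal.mul_inv_cancel hz hfin, one_mul]
    rfl
end MMSetting

namespace MMSetting
section
open MeasureTheory Filter
open scoped ENNReal
variable {S : Type*} [MeasurableSpace S] [MeasurableSingletonClass S] [Countable S]
variable {Ω : Type*} [MeasurableSpace Ω]
variable (X : MMSetting S Ω)

/-- First-return cycle at `i` of length `n`. -/
def FRC (i : S) (n : ℕ) (s : ℕ → S) : Prop :=
  s 0 = i ∧ s n = i ∧ (∀ k, 0 < k → k < n → s k ≠ i) ∧ 0 < n

lemma tau_zero (i : S) (ω : Ω) : X.tau i 0 ω = 0 := rfl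

lemma tau_one (i : S) (ω : Ω) : X.tau i 1 ω = sInf {k | 0 < k ∧ X.M k ω = i} := by
  show sInf {k | X.tau i 0 ω < k ∧ X.M k ω = i} = _
  simp [tau_zero]

lemma tau_on_path {i : S} {n : ℕ} {s : ℕ → S} (hf : FRC i n s) {ω : Ω}
    (hω : ω ∈ X.pathEvent n s) : X.tau i 1 ω = n := by
  obtain ⟨h0, hn, hmid, hpos⟩ := hf
  have hmem := (X.mem_pathEvent_iff).1 hω
  rw [tau_one]
  have hnmem : n ∈ {k | 0 < k ∧ X.M k ω = i} := ⟨hpos, by rw [hmem n le_rfl]; exact hn⟩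
  have hne : {k | 0 < k ∧ X.M k ω = i}.Nonempty := ⟨n, hnmem⟩
  have hsmem := Nat.sInf_mem hne
  have hle : sInf {k | 0 < k ∧ X.M k ω = i} ≤ n := Nat.sInf_le hnmem
  rcases lt_or_eq_of_le hle with hlt | heq
  · exfalso
    obtain ⟨hpos', heq'⟩ := hsmem
    have := hmem _ (le_of_lt hlt)
    rw [this] at heq'
    exact hmid _ hpos' hlt heq'
  · exact heq

lemma Ai_on_path {i : S} {n : ℕ} {s : ℕ → S} (hf : FRC i n s) {ω : Ω}
    (hω : ω ∈ X.pathEvent n s) : X.Ai i ω = ∏ k ∈ Finset.range n, X.A k ω := by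
  rw [Ai, X.tau_on_path hf hω, Pprod]

lemma cycle_prod_ae_one {i : S} (h : X.P i {ω | X.Ai i ω = 1} = 1) {n : ℕ} {s : ℕ → S}
    (hf : FRC i n s) :
    X.P i (X.pathEvent n s ∩ {ω | ∏ k ∈ Finset.range n, X.A k ω ≠ 1}) = 0 := by
  haveI := X.prob i
  set E := X.pathEvent n s ∩ {ω | ∏ k ∈ Finset.range n, X.A k ω ≠ 1} with hE
  have hEm : MeasurableSet E := by
    refine (X.pathEvent_measurable n s).inter ?_
    have : Measurable fun ω => ∏ k ∈ Finset.range n, X.A k ω :=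
      Finset.measurable_prod _ (fun k _ => X.measA k)
    exact (this (measurableSet_singleton 1)).compl
  have hsub : {ω | X.Ai i ω = 1} ⊆ Eᶜ := by
    intro ω hω hmem
    obtain ⟨hpe, hprod⟩ := hmem
    exact hprod (by rw [← X.Ai_on_path hf hpe]; exact hω)
  have h1 : (1 : ℝ≥0∞) ≤ X.P i Eᶜ := by
    rw [← h]; exact measure_mono hsub
  have h2 : X.P i E = 1 - X.P i Eᶜ := by
    have := prob_compl_eq_one_sub (μ := X.P i) hEm.compl
    rwa [compl_compl] at this
  rw [h2]
  have : (1:ℝ≥0∞) - X.P i Eᶜ ≤ 1 - 1 := tsub_le_tsub_left h1 1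
  simpa using this

lemma dirac_of_cycle {i : S} (h : X.P i {ω | X.Ai i ω = 1} = 1) {n : ℕ} {s : ℕ → S}
    (hf : FRC i n s) (hpos : ∀ k < n, X.p (s k) (s (k+1)) ≠ 0) :
    ∃ c : Fin n → ℝ, (∀ k : Fin n, X.edgeLaw (s k) (s (k+1)) {c k} = 1) ∧ ∏ k, c k = 1 := by
  haveI := X.prob i
  have hPE : X.P i (X.pathEvent n s) = ∏ k ∈ Finset.range n, X.p (s k) (s (k+1)) :=
    X.chain i n s hf.1
  have hPEne : X.P i (X.pathEvent n s) ≠ 0 := by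
    rw [hPE]
    rw [Finset.prod_ne_zero_iff]
    exact fun k hk => hpos k (Finset.mem_range.1 hk)
  set κ : Fin n → Measure ℝ := fun k => X.edgeLaw (s k) (s (k+1)) with hκ
  haveI : ∀ k, IsProbabilityMeasure (κ k) := fun k => X.edgeLaw_prob _ _
  have hT0 : MeasurableSet {a : Fin n → ℝ | ∏ k, a k = 1} := by
    have : Measurable fun a : Fin n → ℝ => ∏ k, a k := by fun_prop
    exact this (measurableSet_singleton 1)
  have hT : MeasurableSet ({a : Fin n → ℝ | ∏ k, a k = 1}ᶜ) := hT0.compl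
  have hlaw := X.law_A i n s hf.1 hT
  have hset : {ω | (fun k : Fin n => X.A k ω) ∈ ({a : Fin n → ℝ | ∏ k, a k = 1}ᶜ)}
      = {ω | ∏ k ∈ Finset.range n, X.A k ω ≠ 1} := by
    ext ω
    simp only [Set.mem_setOf_eq, Set.mem_compl_iff, ne_eq]
    rw [Fin.prod_univ_eq_prod_range (fun k => X.A k ω) n]
  rw [hset, X.cycle_prod_ae_one h hf] at hlaw
  have hpi0 : Measure.pi κ ({a : Fin n → ℝ | ∏ k, a k = 1}ᶜ) = 0 := by
    rcases mul_eq_zero.1 hlaw.symm with h' | h'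
    · exact absurd h' hPEne
    · exact h'
  haveI : IsProbabilityMeasure (Measure.pi κ) := by infer_instance
  have hpi1 : Measure.pi κ {a : Fin n → ℝ | ∏ k, a k = 1} = 1 := by
    rwa [prob_compl_eq_zero_iff hT0] at hpi0
  exact pi_prod_eq_const κ (fun k => X.edgeLaw_prob _ _) one_ne_zero hpi1

end
end MMSetting

namespace MMSetting
section
open MeasureTheory Filter
open scoped ENNReal
variable {S : Type*} [MeasurableSpace S] [MeasurableSingletonClass S] [Countable S]
variable {Ω : Type*} [MeasurableSpace Ω]
variable (X : MMSetting S Ω)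

lemma dirac_of_path {i : S} (h : X.P i {ω | X.Ai i ω = 1} = 1) :
    ∀ n : ℕ, ∀ s : ℕ → S, s 0 = i → s n = i → (∀ k < n, X.p (s k) (s (k+1)) ≠ 0) →
    ∃ c : ℕ → ℝ, (∀ k < n, X.edgeLaw (s k) (s (k+1)) {c k} = 1) ∧
      ∏ k ∈ Finset.range n, c k = 1 := by
  intro n
  induction n using Nat.strong_induction_on with
  | _ n IH =>
    intro s h0 hn hpos
    rcases Nat.eq_zero_or_pos n with hn0 | hnpos
    · subst hn0
      exact ⟨fun _ => 1, fun k hk => absurd hk (Nat.not_lt_zero k), by simp⟩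
    · have hne : Set.Nonempty {k : ℕ | 0 < k ∧ s k = i} := by
        refine ⟨n, ?_⟩
        exact ⟨hnpos, hn⟩
      set m := sInf {k | 0 < k ∧ s k = i} with hm
      have hmmem : 0 < m ∧ s m = i := Nat.sInf_mem hne
      have hmle : m ≤ n := Nat.sInf_le ⟨hnpos, hn⟩
      have hmpos : 0 < m := hmmem.1
      have hfrc : FRC i m s := by
        refine ⟨h0, hmmem.2, ?_, hmpos⟩
        intro k hk1 hk2 hk3
        exact absurd (Nat.sInf_le (show k ∈ {k : ℕ | 0 < k ∧ s k = i} from ⟨hk1, hk3⟩)) (not_le.2 hk2)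
      obtain ⟨c₁, hc₁, hc₁prod⟩ := X.dirac_of_cycle h hfrc
        (fun k hk => hpos k (lt_of_lt_of_le hk hmle))
      set s' : ℕ → S := fun k => s (m + k) with hs'
      have hs'0 : s' 0 = i := by simpa [hs'] using hmmem.2
      have hs'n : s' (n - m) = i := by
        simp only [hs']
        rwa [Nat.add_sub_cancel' hmle]
      have hs'pos : ∀ k < n - m, X.p (s' k) (s' (k+1)) ≠ 0 := by
        intro k hk
        have : m + k < n := by omega
        have := hpos (m + k) this
        simpa [hs', Nat.add_assoc] using this
      obtain ⟨c₂, hc₂, hc₂prod⟩ := IH (n - m) (by omega) s' hs'0 hs'n hs'pos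
      refine ⟨fun k => if hk : k < m then c₁ ⟨k, hk⟩ else c₂ (k - m), ?_, ?_⟩
      · intro k hk
        by_cases hkm : k < m
        · simpa [dif_pos hkm] using hc₁ ⟨k, hkm⟩
        · push_neg at hkm
          beta_reduce
          rw [dif_neg (not_lt.2 hkm)]
          have h1 : s' (k - m) = s k := by simp [hs', Nat.add_sub_cancel' hkm]
          have h2 : s' (k - m + 1) = s (k + 1) := by
            simp only [hs']
            congr 1
            omega
          have := hc₂ (k - m) (by omega)
          rwa [h1, h2] at this
      · have hsplit : n = m + (n - m) := by omega
        rw [hsplit, Finset.prod_range_add]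
        have e1 : ∏ k ∈ Finset.range m,
            (if hk : k < m then c₁ ⟨k, hk⟩ else c₂ (k - m)) = 1 := by
          rw [← Fin.prod_univ_eq_prod_range, ← hc₁prod]
          apply Finset.prod_congr rfl
          intro k _
          simp [dif_pos k.isLt]
        have e2 : ∏ k ∈ Finset.range (n - m),
            (if hk : m + k < m then c₁ ⟨m + k, hk⟩ else c₂ (m + k - m)) = 1 := by
          have : ∀ k, (if hk : m + k < m then c₁ ⟨m + k, hk⟩ else c₂ (m + k - m)) = c₂ k := by
            intro k
            rw [dif_neg (by omega)]
            congr 1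
            omega
          rw [Finset.prod_congr rfl (fun k _ => this k)]
          exact hc₂prod
        rw [e1, e2, one_mul]

end
end MMSetting

namespace MMSetting
section
open MeasureTheory Filter
open scoped ENNReal
variable {S : Type*} [MeasurableSpace S] [MeasurableSingletonClass S] [Countable S]
variable {Ω : Type*} [MeasurableSpace Ω]
variable (X : MMSetting S Ω)

/-- Extension of a finite path to `ℕ → S`. -/
def extPath (n : ℕ) (v : Fin (n+1) → S) (d : S) : ℕ → S :=
  fun k => if h : k < n + 1 then v ⟨k, h⟩ else d

omit [MeasurableSpace S] [MeasurableSingletonClass S] [Countable S] in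
lemma extPath_eq {n : ℕ} {v : Fin (n+1) → S} {d : S} {k : ℕ} (hk : k ≤ n) :
    extPath n v d k = v ⟨k, Nat.lt_succ_of_le hk⟩ := dif_pos (Nat.lt_succ_of_le hk)

lemma exists_path (i j : S) : ∃ (n : ℕ) (s : ℕ → S), s 0 = i ∧ s n = j ∧
    ∀ k < n, X.p (s k) (s (k+1)) ≠ 0 := by
  haveI := X.prob i
  obtain ⟨n, hn⟩ := X.irreducible i j
  classical
  by_contra hcon
  push_neg at hcon
  have hzero : ∀ v : {v : Fin (n+1) → S // v 0 = i ∧ v (Fin.last n) = j},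
      X.P i (X.pathEvent n (extPath n v.1 j)) = 0 := by
    intro v
    set s := extPath n v.1 j with hs
    have hs0 : s 0 = i := by rw [hs, extPath_eq (Nat.zero_le n)]; exact v.2.1
    have hsn : s n = j := by
      rw [hs, extPath_eq le_rfl]
      exact v.2.2
    by_contra hne
    have hPE : X.P i (X.pathEvent n s) = ∏ k ∈ Finset.range n, X.p (s k) (s (k+1)) :=
      X.chain i n s hs0
    rw [hPE] at hne
    have hne' := Finset.prod_ne_zero_iff.mp hne
    obtain ⟨k, hk, hpk⟩ := hcon n s hs0 hsn
    exact (hne' k (Finset.mem_range.2 hk)) hpk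
  have hM0 : X.P i ({ω | X.M 0 ω = i}ᶜ) = 0 := by
    have hmeas : MeasurableSet {ω | X.M 0 ω = i} := X.measM 0 (measurableSet_singleton i)
    rw [prob_compl_eq_zero_iff hmeas]
    exact X.start i
  have hcover : {ω | X.M n ω = j} ⊆ {ω | X.M 0 ω = i}ᶜ ∪
      ⋃ v : {v : Fin (n+1) → S // v 0 = i ∧ v (Fin.last n) = j},
        X.pathEvent n (extPath n v.1 j) := by
    intro ω hω
    by_cases h0 : X.M 0 ω = i
    · right
      refine Set.mem_iUnion.2 ⟨⟨fun k => X.M (k : ℕ) ω, h0, hω⟩, ?_⟩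
      rw [X.mem_pathEvent_iff]
      intro k hk
      rw [extPath_eq hk]
    · left; exact h0
  have : X.P i {ω | X.M n ω = j} = 0 := by
    refine le_antisymm (le_trans (measure_mono hcover) ?_) zero_le
    refine le_trans (measure_union_le _ _) ?_
    rw [hM0, zero_add]
    refine le_trans (measure_iUnion_le _) ?_
    simp [hzero]
  rw [this] at hn
  exact lt_irrefl 0 hn

end
end MMSetting

namespace MMSetting
section
open MeasureTheory Filter
open scoped ENNReal
variable {S : Type*} [MeasurableSpace S] [MeasurableSingletonClass S] [Countable S]
variable {Ω : Type*} [MeasurableSpace Ω]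
variable (X : MMSetting S Ω)

lemma target_cycle {i : S} (h : X.P i {ω | X.Ai i ω = 1} = 1) (j : S) {n : ℕ} {s : ℕ → S}
    (hf : FRC j n s) (hpos : ∀ k < n, X.p (s k) (s (k+1)) ≠ 0) :
    ∃ c : Fin n → ℝ, (∀ k : Fin n, X.edgeLaw (s k) (s (k+1)) {c k} = 1) ∧ ∏ k, c k = 1 := by
  obtain ⟨m₁, u, hu0, hun, hupos⟩ := X.exists_path i j
  obtain ⟨m₂, w, hw0, hwn, hwpos⟩ := X.exists_path j i
  classical
  have hnpos : 0 < n := hf.2.2.2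
  set γ : ℕ → S := fun k =>
    if k < m₁ then u k else if k - m₁ < n then s (k - m₁) else w (k - m₁ - n) with hγ
  set δ : ℕ → S := fun k => if k < m₁ then u k else w (k - m₁) with hδ
  have hγ1 : ∀ k ≤ m₁, γ k = u k := by
    intro k hk
    rcases lt_or_eq_of_le hk with hlt | heq
    · simp [hγ, hlt]
    · rw [heq]
      simp only [hγ, if_neg (lt_irrefl m₁), Nat.sub_self, if_pos hnpos]
      rw [hf.1, hun]
  have hγ2 : ∀ k ≤ n, γ (m₁ + k) = s k := by
    intro k hk
    rcases lt_or_eq_of_le hk with hlt | heq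
    · simp only [hγ, if_neg (by omega : ¬ m₁ + k < m₁), Nat.add_sub_cancel_left]
      rw [if_pos hlt]
    · rw [heq]
      simp only [hγ, if_neg (by omega : ¬ m₁ + n < m₁), Nat.add_sub_cancel_left,
        if_neg (lt_irrefl n), Nat.sub_self]
      rw [hw0, hf.2.1]
  have hγ3 : ∀ k ≤ m₂, γ (m₁ + n + k) = w k := by
    intro k hk
    simp only [hγ, if_neg (by omega : ¬ m₁ + n + k < m₁)]
    rw [if_neg (by omega), show m₁ + n + k - m₁ - n = k by omega]
  have hδ1 : ∀ k ≤ m₁, δ k = u k := by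
    intro k hk
    rcases lt_or_eq_of_le hk with hlt | heq
    · simp [hδ, hlt]
    · rw [heq]
      simp only [hδ, if_neg (lt_irrefl m₁), Nat.sub_self]
      rw [hw0, hun]
  have hδ2 : ∀ k ≤ m₂, δ (m₁ + k) = w k := by
    intro k hk
    rcases Nat.eq_zero_or_pos k with h0 | h0
    · subst h0
      rw [Nat.add_zero]
      rw [hδ1 m₁ le_rfl, hun, hw0]
    · simp only [hδ, if_neg (by omega : ¬ m₁ + k < m₁), Nat.add_sub_cancel_left]
  have hγ0 : γ 0 = i := by rw [hγ1 0 (Nat.zero_le _), hu0]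
  have hγN : γ (m₁ + n + m₂) = i := by rw [hγ3 m₂ le_rfl, hwn]
  have hδ0 : δ 0 = i := by rw [hδ1 0 (Nat.zero_le _), hu0]
  have hδN : δ (m₁ + m₂) = i := by rw [hδ2 m₂ le_rfl, hwn]
  have hγpos : ∀ k < m₁ + n + m₂, X.p (γ k) (γ (k+1)) ≠ 0 := by
    intro k hk
    rcases lt_or_ge k m₁ with h1 | h1
    · rw [hγ1 k (le_of_lt h1), hγ1 (k+1) h1]
      exact hupos k h1
    · rcases lt_or_ge k (m₁ + n) with h2 | h2
      · have hk' : k - m₁ < n := by omega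
        have e1 : γ k = s (k - m₁) := by
          have := hγ2 (k - m₁) (le_of_lt hk'); rwa [Nat.add_sub_cancel' h1] at this
        have e2 : γ (k+1) = s (k - m₁ + 1) := by
          have := hγ2 (k - m₁ + 1) (by omega)
          rwa [show m₁ + (k - m₁ + 1) = k + 1 by omega] at this
        rw [e1, e2]; exact hpos _ hk'
      · have hk' : k - m₁ - n < m₂ := by omega
        have e1 : γ k = w (k - m₁ - n) := by
          have := hγ3 (k - m₁ - n) (le_of_lt hk')
          rwa [show m₁ + n + (k - m₁ - n) = k by omega] at this
        have e2 : γ (k+1) = w (k - m₁ - n + 1) := by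
          have := hγ3 (k - m₁ - n + 1) (by omega)
          rwa [show m₁ + n + (k - m₁ - n + 1) = k + 1 by omega] at this
        rw [e1, e2]; exact hwpos _ hk'
  have hδpos : ∀ k < m₁ + m₂, X.p (δ k) (δ (k+1)) ≠ 0 := by
    intro k hk
    rcases lt_or_ge k m₁ with h1 | h1
    · rw [hδ1 k (le_of_lt h1), hδ1 (k+1) h1]
      exact hupos k h1
    · have hk' : k - m₁ < m₂ := by omega
      have e1 : δ k = w (k - m₁) := by
        have := hδ2 (k - m₁) (le_of_lt hk'); rwa [Nat.add_sub_cancel' h1] at this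
      have e2 : δ (k+1) = w (k - m₁ + 1) := by
        have := hδ2 (k - m₁ + 1) (by omega)
        rwa [show m₁ + (k - m₁ + 1) = k + 1 by omega] at this
      rw [e1, e2]; exact hwpos _ hk'
  obtain ⟨c, hc, hcprod⟩ := X.dirac_of_path h (m₁ + n + m₂) γ hγ0 hγN hγpos
  obtain ⟨c', hc', hc'prod⟩ := X.dirac_of_path h (m₁ + m₂) δ hδ0 hδN hδpos
  -- matching the Dirac values on shared edges
  have hmatch1 : ∀ k < m₁, c' k = c k := by
    intro k hk
    have h1 := hc' k (by omega)
    have h2 := hc k (by omega)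
    rw [hδ1 k (le_of_lt hk), hδ1 (k+1) hk] at h1
    rw [hγ1 k (le_of_lt hk), hγ1 (k+1) hk] at h2
    exact dirac_unique h1 h2
  have hmatch2 : ∀ t < m₂, c' (m₁ + t) = c (m₁ + n + t) := by
    intro t ht
    have h1 := hc' (m₁ + t) (by omega)
    have h2 := hc (m₁ + n + t) (by omega)
    rw [hδ2 t (le_of_lt ht), show m₁ + t + 1 = m₁ + (t+1) by omega, hδ2 (t+1) ht] at h1
    rw [hγ3 t (le_of_lt ht), show m₁ + n + t + 1 = m₁ + n + (t+1) by omega, hγ3 (t+1) ht] at h2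
    exact dirac_unique h1 h2
  -- product bookkeeping
  have hPc : (∏ k ∈ Finset.range m₁, c k) * ((∏ t ∈ Finset.range n, c (m₁ + t)) *
      (∏ t ∈ Finset.range m₂, c (m₁ + n + t))) = 1 := by
    have h1 := Finset.prod_range_add c m₁ (n + m₂)
    have h2 := Finset.prod_range_add (fun x => c (m₁ + x)) n m₂
    have h3 : ∏ x ∈ Finset.range m₂, c (m₁ + (n + x))
        = ∏ x ∈ Finset.range m₂, c (m₁ + n + x) :=
      Finset.prod_congr rfl (fun x _ => by rw [Nat.add_assoc])
    rw [show m₁ + n + m₂ = m₁ + (n + m₂) by omega] at hcprod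
    rw [h1, h2] at hcprod
    rw [← h3, ← hcprod]
  have hPc' : (∏ k ∈ Finset.range m₁, c k) *
      (∏ t ∈ Finset.range m₂, c (m₁ + n + t)) = 1 := by
    have h1 := Finset.prod_range_add c' m₁ m₂
    rw [hc'prod] at h1
    rw [Finset.prod_congr rfl (fun k hk => hmatch1 k (Finset.mem_range.1 hk)),
      Finset.prod_congr rfl (fun t ht => hmatch2 t (Finset.mem_range.1 ht))] at h1
    exact h1.symm
  set a := ∏ k ∈ Finset.range m₁, c k
  set b := ∏ t ∈ Finset.range m₂, c (m₁ + n + t)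
  set Pr := ∏ t ∈ Finset.range n, c (m₁ + t) with hPr
  have hP1 : Pr = 1 := by
    have hx : Pr * (a * b) = a * (Pr * b) := by ring
    rw [hPc', hPc] at hx
    simpa using hx
  refine ⟨fun t => c (m₁ + t), ?_, ?_⟩
  · intro t
    have h2 := hc (m₁ + t) (by omega)
    rw [hγ2 t (le_of_lt t.isLt), show m₁ + (t:ℕ) + 1 = m₁ + ((t:ℕ)+1) by omega,
      hγ2 ((t:ℕ)+1) t.isLt] at h2
    simpa using h2
  · rw [Fin.prod_univ_eq_prod_range (fun t => c (m₁ + t)) n]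
    exact hP1
end
end MMSetting

namespace MMSetting
section
open MeasureTheory Filter
open scoped ENNReal
variable {S : Type*} [MeasurableSpace S] [MeasurableSingletonClass S] [Countable S]
variable {Ω : Type*} [MeasurableSpace Ω]
variable (X : MMSetting S Ω)

lemma solidarity_aux {i : S} (h : X.P i {ω | X.Ai i ω = 1} = 1) (j : S) :
    X.P j {ω | X.Ai j ω = 1} = 1 := by
  haveI := X.prob j
  classical
  set f : {q : Σ n : ℕ, (Fin (n+1) → S) // FRC j q.1 (extPath q.1 q.2 j)} → Set Ω :=
    fun q => X.pathEvent q.1.1 (extPath q.1.1 q.1.2 j) ∩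
      {ω | ∏ k ∈ Finset.range q.1.1, X.A k ω ≠ 1} with hf
  have hnull : ∀ q, X.P j (f q) = 0 := by
    rintro ⟨⟨n, v⟩, hq⟩
    simp only [hf]
    set s := extPath n v j with hs
    by_cases hz : X.P j (X.pathEvent n s) = 0
    · exact le_antisymm (le_trans (measure_mono Set.inter_subset_left) (le_of_eq hz)) zero_le
    · have hPE : X.P j (X.pathEvent n s) = ∏ k ∈ Finset.range n, X.p (s k) (s (k+1)) :=
        X.chain j n s hq.1
      have hposedges : ∀ k < n, X.p (s k) (s (k+1)) ≠ 0 := by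
        rw [hPE] at hz
        have := Finset.prod_ne_zero_iff.mp hz
        exact fun k hk => this k (Finset.mem_range.2 hk)
      obtain ⟨c, hc, hcprod⟩ := X.target_cycle h j hq hposedges
      haveI : ∀ k : Fin n, IsProbabilityMeasure (X.edgeLaw (s k) (s (k+1))) :=
        fun k => X.edgeLaw_prob _ _
      have hpi := pi_prod_of_dirac (fun k : Fin n => X.edgeLaw (s k) (s (k+1))) c hc
      rw [hcprod] at hpi
      have hT0 : MeasurableSet {a : Fin n → ℝ | ∏ k, a k = 1} := by
        have : Measurable fun a : Fin n → ℝ => ∏ k, a k := by fun_prop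
        exact this (measurableSet_singleton 1)
      haveI : IsProbabilityMeasure
          (Measure.pi (fun k : Fin n => X.edgeLaw (s k) (s (k+1)))) := inferInstance
      have hpi0 : Measure.pi (fun k : Fin n => X.edgeLaw (s k) (s (k+1)))
          ({a : Fin n → ℝ | ∏ k, a k = 1}ᶜ) = 0 := by
        rwa [prob_compl_eq_zero_iff hT0]
      have hlaw := X.law_A j n s hq.1 hT0.compl
      have hset : {ω | (fun k : Fin n => X.A k ω) ∈ ({a : Fin n → ℝ | ∏ k, a k = 1}ᶜ)}
          = {ω | ∏ k ∈ Finset.range n, X.A k ω ≠ 1} := by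
        ext ω
        simp only [Set.mem_setOf_eq, Set.mem_compl_iff, ne_eq]
        rw [Fin.prod_univ_eq_prod_range (fun k => X.A k ω) n]
      rw [hset, hpi0, mul_zero] at hlaw
      exact hlaw
  have hM0 : X.P j ({ω | X.M 0 ω = j}ᶜ) = 0 := by
    have hmeas : MeasurableSet {ω | X.M 0 ω = j} := X.measM 0 (measurableSet_singleton j)
    rw [prob_compl_eq_zero_iff hmeas]
    exact X.start j
  have hcover : {ω | X.Ai j ω = 1}ᶜ ⊆ {ω | X.M 0 ω = j}ᶜ ∪ ⋃ q, f q := by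
    intro ω hω
    by_cases h0 : X.M 0 ω = j
    · right
      have hAi : X.Ai j ω ≠ 1 := hω
      have hTne : {k : ℕ | 0 < k ∧ X.M k ω = j}.Nonempty := by
        by_contra hempty
        rw [Set.not_nonempty_iff_eq_empty] at hempty
        apply hAi
        rw [Ai, tau_one, hempty]
        simp [Pprod]
      set n := sInf {k : ℕ | 0 < k ∧ X.M k ω = j} with hn
      have hmem : 0 < n ∧ X.M n ω = j := Nat.sInf_mem hTne
      set v : Fin (n+1) → S := fun k => X.M (k : ℕ) ω with hv
      have hext : ∀ k ≤ n, extPath n v j k = X.M k ω := fun k hk => extPath_eq hk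
      have hpe : ω ∈ X.pathEvent n (extPath n v j) := by
        rw [X.mem_pathEvent_iff]
        exact fun k hk => (hext k hk).symm
      have hfrc : FRC j n (extPath n v j) := by
        refine ⟨by rw [hext 0 (Nat.zero_le _)]; exact h0,
          by rw [hext n le_rfl]; exact hmem.2, ?_, hmem.1⟩
        intro k hk1 hk2
        rw [hext k (le_of_lt hk2)]
        intro hkj
        exact absurd (Nat.sInf_le
          (show k ∈ {k : ℕ | 0 < k ∧ X.M k ω = j} from ⟨hk1, hkj⟩)) (not_le.2 hk2)
      refine Set.mem_iUnion.2 ⟨⟨⟨n, v⟩, hfrc⟩, hpe, ?_⟩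
      show ∏ k ∈ Finset.range n, X.A k ω ≠ 1
      have htau : X.tau j 1 ω = n := X.tau_on_path hfrc hpe
      intro hcontra
      apply hAi
      rw [Ai, htau, Pprod]
      exact hcontra
    · left; exact h0
  have hC : X.P j ({ω | X.Ai j ω = 1}ᶜ) = 0 := by
    refine le_antisymm (le_trans (measure_mono hcover) ?_) zero_le
    refine le_trans (measure_union_le _ _) ?_
    rw [hM0, zero_add]
    refine le_trans (measure_iUnion_le _) ?_
    simp [hnull]
  have h1 : (1:ℝ≥0∞) ≤ X.P j {ω | X.Ai j ω = 1} := by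
    have := measure_union_le (μ := X.P j) {ω | X.Ai j ω = 1} ({ω | X.Ai j ω = 1}ᶜ)
    rw [Set.union_compl_self, hC, add_zero, measure_univ] at this
    exact this
  exact le_antisymm prob_le_one h1

end
end MMSetting

open MMSetting

/-- **Lemma 4.4** (solidarity). In the Markov-modulated setting: if `P_i(A_1^i = 1) = 1`
for some `i ∈ S`, then `P_j(A_1^j = 1) = 1` for all `j ∈ S`. -/
theorem cycle_product_one_solidarity
    {S : Type*} [MeasurableSpace S] [MeasurableSingletonClass S] [Countable S]
    {Ω : Type*} [MeasurableSpace Ω] (X : MMSetting S Ω)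
    (i : S) (h : X.P i {ω | X.Ai i ω = 1} = 1) :
    ∀ j : S, X.P j {ω | X.Ai j ω = 1} = 1 :=
  fun j => X.solidarity_aux h j

end Perpetuities
end
end

section
/- In the Markov-modulated setting with |S|>1, suppose condition (E) holds, i.e. for every i∈S there exists c_i∈R with P_i(A_1^i c_i+B_1^i=c_i)=1, and suppose P_i(A_1^i=1)<1 for some (equivalently, all) i∈S. Then the family (c_i)_{i∈S} in (E) is unique, the degeneracy condition (D) holds, i.e. P_π(A_1c_{M_1}+B_1=c_{M_0})=1, and more generally, for every n∈N, Π_n c_{M_n}+∑_{k=1}^n Π_{k-1}B_k=c_{M_0} a.s. -/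
open MeasureTheory ProbabilityTheory Filter
open scoped ENNReal NNReal Topology

noncomputable section

namespace Perpetuities

open MMSetting Set

section Algebra

/-- Running product of first coordinates. -/
def pAseq (u : ℕ → ℝ × ℝ) (n : ℕ) : ℝ := ∏ k ∈ Finset.range n, (u k).1

/-- `∑_{k<n} (∏_{l<k} a_l) b_k`. -/
def pBseq (u : ℕ → ℝ × ℝ) (n : ℕ) : ℝ := ∑ k ∈ Finset.range n, pAseq u k * (u k).2

/-- Extension of a finite vector by `(1,0)`. -/
def extV {n : ℕ} (v : Fin n → ℝ × ℝ) : ℕ → ℝ × ℝ :=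
  fun k => if h : k < n then v ⟨k, h⟩ else (1, 0)

def pA {n : ℕ} (v : Fin n → ℝ × ℝ) : ℝ := pAseq (extV v) n

def pB {n : ℕ} (v : Fin n → ℝ × ℝ) : ℝ := pBseq (extV v) n

lemma pAseq_congr {u u' : ℕ → ℝ × ℝ} {n : ℕ} (h : ∀ k < n, u k = u' k) :
    pAseq u n = pAseq u' n :=
  Finset.prod_congr rfl fun k hk => by rw [h k (Finset.mem_range.1 hk)]

lemma pBseq_congr {u u' : ℕ → ℝ × ℝ} {n : ℕ} (h : ∀ k < n, u k = u' k) :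
    pBseq u n = pBseq u' n := by
  refine Finset.sum_congr rfl fun k hk => ?_
  have hk' := Finset.mem_range.1 hk
  rw [h k hk', pAseq_congr fun l hl => h l (hl.trans hk')]

lemma pAseq_succ (u : ℕ → ℝ × ℝ) (n : ℕ) : pAseq u (n + 1) = pAseq u n * (u n).1 :=
  Finset.prod_range_succ _ _

lemma pBseq_succ (u : ℕ → ℝ × ℝ) (n : ℕ) :
    pBseq u (n + 1) = pBseq u n + pAseq u n * (u n).2 :=
  Finset.sum_range_succ _ _

lemma pAseq_comb (u w : ℕ → ℝ × ℝ) (m r : ℕ) :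
    pAseq (fun k => if k < m then u k else w (k - m)) (m + r) = pAseq u m * pAseq w r := by
  induction r with
  | zero =>
    have h0 : pAseq w 0 = 1 := by simp [pAseq]
    rw [Nat.add_zero, h0, mul_one]
    exact pAseq_congr fun k hk => by simp [hk]
  | succ r ih =>
    rw [show m + (r + 1) = (m + r) + 1 by ring, pAseq_succ, ih, pAseq_succ]
    have h1 : ¬ (m + r < m) := by omega
    simp only [h1, if_false, Nat.add_sub_cancel_left]
    ring

lemma pBseq_comb (u w : ℕ → ℝ × ℝ) (m r : ℕ) :
    pBseq (fun k => if k < m then u k else w (k - m)) (m + r) =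
      pBseq u m + pAseq u m * pBseq w r := by
  induction r with
  | zero =>
    have h0 : pBseq w 0 = 0 := by simp [pBseq]
    rw [Nat.add_zero, h0, mul_zero, add_zero]
    exact pBseq_congr fun k hk => by simp [hk]
  | succ r ih =>
    rw [show m + (r + 1) = (m + r) + 1 by ring, pBseq_succ, ih, pBseq_succ,
      pAseq_comb]
    have h1 : ¬ (m + r < m) := by omega
    simp only [h1, if_false, Nat.add_sub_cancel_left]
    ring

lemma extV_lt {n : ℕ} (v : Fin n → ℝ × ℝ) {k : ℕ} (h : k < n) : extV v k = v ⟨k, h⟩ :=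
  dif_pos h

lemma pA_eq_prod {n : ℕ} (v : Fin n → ℝ × ℝ) : pA v = ∏ k : Fin n, (v k).1 := by
  rw [pA, pAseq, ← Fin.prod_univ_eq_prod_range (fun k => (extV v k).1) n]
  exact Finset.prod_congr rfl fun k _ => by rw [extV_lt v k.isLt]

lemma measurable_pA {n : ℕ} : Measurable (pA (n := n)) := by
  have h : pA (n := n) = fun v => ∏ k : Fin n, (v k).1 := funext pA_eq_prod
  rw [h]
  exact Finset.measurable_prod _ fun k _ => (measurable_pi_apply k).fst

lemma measurable_pB {n : ℕ} : Measurable (pB (n := n)) := by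
  unfold pB pBseq
  refine Finset.measurable_sum _ fun k hk => ?_
  have hk' := Finset.mem_range.1 hk
  refine Measurable.mul ?_ ?_
  · unfold pAseq
    refine Finset.measurable_prod _ fun l hl => ?_
    have hl' : l < n := (Finset.mem_range.1 hl).trans hk'
    have h : ∀ v : Fin n → ℝ × ℝ, extV v l = v ⟨l, hl'⟩ := fun v => extV_lt v hl'
    simp only [h]
    exact (measurable_pi_apply _).fst
  · have h : ∀ v : Fin n → ℝ × ℝ, extV v k = v ⟨k, hk'⟩ := fun v => extV_lt v hk'
    simp only [h]
    exact (measurable_pi_apply _).snd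

lemma pA_zero (v : Fin 0 → ℝ × ℝ) : pA v = 1 := by simp [pA, pAseq]

lemma pB_zero (v : Fin 0 → ℝ × ℝ) : pB v = 0 := by simp [pB, pBseq]

end Algebra

end Perpetuities

namespace Perpetuities

open MMSetting Set Filter

section Append

/-- Concatenation of two finite vectors. -/
def appV (m r : ℕ) (q : (Fin m → ℝ × ℝ) × (Fin r → ℝ × ℝ)) : Fin (m + r) → ℝ × ℝ :=
  Equiv.piCongrLeft (fun _ => ℝ × ℝ) finSumFinEquiv
    ((Equiv.sumPiEquivProdPi fun _ => ℝ × ℝ).symm q)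

lemma appV_left {m r : ℕ} (v : Fin m → ℝ × ℝ) (w : Fin r → ℝ × ℝ) (k : Fin m) :
    appV m r (v, w) (finSumFinEquiv (Sum.inl k)) = v k :=
  Equiv.piCongrLeft_sumInl (fun _ => ℝ × ℝ) finSumFinEquiv v w k

lemma appV_right {m r : ℕ} (v : Fin m → ℝ × ℝ) (w : Fin r → ℝ × ℝ) (k : Fin r) :
    appV m r (v, w) (finSumFinEquiv (Sum.inr k)) = w k :=
  Equiv.piCongrLeft_sumInr (fun _ => ℝ × ℝ) finSumFinEquiv v w k

lemma appV_apply_lt {m r : ℕ} (v : Fin m → ℝ × ℝ) (w : Fin r → ℝ × ℝ) {k : ℕ}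
    (hmr : k < m + r) (h : k < m) : appV m r (v, w) ⟨k, hmr⟩ = v ⟨k, h⟩ := by
  have he : (⟨k, hmr⟩ : Fin (m + r)) = finSumFinEquiv (Sum.inl (⟨k, h⟩ : Fin m)) := by
    apply Fin.ext
    simp [finSumFinEquiv_apply_left]
  rw [he, appV_left]

lemma appV_apply_ge {m r : ℕ} (v : Fin m → ℝ × ℝ) (w : Fin r → ℝ × ℝ) {k : ℕ}
    (hmr : k < m + r) (h : ¬ k < m) :
    appV m r (v, w) ⟨k, hmr⟩ = w ⟨k - m, by omega⟩ := by
  have he : (⟨k, hmr⟩ : Fin (m + r)) = finSumFinEquiv (Sum.inr (⟨k - m, by omega⟩ : Fin r)) := by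
    apply Fin.ext
    simp only [finSumFinEquiv_apply_right, Fin.natAdd_mk]
    omega
  rw [he, appV_right]

lemma pA_appV {m r : ℕ} (v : Fin m → ℝ × ℝ) (w : Fin r → ℝ × ℝ) :
    pA (appV m r (v, w)) = pA v * pA w := by
  rw [pA, pA, pA, ← pAseq_comb (extV v) (extV w) m r]
  refine pAseq_congr fun k hk => ?_
  by_cases h : k < m
  · rw [extV_lt _ hk, appV_apply_lt v w hk h, if_pos h, extV_lt v h]
  · have hkm : k - m < r := by omega
    rw [extV_lt _ hk, appV_apply_ge v w hk h, if_neg h, extV_lt w hkm]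

lemma pB_appV {m r : ℕ} (v : Fin m → ℝ × ℝ) (w : Fin r → ℝ × ℝ) :
    pB (appV m r (v, w)) = pB v + pA v * pB w := by
  rw [pB, pB, pB, pA, ← pBseq_comb (extV v) (extV w) m r]
  refine pBseq_congr fun k hk => ?_
  by_cases h : k < m
  · rw [extV_lt _ hk, appV_apply_lt v w hk h, if_pos h, extV_lt v h]
  · have hkm : k - m < r := by omega
    rw [extV_lt _ hk, appV_apply_ge v w hk h, if_neg h, extV_lt w hkm]

lemma measurable_appV (m r : ℕ) : Measurable (appV m r) := by
  refine measurable_pi_lambda _ fun i => ?_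
  rcases Nat.lt_or_ge (i : ℕ) m with h | h
  · have : ∀ q : (Fin m → ℝ × ℝ) × (Fin r → ℝ × ℝ),
        appV m r q i = q.1 ⟨i, h⟩ := by
      intro q
      rcases q with ⟨v, w⟩
      exact appV_apply_lt v w i.isLt h
    simp only [this]
    exact (measurable_pi_apply _).comp measurable_fst
  · have h' : ¬ (i : ℕ) < m := by omega
    have : ∀ q : (Fin m → ℝ × ℝ) × (Fin r → ℝ × ℝ),
        appV m r q i = q.2 ⟨(i : ℕ) - m, by omega⟩ := by
      intro q
      rcases q with ⟨v, w⟩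
      exact appV_apply_ge v w i.isLt h'
    simp only [this]
    exact (measurable_pi_apply _).comp measurable_snd

end Append

section AEhelp

open MeasureTheory

variable {α β : Type*} [MeasurableSpace α] [MeasurableSpace β] {μ : Measure α} {ν : Measure β}

lemma ae_prod_mk [SigmaFinite ν] {Q1 : α → Prop} {Q2 : β → Prop}
    (h1 : ∀ᵐ a ∂μ, Q1 a) (h2 : ∀ᵐ b ∂ν, Q2 b) :
    ∀ᵐ q ∂ μ.prod ν, Q1 q.1 ∧ Q2 q.2 := by
  rw [ae_iff] at h1 h2 ⊢
  have hsub : {q : α × β | ¬(Q1 q.1 ∧ Q2 q.2)} ⊆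
      ({a | ¬ Q1 a} ×ˢ (univ : Set β)) ∪ ((univ : Set α) ×ˢ {b | ¬ Q2 b}) := by
    intro q hq
    by_cases h : Q1 q.1
    · exact Or.inr ⟨mem_univ _, fun hh => hq ⟨h, hh⟩⟩
    · exact Or.inl ⟨h, mem_univ _⟩
  refine le_antisymm ?_ zero_le
  calc μ.prod ν {q : α × β | ¬(Q1 q.1 ∧ Q2 q.2)}
      ≤ μ.prod ν (({a | ¬ Q1 a} ×ˢ (univ : Set β)) ∪ ((univ : Set α) ×ˢ {b | ¬ Q2 b})) :=
        measure_mono hsub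
    _ ≤ μ.prod ν ({a | ¬ Q1 a} ×ˢ (univ : Set β)) + μ.prod ν ((univ : Set α) ×ˢ {b | ¬ Q2 b}) :=
        measure_union_le _ _
    _ = 0 := by rw [Measure.prod_prod, Measure.prod_prod, h1, h2]; simp

lemma exists_of_pos_of_ae {U : Set α} (hU : μ U ≠ 0) {Q : α → Prop} (h : ∀ᵐ a ∂μ, Q a) :
    ∃ a ∈ U, Q a := by
  have : μ (U ∩ {a | Q a}) ≠ 0 := by
    intro h0
    apply hU
    refine le_antisymm ?_ zero_le
    calc μ U ≤ μ ((U ∩ {a | Q a}) ∪ {a | ¬ Q a}) := by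
          refine measure_mono fun a ha => ?_
          by_cases hQ : Q a
          · exact Or.inl ⟨ha, hQ⟩
          · exact Or.inr hQ
      _ ≤ μ (U ∩ {a | Q a}) + μ {a | ¬ Q a} := measure_union_le _ _
      _ = 0 := by rw [h0, ae_iff.1 h]; simp
  obtain ⟨a, ha⟩ := nonempty_of_measure_ne_zero this
  exact ⟨a, ha.1, ha.2⟩

end AEhelp

end Perpetuities

namespace Perpetuities

open MMSetting Set Filter MeasureTheory

section Chain

variable {S : Type*} [MeasurableSpace S] [MeasurableSingletonClass S] [Countable S]
variable {Ω : Type*} [MeasurableSpace Ω] (X : MMSetting S Ω)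

/-- The cylinder event `{M_k = γ_k, 0 ≤ k ≤ n}`. -/
def cylE (γ : ℕ → S) (n : ℕ) : Set Ω := ⋂ k ∈ Finset.range (n + 1), {ω | X.M k ω = γ k}

/-- The vector of the first `n` pairs `(A_k, B_k)`. -/
def vecV (n : ℕ) (ω : Ω) : Fin n → ℝ × ℝ := fun k => (X.A k ω, X.B k ω)

/-- The product of the kernels along a path. -/
def muK (γ : ℕ → S) (n : ℕ) : Measure (Fin n → ℝ × ℝ) :=
  Measure.pi fun k : Fin n => X.K (γ (k : ℕ)) (γ ((k : ℕ) + 1))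

/-- Positivity of all transition probabilities along a path. -/
def posP (γ : ℕ → S) (n : ℕ) : Prop := ∀ k < n, X.p (γ k) (γ (k + 1)) ≠ 0

lemma measurable_vecV (n : ℕ) : Measurable (vecV X n) :=
  measurable_pi_lambda _ fun k => (X.measA k).prodMk (X.measB k)

lemma measurableSet_cylE (γ : ℕ → S) (n : ℕ) : MeasurableSet (cylE X γ n) := by
  refine MeasurableSet.biInter (Finset.range (n + 1)).countable_toSet fun k _ => ?_
  exact X.measM k (measurableSet_singleton (γ k))

lemma mem_cylE {γ : ℕ → S} {n : ℕ} {ω : Ω} :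
    ω ∈ cylE X γ n ↔ ∀ k ≤ n, X.M k ω = γ k := by
  simp only [cylE, Set.mem_iInter, Finset.mem_range, mem_setOf_eq, Nat.lt_succ_iff]

lemma muK_prob (γ : ℕ → S) (n : ℕ) : IsProbabilityMeasure (muK X γ n) := by
  haveI : ∀ k : Fin n, IsProbabilityMeasure (X.K (γ (k : ℕ)) (γ ((k : ℕ) + 1))) :=
    fun k => X.Kprob _ _
  unfold muK
  exact inferInstance

lemma muK_congr {γ γ' : ℕ → S} {n : ℕ} (h : ∀ k ≤ n, γ k = γ' k) :
    muK X γ n = muK X γ' n := by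
  unfold muK
  congr 1
  funext k
  rw [h (k : ℕ) (le_of_lt k.isLt), h ((k : ℕ) + 1) k.isLt]

lemma cyl_pos_iff {i : S} {γ : ℕ → S} {n : ℕ} (h0 : γ 0 = i) :
    X.P i (cylE X γ n) ≠ 0 ↔ posP X γ n := by
  rw [show cylE X γ n = ⋂ k ∈ Finset.range (n + 1), {ω | X.M k ω = γ k} from rfl,
    X.chain i n γ h0, Finset.prod_ne_zero_iff]
  constructor
  · intro h k hk
    exact h k (Finset.mem_range.2 hk)
  · intro h k hk
    exact h k (Finset.mem_range.1 hk)

lemma key_prod (i : S) (γ : ℕ → S) (h0 : γ 0 = i) (n : ℕ) {E : Set (Fin n → ℝ × ℝ)}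
    (hE : MeasurableSet E) :
    X.P i (cylE X γ n ∩ vecV X n ⁻¹' E) = X.P i (cylE X γ n) * muK X γ n E := by
  haveI := X.prob i
  haveI : ∀ k : Fin n, IsProbabilityMeasure (X.K (γ (k : ℕ)) (γ ((k : ℕ) + 1))) :=
    fun k => X.Kprob _ _
  set c0 := X.P i (cylE X γ n) with hc0
  rcases eq_or_ne c0 0 with h | hne
  · rw [h, zero_mul]
    refine le_antisymm ?_ zero_le
    rw [← h, hc0]
    exact measure_mono inter_subset_left
  · have hc0top : c0 ≠ ⊤ := measure_ne_top _ _
    set ν : Measure (Fin n → ℝ × ℝ) :=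
      Measure.map (vecV X n) ((X.P i).restrict (cylE X γ n)) with hν
    have hbox : ∀ s : Fin n → Set (ℝ × ℝ), (∀ k, MeasurableSet (s k)) →
        ν (univ.pi s) = c0 * ∏ k : Fin n, X.K (γ (k : ℕ)) (γ ((k : ℕ) + 1)) (s k) := by
      intro s hs
      rw [hν, Measure.map_apply (measurable_vecV X n) (MeasurableSet.univ_pi hs),
        Measure.restrict_apply (measurable_vecV X n (MeasurableSet.univ_pi hs))]
      set E' : ℕ → Set (ℝ × ℝ) := fun k => if h : k < n then s ⟨k, h⟩ else univ with hE'
      have hE'm : ∀ k, MeasurableSet (E' k) := by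
        intro k
        rw [hE']
        dsimp only
        split
        · exact hs _
        · exact MeasurableSet.univ
      have hpre : vecV X n ⁻¹' univ.pi s
          = ⋂ k ∈ Finset.range n, {ω | (X.A k ω, X.B k ω) ∈ E' k} := by
        ext ω
        simp only [mem_preimage, Set.mem_univ_pi, Set.mem_iInter,
          Finset.mem_range, mem_setOf_eq, vecV]
        constructor
        · intro h k hk
          rw [hE']
          dsimp only
          rw [dif_pos hk]
          exact h ⟨k, hk⟩
        · intro h k
          have hlt := k.isLt
          have := h (k : ℕ) hlt
          rw [hE'] at this
          dsimp only at this
          rw [dif_pos hlt] at this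
          exact this
      rw [hpre, inter_comm]
      rw [show cylE X γ n = ⋂ k ∈ Finset.range (n + 1), {ω | X.M k ω = γ k} from rfl]
      rw [X.modulated i n γ E' h0 hE'm]
      rw [show (⋂ k ∈ Finset.range (n + 1), {ω | X.M k ω = γ k}) = cylE X γ n from rfl, ← hc0]
      congr 1
      rw [← Fin.prod_univ_eq_prod_range (fun k => X.K (γ k) (γ (k + 1)) (E' k)) n]
      refine Finset.prod_congr rfl fun k _ => ?_
      congr 1
      rw [hE']
      dsimp only
      rw [dif_pos k.isLt]
    have hpi : Measure.pi (fun k : Fin n => X.K (γ (k : ℕ)) (γ ((k : ℕ) + 1))) = c0⁻¹ • ν := by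
      refine Measure.pi_eq fun s hs => ?_
      rw [Measure.smul_apply, hbox s hs, smul_eq_mul, ← mul_assoc,
        ENNReal.inv_mul_cancel hne hc0top, one_mul]
    have hν_apply : ν E = X.P i (cylE X γ n ∩ vecV X n ⁻¹' E) := by
      rw [hν, Measure.map_apply (measurable_vecV X n) hE,
        Measure.restrict_apply (measurable_vecV X n hE), inter_comm]
    rw [show muK X γ n = Measure.pi (fun k : Fin n => X.K (γ (k : ℕ)) (γ ((k : ℕ) + 1))) from rfl,
      hpi, Measure.smul_apply, smul_eq_mul, ← mul_assoc,
      ENNReal.mul_inv_cancel hne hc0top, one_mul, hν_apply]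

end Chain

end Perpetuities

namespace Perpetuities

open MMSetting Set Filter MeasureTheory

section Star

variable {S : Type*} [MeasurableSpace S] [MeasurableSingletonClass S] [Countable S]
variable {Ω : Type*} [MeasurableSpace Ω] (X : MMSetting S Ω)

/-- A first-return path from `i` to `i`. -/
def FRpath (i : S) (γ : ℕ → S) (n : ℕ) : Prop :=
  γ 0 = i ∧ γ n = i ∧ ∀ k, 0 < k → k < n → γ k ≠ i

lemma tau_eq {i : S} {γ : ℕ → S} {n : ℕ} (hn : 0 < n) (hFR : FRpath i γ n) {ω : Ω}
    (hω : ω ∈ cylE X γ n) : X.tau i 1 ω = n := by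
  have hmem : ∀ k ≤ n, X.M k ω = γ k := (mem_cylE X).1 hω
  have hset : n ∈ {k | 0 < k ∧ X.M k ω = i} := ⟨hn, by rw [hmem n le_rfl, hFR.2.1]⟩
  show sInf {k | 0 < k ∧ X.M k ω = i} = n
  have h1 : sInf {k | 0 < k ∧ X.M k ω = i} ≤ n := Nat.sInf_le hset
  have h2 := Nat.sInf_mem (⟨n, hset⟩ : Set.Nonempty {k | 0 < k ∧ X.M k ω = i})
  rcases lt_or_eq_of_le h1 with h | h
  · exact absurd ((hmem _ h.le).symm.trans h2.2) (hFR.2.2 _ h2.1 h)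
  · exact h

lemma pA_vec (n : ℕ) (ω : Ω) : pA (vecV X n ω) = X.Pprod n ω := by
  unfold pA pAseq MMSetting.Pprod
  refine Finset.prod_congr rfl fun k hk => ?_
  rw [extV_lt _ (Finset.mem_range.1 hk)]
  rfl

lemma pB_vec (n : ℕ) (ω : Ω) : pB (vecV X n ω) = X.Ssum n ω := by
  unfold pB pBseq MMSetting.Ssum
  refine Finset.sum_congr rfl fun k hk => ?_
  have hk' := Finset.mem_range.1 hk
  rw [extV_lt _ hk']
  have : pAseq (extV (vecV X n ω)) k = X.Pprod k ω := by
    unfold pAseq MMSetting.Pprod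
    refine Finset.prod_congr rfl fun l hl => ?_
    rw [extV_lt _ ((Finset.mem_range.1 hl).trans hk')]
    rfl
  rw [this]
  rfl

lemma star_ae (c : S → ℝ) {i : S}
    (hEi : X.P i {ω | X.Ai i ω * c i + X.Bi i ω = c i} = 1)
    {γ : ℕ → S} {n : ℕ} (hn : 0 < n) (hFR : FRpath i γ n)
    (hpos : X.P i (cylE X γ n) ≠ 0) :
    ∀ᵐ v ∂ muK X γ n, pA v * c i + pB v = c i := by
  haveI := X.prob i
  rw [ae_iff]
  have hEm : MeasurableSet {v : Fin n → ℝ × ℝ | ¬ (pA v * c i + pB v = c i)} :=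
    (((measurable_pA.mul_const (c i)).add measurable_pB)
      (measurableSet_singleton (c i))).compl
  set E : Set (Fin n → ℝ × ℝ) := {v | ¬ (pA v * c i + pB v = c i)} with hEdef
  have hkey := key_prod X i γ hFR.1 n hEm
  have hdisj : Disjoint {ω | X.Ai i ω * c i + X.Bi i ω = c i}
      (cylE X γ n ∩ vecV X n ⁻¹' E) := by
    rw [Set.disjoint_left]
    intro ω hG hT
    have ht := tau_eq X hn hFR hT.1
    have hA : X.Ai i ω = pA (vecV X n ω) := by rw [MMSetting.Ai, ht, pA_vec]
    have hB : X.Bi i ω = pB (vecV X n ω) := by rw [MMSetting.Bi, ht, pB_vec]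
    exact hT.2 (by rw [hEdef] at *; rw [← hA, ← hB]; exact hG)
  have hTm : MeasurableSet (cylE X γ n ∩ vecV X n ⁻¹' E) :=
    (measurableSet_cylE X γ n).inter (measurable_vecV X n hEm)
  have h1 : (1 : ℝ≥0∞) + X.P i (cylE X γ n ∩ vecV X n ⁻¹' E) ≤ 1 := by
    have hu : X.P i ({ω | X.Ai i ω * c i + X.Bi i ω = c i} ∪ (cylE X γ n ∩ vecV X n ⁻¹' E)) ≤ 1 :=
      le_trans (measure_mono (subset_univ _)) measure_univ.le
    rw [measure_union hdisj hTm, hEi] at hu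
    exact hu
  have hT0 : X.P i (cylE X γ n ∩ vecV X n ⁻¹' E) = 0 := by
    have h2 : X.P i (cylE X γ n ∩ vecV X n ⁻¹' E) ≤ 0 := by
      have := (ENNReal.add_le_add_iff_left (ENNReal.one_ne_top)).1
        (by simpa using h1 : (1 : ℝ≥0∞) + X.P i (cylE X γ n ∩ vecV X n ⁻¹' E) ≤ 1 + 0)
      exact this
    exact le_antisymm h2 zero_le
  rw [hkey] at hT0
  rcases mul_eq_zero.1 hT0 with h | h
  · exact absurd h hpos
  · exact h

lemma mp_appV (γ : ℕ → S) (m r : ℕ) :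
    MeasurePreserving (appV m r) ((muK X γ m).prod (muK X (fun k => γ (m + k)) r))
      (muK X γ (m + r)) := by
  haveI : ∀ i j, IsProbabilityMeasure (X.K i j) := X.Kprob
  set μf : Fin (m + r) → Measure (ℝ × ℝ) := fun k => X.K (γ (k : ℕ)) (γ ((k : ℕ) + 1)) with hμf
  haveI : ∀ k, SigmaFinite (μf k) := fun k => by rw [hμf]; infer_instance
  haveI : ∀ i' : Fin m ⊕ Fin r, SigmaFinite (μf (finSumFinEquiv i')) := fun i' => by
    rw [hμf]; infer_instance
  have h2 : MeasurePreserving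
      (MeasurableEquiv.piCongrLeft (fun _ : Fin (m + r) => ℝ × ℝ) finSumFinEquiv)
      (Measure.pi fun i' => μf (finSumFinEquiv i')) (Measure.pi μf) :=
    measurePreserving_piCongrLeft μf finSumFinEquiv
  have h1 : MeasurePreserving
      (MeasurableEquiv.sumPiEquivProdPi (fun _ : Fin m ⊕ Fin r => ℝ × ℝ)).symm
      ((Measure.pi fun k : Fin m => μf (finSumFinEquiv (Sum.inl k))).prod
        (Measure.pi fun k : Fin r => μf (finSumFinEquiv (Sum.inr k))))
      (Measure.pi fun i' => μf (finSumFinEquiv i')) :=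
    measurePreserving_sumPiEquivProdPi_symm (fun i' : Fin m ⊕ Fin r => μf (finSumFinEquiv i'))
  have hcomp := h2.comp h1
  have hL : (fun k : Fin m => μf (finSumFinEquiv (Sum.inl k)))
      = fun k : Fin m => X.K (γ (k : ℕ)) (γ ((k : ℕ) + 1)) := by
    funext k
    rw [hμf]
    simp [finSumFinEquiv_apply_left]
  have hR : (fun k : Fin r => μf (finSumFinEquiv (Sum.inr k)))
      = fun k : Fin r => X.K (γ (m + (k : ℕ))) (γ (m + (k : ℕ) + 1)) := by
    funext k
    rw [hμf]
    simp [finSumFinEquiv_apply_right]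
  rw [hL, hR] at hcomp
  have hfun : (⇑(MeasurableEquiv.piCongrLeft (fun _ : Fin (m + r) => ℝ × ℝ) finSumFinEquiv)
      ∘ ⇑(MeasurableEquiv.sumPiEquivProdPi (fun _ : Fin m ⊕ Fin r => ℝ × ℝ)).symm)
      = appV m r := by
    funext q
    simp only [Function.comp_apply, MeasurableEquiv.coe_piCongrLeft,
      MeasurableEquiv.coe_sumPiEquivProdPi_symm]
    rfl
  rw [hfun] at hcomp
  exact hcomp

lemma ae_split (γ : ℕ → S) (m r : ℕ) {Q : (Fin (m + r) → ℝ × ℝ) → Prop}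
    (hQ : MeasurableSet {v | Q v}) (h : ∀ᵐ v ∂ muK X γ (m + r), Q v) :
    ∀ᵐ v ∂ muK X γ m, ∀ᵐ w ∂ muK X (fun k => γ (m + k)) r, Q (appV m r (v, w)) := by
  haveI := muK_prob X (fun k => γ (m + k)) r
  haveI : SFinite (muK X (fun k => γ (m + k)) r) := inferInstance
  have hmp := mp_appV X γ m r
  rw [← hmp.map_eq] at h
  exact Measure.ae_ae_of_ae_prod ((ae_map_iff hmp.measurable.aemeasurable hQ).1 h)

lemma ae_join (γ : ℕ → S) (m r : ℕ) {Q : (Fin (m + r) → ℝ × ℝ) → Prop}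
    (hQ : MeasurableSet {v | Q v})
    {Q1 : (Fin m → ℝ × ℝ) → Prop} {Q2 : (Fin r → ℝ × ℝ) → Prop}
    (h1 : ∀ᵐ v ∂ muK X γ m, Q1 v) (h2 : ∀ᵐ w ∂ muK X (fun k => γ (m + k)) r, Q2 w)
    (himp : ∀ v w, Q1 v → Q2 w → Q (appV m r (v, w))) :
    ∀ᵐ u ∂ muK X γ (m + r), Q u := by
  haveI := muK_prob X (fun k => γ (m + k)) r
  haveI : SFinite (muK X (fun k => γ (m + k)) r) := inferInstance
  have hmp := mp_appV X γ m r
  rw [← hmp.map_eq, ae_map_iff hmp.measurable.aemeasurable hQ]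
  filter_upwards [ae_prod_mk h1 h2] with q hq
  exact himp q.1 q.2 hq.1 hq.2

end Star

end Perpetuities

namespace Perpetuities

open MMSetting Set Filter MeasureTheory

section Cycles

variable {S : Type*} [MeasurableSpace S] [MeasurableSingletonClass S] [Countable S]
variable {Ω : Type*} [MeasurableSpace Ω] (X : MMSetting S Ω)

/-- Concatenation of two paths. -/
def cat (γ : ℕ → S) (m : ℕ) (δ : ℕ → S) : ℕ → S := fun k => if k < m then γ k else δ (k - m)

lemma cat_shift (γ : ℕ → S) (m : ℕ) (δ : ℕ → S) : (fun k => cat γ m δ (m + k)) = δ := by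
  funext k
  unfold cat
  rw [if_neg (by omega)]
  congr 1
  omega

lemma cat_le {γ : ℕ → S} {m : ℕ} {δ : ℕ → S} (h : γ m = δ 0) {k : ℕ} (hk : k ≤ m) :
    cat γ m δ k = γ k := by
  unfold cat
  rcases lt_or_eq_of_le hk with h' | h'
  · rw [if_pos h']
  · subst h'
    rw [if_neg (by omega), Nat.sub_self, ← h]

lemma posP_cat {γ : ℕ → S} {m : ℕ} {δ : ℕ → S} {r : ℕ} (h : γ m = δ 0)
    (h1 : posP X γ m) (h2 : posP X δ r) : posP X (cat γ m δ) (m + r) := by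
  intro k hk
  by_cases hkm : k < m
  · rw [cat_le h hkm.le, cat_le h hkm]
    exact h1 k hkm
  · have e1 : cat γ m δ k = δ (k - m) := by unfold cat; rw [if_neg hkm]
    have e2 : cat γ m δ (k + 1) = δ (k - m + 1) := by
      unfold cat
      rw [if_neg (by omega)]
      congr 1
      omega
    rw [e1, e2]
    exact h2 (k - m) (by omega)

lemma measurableSet_fix {n : ℕ} (a b : ℝ) :
    MeasurableSet {v : Fin n → ℝ × ℝ | pA v * a + pB v = b} :=
  ((measurable_pA.mul_const a).add measurable_pB) (measurableSet_singleton b)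

lemma cycle_fix (c : S → ℝ)
    (hE : ∀ j : S, X.P j {ω | X.Ai j ω * c j + X.Bi j ω = c j} = 1) (i : S) :
    ∀ n (γ : ℕ → S), γ 0 = i → γ n = i → posP X γ n →
      ∀ᵐ v ∂ muK X γ n, pA v * c i + pB v = c i := by
  intro n
  induction n using Nat.strong_induction_on with
  | _ n IH =>
    intro γ h0 hn hpos
    rcases Nat.eq_zero_or_pos n with rfl | hnpos
    · exact Filter.Eventually.of_forall fun v => by rw [pA_zero, pB_zero]; ring
    · have hne : n ∈ {k | 0 < k ∧ k ≤ n ∧ γ k = i} := ⟨hnpos, le_rfl, hn⟩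
      obtain ⟨m, hm0, hmn, hγm, hmid⟩ :
          ∃ m, 0 < m ∧ m ≤ n ∧ γ m = i ∧ ∀ k, 0 < k → k < m → γ k ≠ i := by
        have hmem : sInf {k | 0 < k ∧ k ≤ n ∧ γ k = i} ∈ {k | 0 < k ∧ k ≤ n ∧ γ k = i} :=
          Nat.sInf_mem ⟨n, hne⟩
        refine ⟨sInf {k | 0 < k ∧ k ≤ n ∧ γ k = i}, hmem.1, hmem.2.1, hmem.2.2,
          fun k hk0 hkm hki => ?_⟩
        have : sInf {k | 0 < k ∧ k ≤ n ∧ γ k = i} ≤ k :=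
          Nat.sInf_le ⟨hk0, le_trans hkm.le hmem.2.1, hki⟩
        omega
      have hFR : FRpath i γ m := ⟨h0, hγm, hmid⟩
      have hposm : posP X γ m := fun k hk => hpos k (lt_of_lt_of_le hk hmn)
      have hstar := star_ae X c (hE i) hm0 hFR ((cyl_pos_iff X h0).2 hposm)
      rcases eq_or_lt_of_le hmn with heq | hlt
      · rw [← heq]
        exact hstar
      · obtain ⟨r, rfl⟩ : ∃ r, n = m + r := ⟨n - m, by omega⟩
        have hIH := IH r (by omega) (fun k => γ (m + k))
          (by simpa using hγm) (by simpa using hn)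
          (fun k hk => hpos (m + k) (by omega))
        refine ae_join X γ m r (measurableSet_fix (c i) (c i)) hstar hIH
          fun v w hv hw => ?_
        show pA (appV m r (v, w)) * c i + pB (appV m r (v, w)) = c i
        rw [pA_appV, pB_appV]
        linear_combination pA v * hw + hv

/-- Default extension of a finitely supported path. -/
def pext (i : S) {n : ℕ} (f : Fin (n + 1) → S) : ℕ → S :=
  fun k => if h : k < n + 1 then f ⟨k, h⟩ else i

lemma exists_pos_path (i j : S) : ∃ n γ, γ 0 = i ∧ γ n = j ∧ posP X γ n := by
  haveI := X.prob i
  obtain ⟨n, hn⟩ := X.irreducible i j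
  have hM0 : X.P i {ω | ¬ (X.M 0 ω = i)} = 0 := by
    have hmeas : MeasurableSet {ω | X.M 0 ω = i} := X.measM 0 (measurableSet_singleton i)
    have : {ω | ¬ (X.M 0 ω = i)} = {ω | X.M 0 ω = i}ᶜ := rfl
    rw [this, measure_compl hmeas (measure_ne_top _ _), X.start i, measure_univ]
    simp
  have hsub : {ω | X.M n ω = j} ⊆ {ω | ¬ (X.M 0 ω = i)} ∪
      ⋃ (f : {f : Fin (n + 1) → S // f 0 = i ∧ f (Fin.last n) = j}),
        cylE X (pext i f.1) n := by
    intro ω hω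
    by_cases h0 : X.M 0 ω = i
    · right
      refine mem_iUnion.2 ⟨⟨fun k => X.M (k : ℕ) ω, h0, hω⟩, ?_⟩
      rw [mem_cylE]
      intro k hk
      rw [pext, dif_pos (by omega)]
    · exact Or.inl h0
  have h1 : X.P i {ω | X.M n ω = j} ≤
      X.P i {ω | ¬ (X.M 0 ω = i)} +
      ∑' (f : {f : Fin (n + 1) → S // f 0 = i ∧ f (Fin.last n) = j}),
        X.P i (cylE X (pext i f.1) n) := by
    refine le_trans (measure_mono hsub) (le_trans (measure_union_le _ _) ?_)
    gcongr
    exact measure_iUnion_le _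
  rw [hM0, zero_add] at h1
  have hex : ∃ f : {f : Fin (n + 1) → S // f 0 = i ∧ f (Fin.last n) = j},
      X.P i (cylE X (pext i f.1) n) ≠ 0 := by
    by_contra hc
    push_neg at hc
    rw [ENNReal.tsum_eq_zero.2 hc] at h1
    exact absurd (le_antisymm h1 zero_le) (ne_of_gt hn)
  obtain ⟨f, hf⟩ := hex
  have hγ0 : pext i f.1 0 = i := by
    rw [pext, dif_pos (Nat.succ_pos n)]
    have : (⟨0, Nat.succ_pos n⟩ : Fin (n + 1)) = 0 := by apply Fin.ext; rfl
    rw [this, f.2.1]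
  have hγn : pext i f.1 n = j := by
    rw [pext, dif_pos (Nat.lt_succ_self n)]
    have : (⟨n, Nat.lt_succ_self n⟩ : Fin (n + 1)) = Fin.last n := by apply Fin.ext; rfl
    rw [this, f.2.2]
  exact ⟨n, pext i f.1, hγ0, hγn, (cyl_pos_iff X hγ0).1 hf⟩

end Cycles

end Perpetuities

namespace Perpetuities

open MMSetting Set Filter MeasureTheory

section Nondeg

variable {S : Type*} [MeasurableSpace S] [MeasurableSingletonClass S] [Countable S]
variable {Ω : Type*} [MeasurableSpace Ω] (X : MMSetting S Ω)

lemma cat_ge {γ : ℕ → S} {m : ℕ} {δ : ℕ → S} {k : ℕ} (hk : m ≤ k) :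
    cat γ m δ k = δ (k - m) := by
  unfold cat
  rw [if_neg (by omega)]

lemma measurableSet_pA_eq {n : ℕ} (t : ℝ) : MeasurableSet {v : Fin n → ℝ × ℝ | pA v = t} :=
  measurable_pA (measurableSet_singleton t)

lemma base_nondeg {i : S} (hlt : X.P i {ω | X.Ai i ω = 1} < 1) :
    ∃ n γ, 0 < n ∧ FRpath i γ n ∧ posP X γ n ∧ muK X γ n {v | pA v = 1} ≠ 1 := by
  haveI := X.prob i
  by_contra hcon
  push_neg at hcon
  -- index of first-return cylinders
  set ι := {q : Σ n : ℕ, (Fin (n + 2) → S) // FRpath i (pext i q.2) (q.1 + 1)} with hι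
  have hCylm : ∀ q : ι, MeasurableSet (cylE X (pext i q.1.2) (q.1.1 + 1)) :=
    fun q => measurableSet_cylE X _ _
  have hUm : ∀ q : ι, MeasurableSet (cylE X (pext i q.1.2) (q.1.1 + 1) ∩
      vecV X (q.1.1 + 1) ⁻¹' {v | pA v = 1}) :=
    fun q => (hCylm q).inter (measurable_vecV X _ (measurableSet_pA_eq 1))
  -- disjointness of the cylinders
  have hdisj : Pairwise (Function.onFun Disjoint
      (fun q : ι => cylE X (pext i q.1.2) (q.1.1 + 1))) := by
    rintro ⟨⟨n, f⟩, hf⟩ ⟨⟨n', f'⟩, hf'⟩ hne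
    rw [Function.onFun, Set.disjoint_left]
    intro ω hq hq'
    dsimp only at hf hf' hq hq'
    have hm1 : ∀ k ≤ n + 1, X.M k ω = pext i f k := (mem_cylE X).1 hq
    have hm2 : ∀ k ≤ n' + 1, X.M k ω = pext i f' k := (mem_cylE X).1 hq'
    rcases lt_trichotomy n n' with h | h | h
    · have e1 : X.M (n + 1) ω = i := by
        rw [hm1 (n + 1) le_rfl, hf.2.1]
      have e2 : X.M (n + 1) ω ≠ i := by
        rw [hm2 (n + 1) (by omega)]
        exact hf'.2.2 (n + 1) (by omega) (by omega)
      exact e2 e1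
    · subst h
      have hff' : f ≠ f' := by
        intro h
        subst h
        exact hne rfl
      obtain ⟨k, hk⟩ := Function.ne_iff.1 hff'
      apply hk
      have e1 := hm1 (k : ℕ) (by omega)
      have e2 := hm2 (k : ℕ) (by omega)
      rw [pext, dif_pos k.isLt] at e1 e2
      rw [← show (⟨(k : ℕ), k.isLt⟩ : Fin (n + 2)) = k from Fin.ext rfl]
      rw [← e1, ← e2]
    · have e1 : X.M (n' + 1) ω = i := by
        rw [hm2 (n' + 1) le_rfl, hf'.2.1]
      have e2 : X.M (n' + 1) ω ≠ i := by
        rw [hm1 (n' + 1) (by omega)]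
        exact hf.2.2 (n' + 1) (by omega) (by omega)
      exact e2 e1
  have hdisjU : Pairwise (Function.onFun Disjoint (fun q : ι => cylE X (pext i q.1.2) (q.1.1 + 1) ∩
      vecV X (q.1.1 + 1) ⁻¹' {v | pA v = 1})) :=
    fun q q' h => Disjoint.mono inter_subset_left inter_subset_left (hdisj h)
  -- equal measures
  have hPU : ∀ q : ι, X.P i (cylE X (pext i q.1.2) (q.1.1 + 1) ∩
      vecV X (q.1.1 + 1) ⁻¹' {v | pA v = 1}) = X.P i (cylE X (pext i q.1.2) (q.1.1 + 1)) := by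
    rintro ⟨⟨n, f⟩, hf⟩
    have h0 : pext i f 0 = i := hf.1
    rw [key_prod X i (pext i f) h0 (n + 1) (measurableSet_pA_eq 1)]
    rcases eq_or_ne (X.P i (cylE X (pext i f) (n + 1))) 0 with h | h
    · rw [h, zero_mul]
    · rw [hcon (n + 1) (pext i f) (Nat.succ_pos n) hf ((cyl_pos_iff X h0).1 h), mul_one]
  -- coverage
  have hcov : {ω | X.M 0 ω = i} ∩ {ω | ∃ k, 0 < k ∧ X.M k ω = i} ⊆
      ⋃ q : ι, cylE X (pext i q.1.2) (q.1.1 + 1) := by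
    rintro ω ⟨h0, hret⟩
    have hne' : {k | 0 < k ∧ X.M k ω = i}.Nonempty := hret
    have hTmem : sInf {k | 0 < k ∧ X.M k ω = i} ∈ {k | 0 < k ∧ X.M k ω = i} :=
      Nat.sInf_mem hne'
    obtain ⟨n, hTn⟩ : ∃ n, sInf {k | 0 < k ∧ X.M k ω = i} = n + 1 :=
      ⟨sInf {k | 0 < k ∧ X.M k ω = i} - 1, by have h1 := hTmem.1; omega⟩
    rw [hTn] at hTmem
    have hFRf : FRpath i (pext i (fun k : Fin (n + 2) => X.M (k : ℕ) ω)) (n + 1) := by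
      refine ⟨?_, ?_, ?_⟩
      · rw [pext, dif_pos (by omega)]
        exact h0
      · rw [pext, dif_pos (by omega)]
        exact hTmem.2
      · intro k hk0 hkn
        rw [pext, dif_pos (by omega)]
        intro hki
        have : sInf {k | 0 < k ∧ X.M k ω = i} ≤ k := Nat.sInf_le ⟨hk0, hki⟩
        omega
    refine mem_iUnion.2 ⟨⟨⟨n, fun k : Fin (n + 2) => X.M (k : ℕ) ω⟩, hFRf⟩, ?_⟩
    rw [mem_cylE]
    intro k hk
    rw [pext, dif_pos (by omega)]
  -- the union of the U's is contained in {Ai = 1}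
  have hsubA : (⋃ q : ι, cylE X (pext i q.1.2) (q.1.1 + 1) ∩
      vecV X (q.1.1 + 1) ⁻¹' {v | pA v = 1}) ⊆ {ω | X.Ai i ω = 1} := by
    rintro ω hω
    obtain ⟨q, hq⟩ := mem_iUnion.1 hω
    have ht := tau_eq X (Nat.succ_pos q.1.1) q.2 hq.1
    show X.Ai i ω = 1
    rw [MMSetting.Ai, ht, ← pA_vec]
    exact hq.2
  -- compare measures
  have hM0c : X.P i {ω | X.M 0 ω = i}ᶜ = 0 := by
    rw [prob_compl_eq_one_sub
      (show MeasurableSet {ω | X.M 0 ω = i} from X.measM 0 (measurableSet_singleton i)),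
      X.start i]
    simp
  have hone : (1 : ℝ≥0∞) ≤ X.P i (⋃ q : ι, cylE X (pext i q.1.2) (q.1.1 + 1)) := by
    have hsub2 : {ω | ∃ k, 0 < k ∧ X.M k ω = i} ⊆
        ({ω | X.M 0 ω = i} ∩ {ω | ∃ k, 0 < k ∧ X.M k ω = i}) ∪ {ω | X.M 0 ω = i}ᶜ := by
      intro ω hω
      by_cases h0 : X.M 0 ω = i
      · exact Or.inl ⟨h0, hω⟩
      · exact Or.inr h0
    calc (1 : ℝ≥0∞) = X.P i {ω | ∃ k, 0 < k ∧ X.M k ω = i} := (X.recurrent i).symm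
      _ ≤ X.P i (({ω | X.M 0 ω = i} ∩ {ω | ∃ k, 0 < k ∧ X.M k ω = i}) ∪ {ω | X.M 0 ω = i}ᶜ) :=
          measure_mono hsub2
      _ ≤ X.P i ({ω | X.M 0 ω = i} ∩ {ω | ∃ k, 0 < k ∧ X.M k ω = i}) +
          X.P i {ω | X.M 0 ω = i}ᶜ := measure_union_le _ _
      _ = X.P i ({ω | X.M 0 ω = i} ∩ {ω | ∃ k, 0 < k ∧ X.M k ω = i}) := by rw [hM0c, add_zero]
      _ ≤ X.P i (⋃ q : ι, cylE X (pext i q.1.2) (q.1.1 + 1)) := measure_mono hcov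
  have hfinal : (1 : ℝ≥0∞) ≤ X.P i {ω | X.Ai i ω = 1} := by
    calc (1 : ℝ≥0∞) ≤ X.P i (⋃ q : ι, cylE X (pext i q.1.2) (q.1.1 + 1)) := hone
      _ = ∑' q : ι, X.P i (cylE X (pext i q.1.2) (q.1.1 + 1)) := measure_iUnion hdisj hCylm
      _ = ∑' q : ι, X.P i (cylE X (pext i q.1.2) (q.1.1 + 1) ∩
          vecV X (q.1.1 + 1) ⁻¹' {v | pA v = 1}) := tsum_congr fun q => (hPU q).symm
      _ = X.P i (⋃ q : ι, cylE X (pext i q.1.2) (q.1.1 + 1) ∩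
          vecV X (q.1.1 + 1) ⁻¹' {v | pA v = 1}) := (measure_iUnion hdisjU hUm).symm
      _ ≤ X.P i {ω | X.Ai i ω = 1} := measure_mono hsubA
  exact absurd hlt (not_lt.2 hfinal)

end Nondeg

end Perpetuities

namespace Perpetuities

open MMSetting Set Filter MeasureTheory

section Transport

variable {S : Type*} [MeasurableSpace S] [MeasurableSingletonClass S] [Countable S]
variable {Ω : Type*} [MeasurableSpace Ω] (X : MMSetting S Ω)

lemma ae_split_cat (γ : ℕ → S) (m : ℕ) (δ : ℕ → S) (r : ℕ) (hm : γ m = δ 0)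
    {Q : (Fin (m + r) → ℝ × ℝ) → Prop} (hQ : MeasurableSet {v | Q v})
    (h : ∀ᵐ u ∂ muK X (cat γ m δ) (m + r), Q u) :
    ∀ᵐ v ∂ muK X γ m, ∀ᵐ w ∂ muK X δ r, Q (appV m r (v, w)) := by
  have h1 := ae_split X (cat γ m δ) m r hQ h
  rw [muK_congr X (fun k (hk : k ≤ m) => cat_le hm hk), cat_shift γ m δ] at h1
  exact h1

lemma ae_neBot_muK (γ : ℕ → S) (n : ℕ) : (MeasureTheory.ae (muK X γ n)).NeBot := by
  haveI := muK_prob X γ n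
  exact ae_neBot.2 (IsProbabilityMeasure.ne_zero _)

lemma exists_nondeg_cycle (hlt : ∃ i, X.P i {ω | X.Ai i ω = 1} < 1) (j : S) :
    ∃ n γ, γ 0 = j ∧ γ n = j ∧ posP X γ n ∧ muK X γ n {v | ¬ (pA v = 1)} ≠ 0 := by
  obtain ⟨i0, hi0⟩ := hlt
  obtain ⟨n0, γ0, hn0pos, hFR0, hpos0, hμ0⟩ := base_nondeg X hi0
  have hδ : muK X γ0 n0 {v | ¬ (pA v = 1)} ≠ 0 := by
    haveI := muK_prob X γ0 n0
    intro h
    exact hμ0 ((prob_compl_eq_zero_iff (measurableSet_pA_eq 1)).1 h)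
  obtain ⟨ma, α, hα0, hαe, hαpos⟩ := exists_pos_path X j i0
  obtain ⟨mb, β, hβ0, hβe, hβpos⟩ := exists_pos_path X i0 j
  -- basic endpoint facts
  have hγβ : γ0 n0 = β 0 := by rw [hFR0.2.1, hβ0]
  have hρ0 : cat γ0 n0 β 0 = i0 := by rw [cat_le hγβ (Nat.zero_le n0), hFR0.1]
  have hρe : cat γ0 n0 β (n0 + mb) = j := by
    rw [cat_ge (Nat.le_add_right n0 mb), Nat.add_sub_cancel_left, hβe]
  have hρpos : posP X (cat γ0 n0 β) (n0 + mb) := posP_cat X hγβ hpos0 hβpos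
  have hγρ : γ0 n0 = cat γ0 n0 β 0 := by rw [hρ0, hFR0.2.1]
  have hρρ0 : cat γ0 n0 (cat γ0 n0 β) 0 = i0 := by
    rw [cat_le hγρ (Nat.zero_le n0), hFR0.1]
  have hαρ : α ma = cat γ0 n0 β 0 := by rw [hαe, hρ0]
  have hαρρ : α ma = cat γ0 n0 (cat γ0 n0 β) 0 := by rw [hαe, hρρ0]
  -- first candidate cycle ε1 = α ++ (γ0 ++ β)
  have hε10 : cat α ma (cat γ0 n0 β) 0 = j := by
    rw [cat_le hαρ (Nat.zero_le ma), hα0]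
  have hε1e : cat α ma (cat γ0 n0 β) (ma + (n0 + mb)) = j := by
    rw [cat_ge (Nat.le_add_right _ _), Nat.add_sub_cancel_left, hρe]
  have hε1pos : posP X (cat α ma (cat γ0 n0 β)) (ma + (n0 + mb)) :=
    posP_cat X hαρ hαpos hρpos
  by_cases h1 : muK X (cat α ma (cat γ0 n0 β)) (ma + (n0 + mb)) {v | ¬ (pA v = 1)} = 0
  case neg =>
    exact ⟨ma + (n0 + mb), cat α ma (cat γ0 n0 β), hε10, hε1e, hε1pos, h1⟩
  -- second candidate cycle ε2 = α ++ (γ0 ++ (γ0 ++ β))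
  have hρρpos : posP X (cat γ0 n0 (cat γ0 n0 β)) (n0 + (n0 + mb)) :=
    posP_cat X hγρ hpos0 hρpos
  have hε20 : cat α ma (cat γ0 n0 (cat γ0 n0 β)) 0 = j := by
    rw [cat_le hαρρ (Nat.zero_le ma), hα0]
  have hε2e : cat α ma (cat γ0 n0 (cat γ0 n0 β)) (ma + (n0 + (n0 + mb))) = j := by
    rw [cat_ge (Nat.le_add_right _ _), Nat.add_sub_cancel_left,
      cat_ge (Nat.le_add_right _ _), Nat.add_sub_cancel_left, hρe]
  have hε2pos : posP X (cat α ma (cat γ0 n0 (cat γ0 n0 β))) (ma + (n0 + (n0 + mb))) :=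
    posP_cat X hαρρ hαpos hρρpos
  by_cases h2 : muK X (cat α ma (cat γ0 n0 (cat γ0 n0 β))) (ma + (n0 + (n0 + mb)))
      {v | ¬ (pA v = 1)} = 0
  case neg =>
    exact ⟨ma + (n0 + (n0 + mb)), cat α ma (cat γ0 n0 (cat γ0 n0 β)), hε20, hε2e, hε2pos, h2⟩
  -- both candidate cycles are a.s. lattice: contradiction
  exfalso
  have hae1 : ∀ᵐ u ∂ muK X (cat α ma (cat γ0 n0 β)) (ma + (n0 + mb)), pA u = 1 :=
    ae_iff.2 h1
  have hae2 : ∀ᵐ u ∂ muK X (cat α ma (cat γ0 n0 (cat γ0 n0 β))) (ma + (n0 + (n0 + mb))),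
      pA u = 1 := ae_iff.2 h2
  -- split ε1
  have hs1 := ae_split_cat X α ma (cat γ0 n0 β) (n0 + mb) hαρ (measurableSet_pA_eq 1) hae1
  have F1 : ∀ᵐ v ∂ muK X α ma, ∀ᵐ d ∂ muK X γ0 n0, ∀ᵐ b ∂ muK X β mb,
      pA v * (pA d * pA b) = 1 := by
    filter_upwards [hs1] with v hv
    have hv' : ∀ᵐ w ∂ muK X (cat γ0 n0 β) (n0 + mb), pA v * pA w = 1 := by
      filter_upwards [hv] with w hw
      rw [pA_appV] at hw
      exact hw
    have := ae_split_cat X γ0 n0 β mb hγβ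
      (show MeasurableSet {w : Fin (n0 + mb) → ℝ × ℝ | pA v * pA w = 1} from
        (measurable_pA.const_mul (pA v)) (measurableSet_singleton 1)) hv'
    filter_upwards [this] with d hd
    filter_upwards [hd] with b hb
    rw [pA_appV] at hb
    exact hb
  -- split ε2
  have hs2 := ae_split_cat X α ma (cat γ0 n0 (cat γ0 n0 β)) (n0 + (n0 + mb)) hαρρ
    (measurableSet_pA_eq 1) hae2
  have F2 : ∀ᵐ v ∂ muK X α ma, ∀ᵐ d ∂ muK X γ0 n0, ∀ᵐ d' ∂ muK X γ0 n0, ∀ᵐ b ∂ muK X β mb,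
      pA v * (pA d * (pA d' * pA b)) = 1 := by
    filter_upwards [hs2] with v hv
    have hv' : ∀ᵐ w ∂ muK X (cat γ0 n0 (cat γ0 n0 β)) (n0 + (n0 + mb)), pA v * pA w = 1 := by
      filter_upwards [hv] with w hw
      rw [← pA_appV]
      exact hw
    have hstep := ae_split_cat X γ0 n0 (cat γ0 n0 β) (n0 + mb) hγρ
      (show MeasurableSet {w : Fin (n0 + (n0 + mb)) → ℝ × ℝ | pA v * pA w = 1} from
        (measurable_pA.const_mul (pA v)) (measurableSet_singleton 1)) hv'
    filter_upwards [hstep] with d hd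
    have hd' : ∀ᵐ w ∂ muK X (cat γ0 n0 β) (n0 + mb), pA v * (pA d * pA w) = 1 := by
      filter_upwards [hd] with w hw
      rw [pA_appV] at hw
      exact hw
    have hstep2 := ae_split_cat X γ0 n0 β mb hγβ
      (show MeasurableSet {w : Fin (n0 + mb) → ℝ × ℝ | pA v * (pA d * pA w) = 1} from
        (((measurable_pA.const_mul (pA d)).const_mul (pA v))) (measurableSet_singleton 1)) hd'
    filter_upwards [hstep2] with d' hdd
    filter_upwards [hdd] with b hb
    rw [pA_appV] at hb
    exact hb
  -- extract a contradiction
  haveI hb1 := ae_neBot_muK X α ma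
  haveI hb2 := ae_neBot_muK X γ0 n0
  haveI hb3 := ae_neBot_muK X β mb
  obtain ⟨v, hv1, hv2⟩ := (F1.and F2).exists
  obtain ⟨d, hd1, hd2⟩ := (hv1.and hv2).exists
  have hall : ∀ᵐ d' ∂ muK X γ0 n0, pA d' = 1 := by
    filter_upwards [hd2] with d' hd'
    obtain ⟨b, hb1', hb2'⟩ := (hd'.and hd1).exists
    have h3 : pA d' * (pA v * (pA d * pA b)) = 1 := by linear_combination hb1'
    rw [hb2', mul_one] at h3
    exact h3
  exact hδ (ae_iff.1 hall)

end Transport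

end Perpetuities

namespace Perpetuities

open MMSetting Set Filter MeasureTheory

section PathRel

variable {S : Type*} [MeasurableSpace S] [MeasurableSingletonClass S] [Countable S]
variable {Ω : Type*} [MeasurableSpace Ω] (X : MMSetting S Ω)

lemma pA_one (v : Fin 1 → ℝ × ℝ) : pA v = (v 0).1 := by
  unfold pA pAseq
  rw [Finset.prod_range_one, extV_lt v (by omega : (0 : ℕ) < 1)]
  congr 1

lemma pB_one (v : Fin 1 → ℝ × ℝ) : pB v = (v 0).2 := by
  unfold pB pBseq
  rw [Finset.sum_range_one, extV_lt v (by omega : (0 : ℕ) < 1)]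
  have : pAseq (extV v) 0 = 1 := by simp [pAseq]
  rw [this, one_mul]
  congr 1

lemma path_rel (c : S → ℝ)
    (hE : ∀ j : S, X.P j {ω | X.Ai j ω * c j + X.Bi j ω = c j} = 1)
    (hlt : ∃ i, X.P i {ω | X.Ai i ω = 1} < 1)
    {a b : S} {γ : ℕ → S} {n : ℕ} (h0 : γ 0 = a) (hn : γ n = b) (hpos : posP X γ n) :
    ∀ᵐ v ∂ muK X γ n, pA v * c b + pB v = c a := by
  obtain ⟨mβ, β, hβ0, hβe, hβpos⟩ := exists_pos_path X b a
  obtain ⟨r, δ, hδ0, hδe, hδpos, hδne⟩ := exists_nondeg_cycle X hlt b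
  have hγβ : γ n = β 0 := by rw [hn, hβ0]
  have hδβ : δ r = β 0 := by rw [hδe, hβ0]
  have hγδ : γ n = cat δ r β 0 := by rw [hn, cat_le hδβ (Nat.zero_le r), hδ0]
  have hc1 := cycle_fix X c hE a (n + mβ) (cat γ n β)
    (by rw [cat_le hγβ (Nat.zero_le n), h0])
    (by rw [cat_ge (Nat.le_add_right _ _), Nat.add_sub_cancel_left, hβe])
    (posP_cat X hγβ hpos hβpos)
  have hs1 := ae_split_cat X γ n β mβ hγβ (measurableSet_fix (c a) (c a)) hc1
  have hc2 := cycle_fix X c hE a (n + (r + mβ)) (cat γ n (cat δ r β))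
    (by rw [cat_le hγδ (Nat.zero_le n), h0])
    (by rw [cat_ge (Nat.le_add_right _ _), Nat.add_sub_cancel_left,
      cat_ge (Nat.le_add_right _ _), Nat.add_sub_cancel_left, hβe])
    (posP_cat X hγδ hpos (posP_cat X hδβ hδpos hβpos))
  have hs2 := ae_split_cat X γ n (cat δ r β) (r + mβ) hγδ (measurableSet_fix (c a) (c a)) hc2
  have hc3 := cycle_fix X c hE b r δ hδ0 hδe hδpos
  filter_upwards [hs1, hs2] with v h1 h2
  have h1' : ∀ᵐ w ∂ muK X β mβ, pA v * (pA w * c a + pB w) + pB v = c a := by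
    filter_upwards [h1] with w hw
    rw [pA_appV, pB_appV] at hw
    linear_combination hw
  by_cases hPv : pA v = 0
  · haveI := ae_neBot_muK X β mβ
    obtain ⟨w, hw⟩ := h1'.exists
    rw [hPv] at hw ⊢
    linarith [hw]
  · have h2' : ∀ᵐ w ∂ muK X (cat δ r β) (r + mβ),
        pA v * (pA w * c a + pB w) + pB v = c a := by
      filter_upwards [h2] with w hw
      rw [pA_appV, pB_appV] at hw
      linear_combination hw
    have hmm : MeasurableSet {w : Fin (r + mβ) → ℝ × ℝ |
        pA v * (pA w * c a + pB w) + pB v = c a} := by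
      refine (Measurable.add_const ?_ (pB v)) (measurableSet_singleton (c a))
      exact ((measurable_pA.mul_const (c a)).add measurable_pB).const_mul (pA v)
    have h2'' := ae_split_cat X δ r β mβ hδβ hmm h2'
    obtain ⟨d, hdU, hd2, hd3⟩ := exists_of_pos_of_ae hδne (h2''.and hc3)
    haveI := ae_neBot_muK X β mβ
    obtain ⟨w, hw1, hw2⟩ := (h1'.and hd2).exists
    rw [pA_appV, pB_appV] at hw2
    set Y := pA w * c a + pB w with hY
    have h4 : pA v * ((pA d * Y + pB d) - Y) = 0 := by linear_combination hw2 - hw1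
    have h5 : pA d * Y + pB d = Y := by
      have := (mul_eq_zero.1 h4).resolve_left hPv
      linarith [this]
    have e2 : (pA d - 1) * (Y - c b) = 0 := by linear_combination h5 - hd3
    have e3 : Y = c b := by
      rcases mul_eq_zero.1 e2 with h | h
      · exact absurd (by linarith [h] : pA d = 1) hdU
      · linarith [h]
    rw [← e3]
    exact hw1

lemma edge_rel (c : S → ℝ)
    (hE : ∀ j : S, X.P j {ω | X.Ai j ω * c j + X.Bi j ω = c j} = 1)
    (hlt : ∃ i, X.P i {ω | X.Ai i ω = 1} < 1)
    {a b : S} (hp : X.p a b ≠ 0) :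
    ∀ᵐ z ∂ X.K a b, z.1 * c b + z.2 = c a := by
  haveI := X.Kprob a b
  have h0 : (fun k => if k = 0 then a else b) 0 = a := by simp
  have h1 : (fun k : ℕ => if k = 0 then a else b) 1 = b := by simp
  have hpos : posP X (fun k => if k = 0 then a else b) 1 := by
    intro k hk
    have : k = 0 := by omega
    subst this
    rw [h0, h1]
    exact hp
  have hae := path_rel X c hE hlt h0 h1 hpos
  have hfam : (fun k : Fin 1 => X.K ((fun k : ℕ => if k = 0 then a else b) (k : ℕ))
      ((fun k : ℕ => if k = 0 then a else b) ((k : ℕ) + 1))) = fun _ : Fin 1 => X.K a b := by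
    funext k
    have hk : (k : ℕ) = 0 := by omega
    rw [hk]
    show X.K ((fun k : ℕ => if k = 0 then a else b) 0)
      ((fun k : ℕ => if k = 0 then a else b) 1) = X.K a b
    rw [h0, h1]
  have hmp : MeasurePreserving (MeasurableEquiv.funUnique (Fin 1) (ℝ × ℝ))
      (muK X (fun k => if k = 0 then a else b) 1) (X.K a b) := by
    rw [show muK X (fun k => if k = 0 then a else b) 1
      = Measure.pi (fun k : Fin 1 => X.K ((fun k : ℕ => if k = 0 then a else b) (k : ℕ))
        ((fun k : ℕ => if k = 0 then a else b) ((k : ℕ) + 1))) from rfl, hfam]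
    exact measurePreserving_funUnique (X.K a b) (Fin 1)
  have hQ : MeasurableSet {z : ℝ × ℝ | z.1 * c b + z.2 = c a} :=
    ((measurable_fst.mul_const (c b)).add measurable_snd) (measurableSet_singleton (c a))
  rw [← hmp.map_eq, ae_map_iff hmp.measurable.aemeasurable hQ]
  filter_upwards [hae] with v hv
  show ((MeasurableEquiv.funUnique (Fin 1) (ℝ × ℝ)) v).1 * c b
    + ((MeasurableEquiv.funUnique (Fin 1) (ℝ × ℝ)) v).2 = c a
  have hvd : (MeasurableEquiv.funUnique (Fin 1) (ℝ × ℝ)) v = v 0 := rfl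
  rw [hvd, ← pA_one, ← pB_one]
  exact hv

end PathRel

end Perpetuities

namespace Perpetuities

open MMSetting Set Filter MeasureTheory

section Final

variable {S : Type*} [MeasurableSpace S] [MeasurableSingletonClass S] [Countable S]
variable {Ω : Type*} [MeasurableSpace Ω] (X : MMSetting S Ω)

lemma pext_lt (i : S) {n : ℕ} (f : Fin (n + 1) → S) {k : ℕ} (h : k < n + 1) :
    pext i f k = f ⟨k, h⟩ := dif_pos h

lemma pext_zero (i : S) {n : ℕ} (f : Fin (n + 1) → S) : pext i f 0 = f 0 := by
  rw [pext_lt i f (Nat.succ_pos n)]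
  congr 1

lemma step_rel (c : S → ℝ)
    (hE : ∀ j : S, X.P j {ω | X.Ai j ω * c j + X.Bi j ω = c j} = 1)
    (hlt : ∃ i, X.P i {ω | X.Ai i ω = 1} < 1) (i : S) (k : ℕ) :
    X.P i {ω | ¬ (X.A k ω * c (X.M (k + 1) ω) + X.B k ω = c (X.M k ω))} = 0 := by
  haveI := X.prob i
  have hM0 : X.P i {ω | X.M 0 ω = i}ᶜ = 0 := by
    rw [prob_compl_eq_one_sub
      (show MeasurableSet {ω | X.M 0 ω = i} from X.measM 0 (measurableSet_singleton i)),
      X.start i]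
    simp
  have hsub : {ω | ¬ (X.A k ω * c (X.M (k + 1) ω) + X.B k ω = c (X.M k ω))} ⊆
      {ω | X.M 0 ω = i}ᶜ ∪ ⋃ f : {f : Fin (k + 2) → S // f 0 = i},
        (cylE X (pext i f.1) (k + 1) ∩
          {ω | ¬ ((X.A k ω) * c (pext i f.1 (k + 1)) + X.B k ω = c (pext i f.1 k))}) := by
    intro ω hω
    by_cases h0 : X.M 0 ω = i
    · right
      refine mem_iUnion.2 ⟨⟨fun l => X.M (l : ℕ) ω, h0⟩, ?_, ?_⟩
      · rw [mem_cylE]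
        intro l hl
        rw [pext_lt i _ (by omega)]
      · show ¬ _
        rw [pext_lt i _ (by omega : k + 1 < k + 2), pext_lt i _ (by omega : k < k + 2)]
        exact hω
    · exact Or.inl h0
  refine le_antisymm (le_trans (measure_mono hsub)
    (le_trans (measure_union_le _ _) ?_)) zero_le
  rw [hM0, zero_add]
  refine le_of_eq (measure_iUnion_null fun f => ?_)
  set g : ℕ → S := pext i f.1 with hg
  have hg0 : g 0 = i := by rw [hg, pext_zero, f.2]
  have hEfm : ∀ l : ℕ, MeasurableSet (if l = k
      then {z : ℝ × ℝ | ¬ (z.1 * c (g (k + 1)) + z.2 = c (g k))} else univ) := by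
    intro l
    split
    · exact (((measurable_fst.mul_const (c (g (k + 1)))).add measurable_snd)
        (measurableSet_singleton (c (g k)))).compl
    · exact MeasurableSet.univ
  have hmod := X.modulated i (k + 1) g
    (fun l => if l = k then {z : ℝ × ℝ | ¬ (z.1 * c (g (k + 1)) + z.2 = c (g k))} else univ)
    hg0 hEfm
  have hset : (⋂ l ∈ Finset.range (k + 1), {ω | (X.A l ω, X.B l ω) ∈
      (if l = k then {z : ℝ × ℝ | ¬ (z.1 * c (g (k + 1)) + z.2 = c (g k))} else univ)}) =
      {ω | ¬ (X.A k ω * c (g (k + 1)) + X.B k ω = c (g k))} := by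
    ext ω
    simp only [Set.mem_iInter, Finset.mem_range, mem_setOf_eq]
    constructor
    · intro h
      have := h k (by omega)
      rw [if_pos rfl] at this
      exact this
    · intro h l hl
      by_cases hlk : l = k
      · subst hlk
        rw [if_pos rfl]
        exact h
      · rw [if_neg hlk]
        exact mem_univ _
  rcases eq_or_ne (X.P i (cylE X g (k + 1))) 0 with h | h
  · refine le_antisymm (le_trans (measure_mono inter_subset_left) ?_) zero_le
    rw [show cylE X (pext i f.1) (k + 1) = cylE X g (k + 1) from rfl, h]
  · have hppos := (cyl_pos_iff X hg0).1 h
    have hK := edge_rel X c hE hlt (hppos k (by omega))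
    have hK0 : X.K (g k) (g (k + 1)) {z : ℝ × ℝ | ¬ (z.1 * c (g (k + 1)) + z.2 = c (g k))} = 0 :=
      ae_iff.1 hK
    have hprod : (∏ l ∈ Finset.range (k + 1), X.K (g l) (g (l + 1))
        (if l = k then {z : ℝ × ℝ | ¬ (z.1 * c (g (k + 1)) + z.2 = c (g k))} else univ)) = 0 := by
      refine Finset.prod_eq_zero (Finset.mem_range.2 (by omega : k < k + 1)) ?_
      rw [if_pos rfl]
      exact hK0
    rw [show cylE X (pext i f.1) (k + 1) ∩
        {ω | ¬ (X.A k ω * c (pext i f.1 (k + 1)) + X.B k ω = c (pext i f.1 k))}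
        = (⋂ l ∈ Finset.range (k + 2), {ω | X.M l ω = g l}) ∩
          (⋂ l ∈ Finset.range (k + 1), {ω | (X.A l ω, X.B l ω) ∈
            (if l = k then {z : ℝ × ℝ | ¬ (z.1 * c (g (k + 1)) + z.2 = c (g k))} else univ)})
      from by rw [hset]; rfl]
    rw [hmod, hprod, mul_zero]

lemma ae_Pπ {Q : Ω → Prop} (hQ : MeasurableSet {ω | ¬ Q ω})
    (h : ∀ i : S, X.P i {ω | ¬ Q ω} = 0) : ∀ᵐ ω ∂ X.Pπ, Q ω := by
  rw [ae_iff]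
  show X.Pπ {ω | ¬ Q ω} = 0
  rw [MMSetting.Pπ, Measure.sum_apply _ hQ]
  have : ∀ i : S, (X.π i • X.P i) {ω | ¬ Q ω} = 0 := fun i => by
    rw [Measure.smul_apply, h i, smul_zero]
  rw [tsum_congr this, tsum_zero]

lemma Pprod_succ (n : ℕ) (ω : Ω) : X.Pprod (n + 1) ω = X.Pprod n ω * X.A n ω :=
  Finset.prod_range_succ _ _

lemma Ssum_succ (n : ℕ) (ω : Ω) : X.Ssum (n + 1) ω = X.Ssum n ω + X.Pprod n ω * X.B n ω :=
  Finset.sum_range_succ _ _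

lemma Pprod_zero (ω : Ω) : X.Pprod 0 ω = 1 := Finset.prod_range_zero _

lemma Ssum_zero (ω : Ω) : X.Ssum 0 ω = 0 := Finset.sum_range_zero _

lemma all_steps (c : S → ℝ)
    (hE : ∀ j : S, X.P j {ω | X.Ai j ω * c j + X.Bi j ω = c j} = 1)
    (hlt : ∃ i, X.P i {ω | X.Ai i ω = 1} < 1) (i : S) (n : ℕ) :
    ∀ᵐ ω ∂ X.P i, X.Pprod n ω * c (X.M n ω) + X.Ssum n ω = c (X.M 0 ω) := by
  have hsteps : ∀ᵐ ω ∂ X.P i, ∀ k,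
      X.A k ω * c (X.M (k + 1) ω) + X.B k ω = c (X.M k ω) :=
    ae_all_iff.2 fun k => ae_iff.2 (step_rel X c hE hlt i k)
  filter_upwards [hsteps] with ω hω
  induction n with
  | zero => rw [Pprod_zero, Ssum_zero]; ring
  | succ n ih =>
    rw [Pprod_succ, Ssum_succ]
    calc X.Pprod n ω * X.A n ω * c (X.M (n + 1) ω) + (X.Ssum n ω + X.Pprod n ω * X.B n ω)
        = X.Pprod n ω * (X.A n ω * c (X.M (n + 1) ω) + X.B n ω) + X.Ssum n ω := by ring
      _ = X.Pprod n ω * c (X.M n ω) + X.Ssum n ω := by rw [hω n]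
      _ = c (X.M 0 ω) := ih

lemma unique_c (c c' : S → ℝ)
    (hE : ∀ j : S, X.P j {ω | X.Ai j ω * c j + X.Bi j ω = c j} = 1)
    (hE' : ∀ j : S, X.P j {ω | X.Ai j ω * c' j + X.Bi j ω = c' j} = 1)
    (hlt : ∃ i, X.P i {ω | X.Ai i ω = 1} < 1) : c' = c := by
  funext j
  obtain ⟨n, γ, h0, hn, hpos, hne⟩ := exists_nondeg_cycle X hlt j
  have f1 := cycle_fix X c hE j n γ h0 hn hpos
  have f2 := cycle_fix X c' hE' j n γ h0 hn hpos
  obtain ⟨v, hv1, hv2, hv3⟩ := exists_of_pos_of_ae hne (f1.and f2)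
  by_contra hcc
  apply hv1
  have hd : c j - c' j ≠ 0 := sub_ne_zero.2 fun h => hcc h.symm
  have hmul : pA v * (c j - c' j) = 1 * (c j - c' j) := by linarith [hv2, hv3]
  exact mul_right_cancel₀ hd hmul

end Final

end Perpetuities

namespace Perpetuities

open MMSetting

/-- **Proposition 4.5** (consequences of degeneracy, non-lattice case). In the
Markov-modulated setting with `|S| > 1`: suppose condition (E) holds, i.e. there is a
family `(c_i)_{i ∈ S}` with `P_i(A_1^i c_i + B_1^i = c_i) = 1` for all `i`, and suppose
`P_i(A_1^i = 1) < 1` for some (equivalently, all) `i ∈ S`. Then the family `(c_i)` in (E)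
is unique, the degeneracy condition (D) `P_π(A_1 c_{M_1} + B_1 = c_{M_0}) = 1` holds, and
more generally `Π_n c_{M_n} + ∑_{k=1}^n Π_{k-1} B_k = c_{M_0}` a.s. for every `n ≥ 1`. -/
theorem degeneracy_consequences
    {S : Type*} [MeasurableSpace S] [MeasurableSingletonClass S] [Countable S] [Nontrivial S]
    {Ω : Type*} [MeasurableSpace Ω] (X : MMSetting S Ω)
    (c : S → ℝ) (hE : ∀ i : S, X.P i {ω | X.Ai i ω * c i + X.Bi i ω = c i} = 1)
    (hlt : ∃ i : S, X.P i {ω | X.Ai i ω = 1} < 1) :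
    (∀ c' : S → ℝ, (∀ i : S, X.P i {ω | X.Ai i ω * c' i + X.Bi i ω = c' i} = 1) → c' = c) ∧
      X.DegenD c ∧
      ∀ n : ℕ, 1 ≤ n →
        ∀ᵐ ω ∂ X.Pπ, X.Pprod n ω * c (X.M n ω) + X.Ssum n ω = c (X.M 0 ω) := by
  have hcM : ∀ k : ℕ, Measurable fun ω => c (X.M k ω) :=
    fun k => (measurable_of_countable c).comp (X.measM k)
  refine ⟨fun c' hE' => unique_c X c c' hE hE' hlt, ?_, ?_⟩
  · show ∀ᵐ ω ∂ X.Pπ, X.A 0 ω * c (X.M 1 ω) + X.B 0 ω = c (X.M 0 ω)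
    refine ae_Pπ X ?_ fun i => step_rel X c hE hlt i 0
    exact (measurableSet_eq_fun (((X.measA 0).mul (hcM 1)).add (X.measB 0)) (hcM 0)).compl
  · intro n _
    refine ae_Pπ X ?_ fun i => ae_iff.1 (all_steps X c hE hlt i n)
    have hPm : Measurable fun ω => X.Pprod n ω :=
      Finset.measurable_prod _ fun k _ => X.measA k
    have hSm : Measurable fun ω => X.Ssum n ω := by
      refine Finset.measurable_sum _ fun k _ => ?_
      exact (Finset.measurable_prod _ fun l _ => X.measA l).mul (X.measB k)
    exact (measurableSet_eq_fun ((hPm.mul (hcM n)).add hSm) (hcM 0)).compl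

end Perpetuities
end
end

section
/- In the Markov-modulated setting with |S|>1, assume condition (E): for every i∈S there exists c_i∈R with P_i(A_1^i c_i+B_1^i=c_i)=1, and assume P_i(A_1^i=1)=1 for all i∈S. Then: (a) there exist functions f_A:S²→R∖{0} and f_B:S²→R such that (A_1,B_1)=(f_A(M_0,M_1),f_B(M_0,M_1)) a.s.; (b) there exists a family (Φ_{ij})_{i,j∈S} of nonconstant affine linear functions on R with Φ_{ij}=Φ_{ji}^{−1} for all i,j∈S (so Φ_{ii}=id), such that P_i(Ψ_1∘…∘Ψ_n=Φ_{ij}|M_n=j)=1 whenever P_i(M_n=j)>0, and in particular Ψ_n=Φ_{M_{n-1}M_n} a.s. for all n≥1; (c) for each (j,c)∈S×R there exists a family (c_i)_{i∈S} with c_j=Φ_{jj}(c)=c such that P_π(A_1c_{M_1}+B_1=c_{M_0})=1 and Π_n c_{M_n}+∑_{k=1}^n Π_{k-1}B_k=c_{M_0} a.s. for all n∈N. -/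
open MeasureTheory ProbabilityTheory Filter
open scoped ENNReal NNReal Topology

noncomputable section

namespace Perpetuities

open MMSetting

section Infrastructure
open Set

/-- Composition of affine maps represented as pairs `(slope, intercept)`,
`comp2 x y` is "apply `y` first, then... " actually `x` outermost. -/
def comp2 (x y : ℝ × ℝ) : ℝ × ℝ := (x.1 * y.1, x.2 + x.1 * y.2)

@[simp] lemma comp2_one_left (y : ℝ × ℝ) : comp2 (1, 0) y = y := by
  simp [comp2]

@[simp] lemma comp2_one_right (x : ℝ × ℝ) : comp2 x (1, 0) = x := by
  simp [comp2]

lemma comp2_assoc (x y z : ℝ × ℝ) : comp2 (comp2 x y) z = comp2 x (comp2 y z) := by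
  simp only [comp2, Prod.ext_iff]; constructor <;> ring

lemma comp2_fst (x y : ℝ × ℝ) : (comp2 x y).1 = x.1 * y.1 := rfl

lemma comp2_snd (x y : ℝ × ℝ) : (comp2 x y).2 = x.2 + x.1 * y.2 := rfl

lemma measurable_comp2 : Measurable fun q : (ℝ × ℝ) × (ℝ × ℝ) => comp2 q.1 q.2 := by
  unfold comp2; fun_prop

lemma comp2_eq_iff_right {x c : ℝ × ℝ} (hx : x.1 ≠ 0) (z : ℝ × ℝ) :
    comp2 x z = c ↔ z = (c.1 / x.1, (c.2 - x.2) / x.1) := by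
  simp only [comp2, Prod.ext_iff]
  constructor
  · rintro ⟨h1, h2⟩
    constructor
    · field_simp [← h1]; rw [← h1]; ring
    · field_simp; linarith
  · rintro ⟨h1, h2⟩
    rw [h1, h2]
    constructor <;> field_simp <;> ring

lemma comp2_eq_iff_left {z c : ℝ × ℝ} (hz : z.1 ≠ 0) (x : ℝ × ℝ) :
    comp2 x z = c ↔ x = (c.1 / z.1, c.2 - c.1 / z.1 * z.2) := by
  simp only [comp2, Prod.ext_iff]
  constructor
  · rintro ⟨h1, h2⟩
    have hx1 : x.1 = c.1 / z.1 := by field_simp [← h1]; exact h1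
    exact ⟨hx1, by rw [← hx1]; linarith⟩
  · rintro ⟨h1, h2⟩
    rw [h1, h2]
    refine ⟨by field_simp, ?_⟩
    field_simp
    try ring

lemma comp2_cancel {x y z : ℝ × ℝ} (hz : z.1 ≠ 0) (hx : comp2 x z = (1, 0))
    (hy : comp2 y z = (1, 0)) : x = y := by
  rw [comp2_eq_iff_left hz] at hx hy
  rw [hx, hy]

/-- Composition of the first `n` affine maps of a sequence. -/
def compN : ℕ → (ℕ → ℝ × ℝ) → ℝ × ℝ
  | 0, _ => (1, 0)
  | n + 1, w => comp2 (w 0) (compN n fun k => w (k + 1))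

@[simp] lemma compN_zero (w : ℕ → ℝ × ℝ) : compN 0 w = (1, 0) := rfl

lemma compN_succ (n : ℕ) (w : ℕ → ℝ × ℝ) :
    compN (n + 1) w = comp2 (w 0) (compN n fun k => w (k + 1)) := rfl

lemma compN_congr : ∀ (n : ℕ) (w w' : ℕ → ℝ × ℝ), (∀ k < n, w k = w' k) →
    compN n w = compN n w'
  | 0, _, _, _ => rfl
  | n + 1, w, w', h => by
    rw [compN_succ, compN_succ, h 0 (Nat.succ_pos n),
      compN_congr n (fun k => w (k + 1)) (fun k => w' (k + 1))
        (fun k hk => h (k + 1) (by omega))]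

lemma compN_add : ∀ (m n : ℕ) (w : ℕ → ℝ × ℝ),
    compN (m + n) w = comp2 (compN m w) (compN n fun k => w (m + k))
  | 0, n, w => by
    simp only [Nat.zero_add, compN_zero, comp2_one_left]
    try exact compN_congr n _ _ fun k _ => by simp
  | m + 1, n, w => by
    have h1 : m + 1 + n = (m + n) + 1 := by omega
    rw [h1, compN_succ, compN_add m n (fun k => w (k + 1)), ← comp2_assoc, ← compN_succ]
    congr 1
    exact compN_congr n _ _ fun k _ => congrArg w (by omega)

lemma compN_fst : ∀ (n : ℕ) (w : ℕ → ℝ × ℝ),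
    (compN n w).1 = ∏ k ∈ Finset.range n, (w k).1
  | 0, w => by simp
  | n + 1, w => by
    rw [compN_succ, comp2_fst, compN_fst n, Finset.prod_range_succ']
    ring

lemma compN_pair : ∀ (n : ℕ) (f g : ℕ → ℝ),
    compN n (fun k => (f k, g k)) =
      (∏ k ∈ Finset.range n, f k,
        ∑ k ∈ Finset.range n, (∏ l ∈ Finset.range k, f l) * g k)
  | 0, f, g => by simp
  | n + 1, f, g => by
    rw [compN_succ, compN_pair n (fun k => f (k + 1)) (fun k => g (k + 1))]
    have hp : ∏ k ∈ Finset.range (n + 1), f k = f 0 * ∏ k ∈ Finset.range n, f (k + 1) := by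
      rw [Finset.prod_range_succ']; ring
    have hs : ∑ k ∈ Finset.range (n + 1), (∏ l ∈ Finset.range k, f l) * g k
        = g 0 + f 0 * ∑ k ∈ Finset.range n, (∏ l ∈ Finset.range k, f (l + 1)) * g (k + 1) := by
      rw [Finset.sum_range_succ']
      simp only [Finset.prod_range_zero, one_mul]
      rw [Finset.mul_sum]
      rw [show (∑ k ∈ Finset.range n, (∏ l ∈ Finset.range (k + 1), f l) * g (k + 1))
          = ∑ k ∈ Finset.range n, f 0 * ((∏ l ∈ Finset.range k, f (l + 1)) * g (k + 1)) from
        Finset.sum_congr rfl fun k _ => by rw [Finset.prod_range_succ']; ring]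
      ring
    rw [hp, hs]
    simp only [comp2, Prod.mk.injEq]
    all_goals constructor <;> ring

lemma measurable_compN : ∀ n : ℕ, Measurable fun w : ℕ → ℝ × ℝ => compN n w
  | 0 => measurable_const
  | n + 1 => by
    have h1 : Measurable fun w : ℕ → ℝ × ℝ => w 0 := measurable_pi_apply 0
    have h2 : Measurable fun w : ℕ → ℝ × ℝ => (fun k => w (k + 1)) :=
      measurable_pi_lambda _ fun k => measurable_pi_apply (k + 1)
    exact measurable_comp2.comp (h1.prodMk ((measurable_compN n).comp h2))

/-- Extension of a finite vector to a sequence (junk value `(1,0)` beyond `n`). -/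
def extN {n : ℕ} (y : Fin n → ℝ × ℝ) : ℕ → ℝ × ℝ :=
  fun k => if h : k < n then y ⟨k, h⟩ else (1, 0)

lemma measurable_extN {n : ℕ} : Measurable (extN (n := n)) := by
  refine measurable_pi_lambda _ fun k => ?_
  by_cases h : k < n
  · simpa [extN, h] using measurable_pi_apply (⟨k, h⟩ : Fin n)
  · simpa [extN, h] using measurable_const





lemma eq_dirac_of_singleton {Ω : Type*} [MeasurableSpace Ω] [MeasurableSingletonClass Ω]
    (μ : Measure Ω) [IsProbabilityMeasure μ] {x : Ω} (h : μ {x} = 1) :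
    μ = Measure.dirac x := by
  ext s hs
  rw [Measure.dirac_apply' _ hs]
  by_cases hx : x ∈ s
  · have h1 : (1 : ℝ≥0∞) ≤ μ s := h ▸ measure_mono (singleton_subset_iff.2 hx)
    have h2 : μ s ≤ 1 := prob_le_one
    simp [le_antisymm h2 h1, indicator_of_mem hx]
  · have h1 : μ s ≤ μ {x}ᶜ := measure_mono fun y hy => by
      simp only [mem_compl_iff, mem_singleton_iff]
      rintro rfl; exact hx hy
    have h2 : μ {x}ᶜ = 0 := by
      rw [measure_compl (measurableSet_singleton x) (measure_ne_top μ _), h, measure_univ]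
      simp
    simp [le_antisymm (h1.trans h2.le) zero_le, indicator_of_notMem hx]

lemma dirac_point_eq {Ω : Type*} [MeasurableSpace Ω] [MeasurableSingletonClass Ω]
    {x y : Ω} (h : (Measure.dirac x : Measure Ω) = Measure.dirac y) : x = y := by
  by_contra hxy
  have h1 : (Measure.dirac x : Measure Ω) {x} = 1 := by
    rw [Measure.dirac_apply' _ (measurableSet_singleton x)]
    simp
  have h2 : (Measure.dirac y : Measure Ω) {x} = 0 := by
    rw [Measure.dirac_apply' _ (measurableSet_singleton x)]
    simp [Ne.symm hxy]
  rw [h, h2] at h1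
  exact zero_ne_one h1

lemma pi_dirac {n : ℕ} {α : Fin n → Type*} [∀ k, MeasurableSpace (α k)]
    [∀ k, MeasurableSingletonClass (α k)] (x : ∀ k, α k) :
    Measure.pi (fun k => Measure.dirac (x k)) = Measure.dirac x := by
  refine (Measure.pi_eq fun s hs => ?_)
  rw [Measure.dirac_apply' _ (MeasurableSet.univ_pi hs)]
  by_cases hx : ∀ k, x k ∈ s k
  · have : x ∈ univ.pi s := fun k _ => hx k
    rw [indicator_of_mem this]
    rw [Finset.prod_congr rfl fun k _ => by
      rw [Measure.dirac_apply' _ (hs k), indicator_of_mem (hx k)]]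
    simp
  · push_neg at hx
    obtain ⟨k0, hk0⟩ := hx
    have : x ∉ univ.pi s := fun hmem => hk0 (hmem k0 (mem_univ k0))
    rw [indicator_of_notMem this]
    refine (Finset.prod_eq_zero (Finset.mem_univ k0) ?_).symm
    rw [Measure.dirac_apply' _ (hs k0), indicator_of_notMem hk0]

/-- Core extraction lemma: if the product of `n` probability measures on `ℝ²` is
concentrated on the set of tuples of affine maps whose composition is a fixed
nondegenerate affine map `c`, then each factor is a Dirac measure at a point with
nonzero slope, and the composition of the points is `c`. -/
lemma pi_comp_dirac : ∀ (n : ℕ) (μ : Fin n → Measure (ℝ × ℝ)),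
    (∀ k, IsProbabilityMeasure (μ k)) → ∀ c : ℝ × ℝ, c.1 ≠ 0 →
    Measure.pi μ {y | compN n (extN y) = c} = 1 →
    ∃ x : Fin n → ℝ × ℝ, (∀ k, (x k).1 ≠ 0 ∧ μ k = Measure.dirac (x k)) ∧
      compN n (extN x) = c := by
  intro n
  induction n with
  | zero =>
    intro μ hμ c hc h
    have hne : {y : Fin 0 → ℝ × ℝ | compN 0 (extN y) = c}.Nonempty := by
      by_contra hne
      rw [not_nonempty_iff_eq_empty] at hne
      rw [hne] at h
      simp at h
    obtain ⟨y, hy⟩ := hne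
    exact ⟨y, fun k => k.elim0, hy⟩
  | succ n IH =>
    intro μ hμ c hc h
    haveI := hμ
    set μ0 := μ 0 with hμ0
    set ν := Measure.pi (fun j : Fin n => μ ((0 : Fin (n + 1)).succAbove j)) with hν
    haveI : IsProbabilityMeasure ν := by
      constructor
      rw [hν, Measure.pi_univ]
      simp [measure_univ]
    -- the set in the product space
    set E : Set ((ℝ × ℝ) × (Fin n → ℝ × ℝ)) :=
      {q | comp2 q.1 (compN n (extN q.2)) = c} with hE
    have hmeasE : MeasurableSet E := by
      have : Measurable fun q : (ℝ × ℝ) × (Fin n → ℝ × ℝ) =>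
          comp2 q.1 (compN n (extN q.2)) :=
        measurable_comp2.comp (measurable_fst.prodMk
          (((measurable_compN n).comp measurable_extN).comp measurable_snd))
      exact this (measurableSet_singleton c)
    -- transfer the hypothesis through piFinSuccAbove
    have hkey : ∀ y : Fin (n + 1) → ℝ × ℝ,
        compN (n + 1) (extN y) = comp2 (y 0) (compN n (extN fun j : Fin n =>
          y ((0 : Fin (n + 1)).succAbove j))) := by
      intro y
      rw [compN_succ]
      congr 1
      · refine compN_congr n _ _ fun k hk => ?_
        simp only [extN, hk, Nat.add_lt_add_iff_right, dif_pos]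
        refine congrArg y (Fin.ext ?_)
        simp [Fin.zero_succAbove]
    have hEeq : (MeasurableEquiv.piFinSuccAbove (fun _ : Fin (n + 1) => ℝ × ℝ) 0) ⁻¹' E
        = {y | compN (n + 1) (extN y) = c} := by
      ext y
      have hy : (MeasurableEquiv.piFinSuccAbove (fun _ : Fin (n + 1) => ℝ × ℝ) 0) y
          = (y 0, fun j => y ((0 : Fin (n + 1)).succAbove j)) := rfl
      simp only [mem_preimage, hy, mem_setOf_eq, hE]
      rw [hkey y]
    have hprod : (μ0.prod ν) E = 1 := by
      have hmp := measurePreserving_piFinSuccAbove μ 0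
      rw [← hmp.measure_preimage hmeasE.nullMeasurableSet, hEeq, h]
    -- Fubini
    have hfmeas : Measurable fun x : ℝ × ℝ => ν (Prod.mk x ⁻¹' E) :=
      measurable_measure_prodMk_left hmeasE
    have hfle : ∀ x, ν (Prod.mk x ⁻¹' E) ≤ 1 := fun x => prob_le_one
    have hint : ∫⁻ x, ν (Prod.mk x ⁻¹' E) ∂μ0 = 1 := by
      rw [← Measure.prod_apply hmeasE]; exact hprod
    have hae : ∀ᵐ x ∂μ0, ν (Prod.mk x ⁻¹' E) = 1 := by
      have hsub : ∫⁻ x, (1 - ν (Prod.mk x ⁻¹' E)) ∂μ0 = 0 := by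
        rw [lintegral_sub hfmeas (by rw [hint]; exact ENNReal.one_ne_top)
          (Filter.Eventually.of_forall hfle), hint, lintegral_one, measure_univ, tsub_self]
      have := (lintegral_eq_zero_iff (measurable_const.sub hfmeas)).1 hsub
      filter_upwards [this] with x hx
      have : (1 : ℝ≥0∞) ≤ ν (Prod.mk x ⁻¹' E) := by
        rwa [Pi.zero_apply, Pi.sub_apply, tsub_eq_zero_iff_le] at hx
      exact le_antisymm (hfle x) this
    haveI : (ae μ0).NeBot := ae_neBot.2 (IsProbabilityMeasure.ne_zero μ0)
    obtain ⟨x0, hx0⟩ := hae.exists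
    -- x0 has nonzero slope
    have hx0ne : x0.1 ≠ 0 := by
      intro h0
      have : Prod.mk x0 ⁻¹' E = ∅ := by
        ext y
        simp only [mem_preimage, hE, mem_setOf_eq, mem_empty_iff_false, iff_false]
        intro hy
        apply hc
        rw [← hy, comp2_fst, h0, zero_mul]
      rw [this] at hx0
      simp at hx0
    set c' : ℝ × ℝ := (c.1 / x0.1, (c.2 - x0.2) / x0.1) with hc'
    have hc'ne : c'.1 ≠ 0 := div_ne_zero hc hx0ne
    have hsetEq : Prod.mk x0 ⁻¹' E = {y : Fin n → ℝ × ℝ | compN n (extN y) = c'} := by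
      ext y
      simp only [mem_preimage, hE, mem_setOf_eq]
      exact comp2_eq_iff_right hx0ne _
    rw [hsetEq] at hx0
    obtain ⟨xt, hxt, hxtcomp⟩ := IH _ (fun j => hμ _) c' hc'ne (by rw [← hν]; exact hx0)
    -- ν is dirac at xt
    have hνdirac : ν = Measure.dirac xt := by
      rw [hν]
      rw [show (fun j : Fin n => μ ((0 : Fin (n + 1)).succAbove j))
          = fun j => Measure.dirac (xt j) from funext fun j => (hxt j).2]
      exact pi_dirac xt
    -- recover μ0
    have hμ0dirac : μ0 {x | comp2 x c' = c} = 1 := by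
      have : (μ0.prod ν) E = μ0 ((fun x => (x, xt)) ⁻¹' E) := by
        rw [hνdirac, Measure.prod_dirac, Measure.map_apply
          (show Measurable fun x : ℝ × ℝ => (x, xt) from
            measurable_id.prodMk measurable_const) hmeasE]
      rw [this] at hprod
      have : (fun x : ℝ × ℝ => (x, xt)) ⁻¹' E = {x | comp2 x c' = c} := by
        ext x
        simp only [mem_preimage, hE, mem_setOf_eq, hxtcomp]
      rwa [this] at hprod
    set x0' : ℝ × ℝ := (c.1 / c'.1, c.2 - c.1 / c'.1 * c'.2) with hx0'
    have hsingle : {x : ℝ × ℝ | comp2 x c' = c} = {x0'} := by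
      ext x
      simp only [mem_setOf_eq, mem_singleton_iff]
      exact comp2_eq_iff_left hc'ne x
    rw [hsingle] at hμ0dirac
    have hμ0d : μ0 = Measure.dirac x0' := eq_dirac_of_singleton μ0 hμ0dirac
    have hx0'ne : x0'.1 ≠ 0 := div_ne_zero hc hc'ne
    have hx0'comp : comp2 x0' c' = c := by
      have : x0' ∈ ({x : ℝ × ℝ | comp2 x c' = c} : Set (ℝ × ℝ)) := by
        rw [hsingle]; exact rfl
      exact this
    -- assemble
    refine ⟨Fin.cons x0' xt, ?_, ?_⟩
    · intro k
      refine Fin.cases ?_ (fun j => ?_) k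
      · rw [Fin.cons_zero]
        exact ⟨hx0'ne, hμ0d⟩
      · rw [Fin.cons_succ]
        have := hxt j
        rw [Fin.zero_succAbove] at this
        exact this
    · rw [hkey (Fin.cons x0' xt)]
      have h1 : (Fin.cons x0' xt : Fin (n + 1) → ℝ × ℝ) 0 = x0' := rfl
      have h2 : (fun j : Fin n => (Fin.cons x0' xt : Fin (n + 1) → ℝ × ℝ)
          ((0 : Fin (n + 1)).succAbove j)) = xt := by
        funext j
        rw [Fin.zero_succAbove, Fin.cons_succ]
      rw [h1, h2, hxtcomp]
      exact hx0'comp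



section Paths

variable {S : Type*} (p : S → S → ℝ≥0∞) (g : S → S → ℝ × ℝ)

/-- Composition of the affine maps attached by `g` to the edges of the initial
segment of length `n` of the path `v`. -/
def pathComp (v : ℕ → S) (n : ℕ) : ℝ × ℝ := compN n fun k => g (v k) (v (k + 1))

lemma pathComp_congr {v v' : ℕ → S} {n : ℕ} (h : ∀ k ≤ n, v k = v' k) :
    pathComp g v n = pathComp g v' n :=
  compN_congr n _ _ fun k hk => by rw [h k (le_of_lt hk), h (k + 1) (by omega)]

lemma pathComp_split (v : ℕ → S) (n m : ℕ) :
    pathComp g v (n + m) = comp2 (pathComp g v n) (pathComp g (fun k => v (n + k)) m) := by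
  unfold pathComp
  rw [compN_add]
  rfl

lemma pathComp_fst_ne (hgne : ∀ i j, (g i j).1 ≠ 0) (v : ℕ → S) (n : ℕ) :
    (pathComp g v n).1 ≠ 0 := by
  unfold pathComp
  rw [compN_fst]
  exact Finset.prod_ne_zero_iff.2 fun k _ => hgne _ _

lemma concat_path (v : ℕ → S) (n : ℕ) (w : ℕ → S) (m : ℕ) (hlink : v n = w 0)
    (hv : ∀ k < n, 0 < p (v k) (v (k + 1))) (hw : ∀ k < m, 0 < p (w k) (w (k + 1))) :
    ∃ u : ℕ → S, u 0 = v 0 ∧ u (n + m) = w m ∧ (∀ k < n + m, 0 < p (u k) (u (k + 1))) ∧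
      pathComp g u (n + m) = comp2 (pathComp g v n) (pathComp g w m) := by
  classical
  set u : ℕ → S := fun k => if h : k < n then v k else w (k - n) with hu
  have hu1 : ∀ k ≤ n, u k = v k := by
    intro k hk
    by_cases h : k < n
    · simp [hu, h]
    · have hkn : k = n := by omega
      simp [hu, h, hkn, hlink.symm]
  have hu2 : ∀ k, u (n + k) = w k := by
    intro k
    have h : ¬(n + k < n) := by omega
    simp [hu, h]
  refine ⟨u, hu1 0 (Nat.zero_le n), hu2 m, ?_, ?_⟩
  · intro k hk
    by_cases h : k < n
    · rw [hu1 k (le_of_lt h), hu1 (k + 1) (by omega)]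
      exact hv k h
    · have e1 : u k = w (k - n) := by
        have h1 := hu2 (k - n)
        rwa [show n + (k - n) = k from by omega] at h1
      have e2 : u (k + 1) = w (k - n + 1) := by
        have h1 := hu2 (k - n + 1)
        rwa [show n + (k - n + 1) = k + 1 from by omega] at h1
      rw [e1, e2]
      exact hw (k - n) (by omega)
  · rw [pathComp_split]
    congr 1
    · exact pathComp_congr g hu1
    · exact pathComp_congr g fun k hk => hu2 k

/-- Every positive-probability cycle composes to the identity, given that
first-return cycles do. -/
lemma cycle_comp
    (hcyc : ∀ (i : S) (n : ℕ) (v : ℕ → S), v 0 = i → 0 < n → v n = i →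
      (∀ k, 0 < k → k < n → v k ≠ i) → (∀ k < n, 0 < p (v k) (v (k + 1))) →
      pathComp g v n = (1, 0)) :
    ∀ (n : ℕ) (v : ℕ → S) (i : S), v 0 = i → v n = i →
      (∀ k < n, 0 < p (v k) (v (k + 1))) → pathComp g v n = (1, 0) := by
  intro n
  induction n using Nat.strong_induction_on with
  | _ n IH =>
    intro v i hv0 hvn hp
    rcases Nat.eq_zero_or_pos n with h0 | hn
    · subst h0; rfl
    by_cases hfr : ∀ k, 0 < k → k < n → v k ≠ i
    · exact hcyc i n v hv0 hn hvn hfr hp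
    · push_neg at hfr
      obtain ⟨m, hm1, hm2, hm3⟩ := hfr
      have hsplit := pathComp_split g v m (n - m)
      rw [show m + (n - m) = n from by omega] at hsplit
      rw [hsplit,
        IH m (by omega) v i hv0 hm3 (fun k hk => hp k (by omega)),
        IH (n - m) (by omega) (fun k => v (m + k)) i (by simpa using hm3)
          (by
            show v (m + (n - m)) = i
            rw [show m + (n - m) = n from by omega]
            exact hvn)
          (fun k hk => by
            have h1 := hp (m + k) (by omega)
            have h2 : m + k + 1 = m + (k + 1) := by omega
            rw [h2] at h1
            exact h1)]
      simp

/-- Path independence: any two positive-probability paths between the same endpoints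
have the same composition. -/
lemma pathComp_eq_of_paths (hgne : ∀ i j, (g i j).1 ≠ 0)
    (hcyc : ∀ (i : S) (n : ℕ) (v : ℕ → S), v 0 = i → 0 < n → v n = i →
      (∀ k, 0 < k → k < n → v k ≠ i) → (∀ k < n, 0 < p (v k) (v (k + 1))) →
      pathComp g v n = (1, 0))
    (hreach : ∀ i j : S, ∃ (n : ℕ) (v : ℕ → S), v 0 = i ∧ v n = j ∧
      ∀ k < n, 0 < p (v k) (v (k + 1)))
    {i j : S} {n n' : ℕ} {v v' : ℕ → S}
    (hv0 : v 0 = i) (hvn : v n = j) (hvp : ∀ k < n, 0 < p (v k) (v (k + 1)))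
    (hv0' : v' 0 = i) (hvn' : v' n' = j) (hvp' : ∀ k < n', 0 < p (v' k) (v' (k + 1))) :
    pathComp g v n = pathComp g v' n' := by
  obtain ⟨m, w, hw0, hwm, hwp⟩ := hreach j i
  have key : ∀ (N : ℕ) (u : ℕ → S), u 0 = i → u N = j → (∀ k < N, 0 < p (u k) (u (k + 1))) →
      comp2 (pathComp g u N) (pathComp g w m) = (1, 0) := by
    intro N u hu0 huN hup
    obtain ⟨z, hz0, hzNm, hzp, hzcomp⟩ :=
      concat_path p g u N w m (by rw [huN, hw0]) hup hwp
    rw [← hzcomp]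
    exact cycle_comp p g hcyc (N + m) z i (by rw [hz0, hu0]) (by rw [hzNm, hwm]) hzp
  exact comp2_cancel (pathComp_fst_ne g hgne w m)
    (key n v hv0 hvn hvp) (key n' v' hv0' hvn' hvp')

end Paths

section MeasureLayer

variable {S : Type*} [MeasurableSpace S] [MeasurableSingletonClass S] [Countable S]
variable {Ω : Type*} [MeasurableSpace Ω]
variable (X : MMSetting S Ω)

/-- The event that the chain follows the path `v` up to time `n`. -/
def pathEv (v : ℕ → S) (n : ℕ) : Set Ω := ⋂ k ∈ Finset.range (n + 1), {ω | X.M k ω = v k}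

lemma mem_pathEv {v : ℕ → S} {n : ℕ} {ω : Ω} :
    ω ∈ pathEv X v n ↔ ∀ k ≤ n, X.M k ω = v k := by
  simp [pathEv, Nat.lt_succ_iff]

lemma P_pathEv (i : S) (v : ℕ → S) (n : ℕ) (hv0 : v 0 = i) :
    X.P i (pathEv X v n) = ∏ k ∈ Finset.range n, X.p (v k) (v (k + 1)) :=
  X.chain i n v hv0

lemma modulated' (i : S) (n : ℕ) (v : ℕ → S) (E : ℕ → Set (ℝ × ℝ)) (hv0 : v 0 = i)
    (hEmeas : ∀ k, MeasurableSet (E k)) :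
    X.P i (pathEv X v n ∩ ⋂ k ∈ Finset.range n, {ω | (X.A k ω, X.B k ω) ∈ E k})
      = X.P i (pathEv X v n) * ∏ k ∈ Finset.range n, X.K (v k) (v (k + 1)) (E k) :=
  X.modulated i n v E hv0 hEmeas

lemma P_M0_compl (i : S) : X.P i {ω | X.M 0 ω = i}ᶜ = 0 := by
  haveI := X.prob i
  rw [prob_compl_eq_zero_iff (show MeasurableSet {ω | X.M 0 ω = i} from
    (X.measM 0) (measurableSet_singleton i))]
  exact X.start i

lemma P_M0_ne (i j : S) (hij : j ≠ i) : X.P i {ω | X.M 0 ω = j} = 0 := by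
  refine le_antisymm (le_trans (measure_mono ?_) (P_M0_compl X i).le) zero_le
  intro ω hω
  simp only [mem_compl_iff, mem_setOf_eq] at *
  rw [hω]
  exact hij

lemma null_on_paths (i : S) (n : ℕ) (T : Set Ω)
    (h : ∀ v : ℕ → S, v 0 = i → 0 < X.P i (pathEv X v n) → X.P i (pathEv X v n ∩ T) = 0) :
    X.P i T = 0 := by
  classical
  have key : ∀ u : Fin (n + 1) → S,
      X.P i (pathEv X (fun k => if h : k < n + 1 then u ⟨k, h⟩ else i) n ∩ T) = 0 := by
    intro u
    set v : ℕ → S := fun k => if h : k < n + 1 then u ⟨k, h⟩ else i with hv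
    by_cases hv0 : v 0 = i
    · rcases eq_or_lt_of_le (show 0 ≤ X.P i (pathEv X v n) from zero_le) with hz | hpos
      · exact le_antisymm (le_trans (measure_mono inter_subset_left) hz.symm.le) zero_le
      · exact h v hv0 hpos
    · refine le_antisymm ?_ zero_le
      have hsub : pathEv X v n ⊆ {ω | X.M 0 ω = v 0} :=
        fun ω hω => (mem_pathEv X).1 hω 0 (Nat.zero_le n)
      calc X.P i (pathEv X v n ∩ T) ≤ X.P i {ω | X.M 0 ω = v 0} :=
            measure_mono (inter_subset_left.trans hsub)
        _ = 0 := P_M0_ne X i (v 0) hv0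
  have hcov : T ⊆ (⋃ u : Fin (n + 1) → S,
      (pathEv X (fun k => if h : k < n + 1 then u ⟨k, h⟩ else i) n ∩ T)) ∪
        {ω | X.M 0 ω = i}ᶜ := by
    intro ω hω
    by_cases hM : X.M 0 ω = i
    · left
      refine mem_iUnion.2 ⟨fun k => X.M k ω, ?_, hω⟩
      refine (mem_pathEv X).2 fun k hk => ?_
      simp [Nat.lt_succ_iff.2 hk]
    · right
      exact hM
  refine le_antisymm ?_ zero_le
  calc X.P i T ≤ X.P i _ + X.P i {ω | X.M 0 ω = i}ᶜ :=
        le_trans (measure_mono hcov) (measure_union_le _ _)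
    _ ≤ (∑' u : Fin (n + 1) → S, X.P i
          (pathEv X (fun k => if h : k < n + 1 then u ⟨k, h⟩ else i) n ∩ T)) + 0 :=
        add_le_add (measure_iUnion_le _) (P_M0_compl X i).le
    _ = 0 := by rw [add_zero]; exact ENNReal.tsum_eq_zero.2 key

lemma edge_pos_of_pathEv_pos (i : S) (v : ℕ → S) (n : ℕ) (hv0 : v 0 = i)
    (hpos : 0 < X.P i (pathEv X v n)) : ∀ k < n, 0 < X.p (v k) (v (k + 1)) := by
  intro k hk
  rw [P_pathEv X i v n hv0] at hpos
  rw [pos_iff_ne_zero]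
  intro h0
  exact hpos.ne' (Finset.prod_eq_zero (Finset.mem_range.2 hk) h0)

lemma exists_pos_path_s13 (i j : S) : ∃ (n : ℕ) (v : ℕ → S), v 0 = i ∧ v n = j ∧
    ∀ k < n, 0 < X.p (v k) (v (k + 1)) := by
  obtain ⟨n, hn⟩ := X.irreducible i j
  by_contra hcon
  push_neg at hcon
  refine hn.ne' ?_
  refine null_on_paths X i n _ fun v hv0 hpos => ?_
  by_cases hvn : v n = j
  · exfalso
    obtain ⟨k, hk, hknot⟩ := hcon n v hv0 hvn
    exact absurd hknot (not_le.mpr (edge_pos_of_pathEv_pos X i v n hv0 hpos k hk))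
  · refine le_antisymm ?_ zero_le
    have hempty : pathEv X v n ∩ {ω | X.M n ω = j} = ∅ := by
      ext ω
      simp only [mem_inter_iff, mem_empty_iff_false, iff_false, not_and, mem_setOf_eq]
      intro h1 h2
      exact hvn (((mem_pathEv X).1 h1 n le_rfl).symm.trans h2)
    rw [hempty, measure_empty]

lemma modulated_single (i : S) (v : ℕ → S) (n : ℕ) (hv0 : v 0 = i) (k : ℕ) (hk : k < n)
    (E : Set (ℝ × ℝ)) (hE : MeasurableSet E) :
    X.P i (pathEv X v n ∩ {ω | (X.A k ω, X.B k ω) ∈ E})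
      = X.P i (pathEv X v n) * X.K (v k) (v (k + 1)) E := by
  classical
  have hmod := modulated' X i n v (fun l => if l = k then E else Set.univ) hv0
    (fun l => by
      by_cases hlk : l = k
      · simpa [hlk] using hE
      · simp [hlk])
  have hset : (⋂ l ∈ Finset.range n, {ω | (X.A l ω, X.B l ω) ∈
      (if l = k then E else Set.univ)}) = {ω | (X.A k ω, X.B k ω) ∈ E} := by
    ext ω
    simp only [mem_iInter, Finset.mem_range, mem_setOf_eq]
    constructor
    · intro h
      have := h k hk
      simpa using this
    · intro h l hl
      by_cases hlk : l = k
      · subst hlk; simpa using h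
      · simp [hlk]
  have hprod : ∏ l ∈ Finset.range n, X.K (v l) (v (l + 1)) (if l = k then E else Set.univ)
      = X.K (v k) (v (k + 1)) E := by
    rw [Finset.prod_eq_single_of_mem k (Finset.mem_range.2 hk)]
    · simp
    · intro l _ hlk
      haveI := X.Kprob (v l) (v (l + 1))
      simp [hlk]
  rw [hset, hprod] at hmod
  exact hmod

lemma measurable_pairMap (n : ℕ) : Measurable fun ω (k : Fin n) => (X.A k ω, X.B k ω) :=
  measurable_pi_lambda _ fun k => (X.measA k).prodMk (X.measB k)

lemma jointLaw (i : S) (v : ℕ → S) (n : ℕ) (hv0 : v 0 = i)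
    (hpos : 0 < X.P i (pathEv X v n)) :
    Measure.map (fun ω (k : Fin n) => (X.A k ω, X.B k ω))
        ((X.P i (pathEv X v n))⁻¹ • (X.P i).restrict (pathEv X v n))
      = Measure.pi fun k : Fin n => X.K (v k) (v (k + 1)) := by
  classical
  haveI := X.prob i
  haveI : ∀ k : Fin n, IsProbabilityMeasure (X.K (v ↑k) (v (↑k + 1))) := fun k => X.Kprob _ _
  refine (Measure.pi_eq fun s hs => ?_).symm
  set s' : ℕ → Set (ℝ × ℝ) := fun l => if h : l < n then s ⟨l, h⟩ else Set.univ with hs'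
  have hs'meas : ∀ l, MeasurableSet (s' l) := by
    intro l
    by_cases h : l < n
    · simpa [hs', h] using hs ⟨l, h⟩
    · simp [hs', h]
  have hmap : Measurable fun ω (k : Fin n) => (X.A k ω, X.B k ω) := measurable_pairMap X n
  have hpre : (fun ω (k : Fin n) => (X.A k ω, X.B k ω)) ⁻¹' Set.univ.pi s
      = ⋂ l ∈ Finset.range n, {ω | (X.A l ω, X.B l ω) ∈ s' l} := by
    ext ω
    simp only [mem_preimage, Set.mem_univ_pi, mem_iInter, Finset.mem_range, mem_setOf_eq]
    constructor
    · intro h l hl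
      simpa [hs', hl] using h ⟨l, hl⟩
    · intro h k
      have := h k k.isLt
      simpa [hs', k.isLt] using this
  have hmod := modulated' X i n v s' hv0 hs'meas
  rw [Measure.map_apply hmap (MeasurableSet.univ_pi hs), Measure.smul_apply,
    Measure.restrict_apply (hmap (MeasurableSet.univ_pi hs)), hpre, Set.inter_comm, hmod,
    smul_eq_mul, ← mul_assoc, ENNReal.inv_mul_cancel hpos.ne' (measure_ne_top _ _), one_mul,
    Finset.prod_range fun l => X.K (v l) (v (l + 1)) (s' l)]
  exact Finset.prod_congr rfl fun k _ => by simp [hs', k.isLt]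

lemma tau_one_eq (i : S) (ω : Ω) : X.tau i 1 ω = sInf {k | 0 < k ∧ X.M k ω = i} := rfl

lemma tau_eq_on_pathEv (i : S) (v : ℕ → S) (n : ℕ) (hn : 0 < n) (hvn : v n = i)
    (hint : ∀ k, 0 < k → k < n → v k ≠ i) {ω : Ω} (hω : ω ∈ pathEv X v n) :
    X.tau i 1 ω = n := by
  have hM := (mem_pathEv X).1 hω
  have hmem : n ∈ {k | 0 < k ∧ X.M k ω = i} := ⟨hn, by rw [hM n le_rfl, hvn]⟩
  rw [tau_one_eq]
  refine le_antisymm (Nat.sInf_le hmem) (le_of_not_gt fun hlt => ?_)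
  have hmm := Nat.sInf_mem (⟨n, hmem⟩ : {k | 0 < k ∧ X.M k ω = i}.Nonempty)
  exact hint _ hmm.1 hlt (by rw [← hM _ (le_of_lt hlt)]; exact hmm.2)

lemma measurableSet_D (i : S) (k : ℕ) : MeasurableSet {ω | 0 < k ∧ X.M k ω = i} := by
  by_cases hk : 0 < k
  · have : {ω | 0 < k ∧ X.M k ω = i} = {ω | X.M k ω = i} := by ext ω; simp [hk]
    rw [this]
    exact (X.measM k) (measurableSet_singleton i)
  · have : {ω | 0 < k ∧ X.M k ω = i} = ∅ := by ext ω; simp [hk]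
    rw [this]
    exact MeasurableSet.empty

lemma measurableSet_tau_eq (i : S) (m : ℕ) : MeasurableSet {ω | X.tau i 1 ω = m} := by
  rcases Nat.eq_zero_or_pos m with rfl | hm
  · have hset : {ω | X.tau i 1 ω = 0} = ⋂ k, {ω | 0 < k ∧ X.M k ω = i}ᶜ := by
      ext ω
      simp only [mem_setOf_eq, tau_one_eq, mem_iInter, mem_compl_iff]
      rw [Nat.sInf_eq_zero]
      constructor
      · rintro (⟨h0, _⟩ | hemp)
        · exact absurd h0 (lt_irrefl 0)
        · intro k
          rw [Set.eq_empty_iff_forall_notMem] at hemp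
          exact hemp k
      · intro h
        right
        rw [Set.eq_empty_iff_forall_notMem]
        exact h
    rw [hset]
    exact MeasurableSet.iInter fun k => (measurableSet_D X i k).compl
  · have hset : {ω | X.tau i 1 ω = m} = {ω | 0 < m ∧ X.M m ω = i} ∩
        ⋂ k, {ω | k < m → ¬(0 < k ∧ X.M k ω = i)} := by
      ext ω
      simp only [mem_setOf_eq, mem_inter_iff, mem_iInter, tau_one_eq]
      constructor
      · intro h
        have hne : {k | 0 < k ∧ X.M k ω = i}.Nonempty := by
          by_contra hne
          rw [Set.not_nonempty_iff_eq_empty] at hne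
          rw [hne, Nat.sInf_empty] at h
          omega
        have hmem := Nat.sInf_mem hne
        rw [h] at hmem
        refine ⟨hmem, fun k hk => ?_⟩
        rw [← h] at hk
        exact Nat.notMem_of_lt_sInf hk
      · rintro ⟨hmem, hlow⟩
        refine le_antisymm (Nat.sInf_le hmem) (le_of_not_gt fun hlt => ?_)
        have hmm := Nat.sInf_mem (⟨m, hmem⟩ : {k | 0 < k ∧ X.M k ω = i}.Nonempty)
        exact hlow _ hlt hmm
    rw [hset]
    refine (measurableSet_D X i m).inter (MeasurableSet.iInter fun k => ?_)
    by_cases hk : k < m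
    · have : {ω | k < m → ¬(0 < k ∧ X.M k ω = i)} = {ω | 0 < k ∧ X.M k ω = i}ᶜ := by
        ext ω; simp [hk]
      rw [this]
      exact (measurableSet_D X i k).compl
    · have : {ω | k < m → ¬(0 < k ∧ X.M k ω = i)} = Set.univ := by
        ext ω; simp [hk]
      rw [this]
      exact MeasurableSet.univ

lemma measurable_Pprod (n : ℕ) : Measurable (X.Pprod n) :=
  Finset.measurable_prod _ fun k _ => X.measA k

lemma measurable_Ssum (n : ℕ) : Measurable (X.Ssum n) :=
  Finset.measurable_sum _ fun k _ => (measurable_Pprod X k).mul (X.measB k)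

lemma measurableSet_AiBi (i : S) (c : ℝ) :
    MeasurableSet {ω | X.Ai i ω * c + X.Bi i ω = c} := by
  have hdec : {ω | X.Ai i ω * c + X.Bi i ω = c}
      = ⋃ m, ({ω | X.tau i 1 ω = m} ∩ {ω | X.Pprod m ω * c + X.Ssum m ω = c}) := by
    ext ω
    simp only [mem_setOf_eq, mem_iUnion, mem_inter_iff]
    constructor
    · intro h
      exact ⟨X.tau i 1 ω, rfl, h⟩
    · rintro ⟨m, hm, h⟩
      show X.Pprod (X.tau i 1 ω) ω * c + X.Ssum (X.tau i 1 ω) ω = c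
      rw [hm]
      exact h
  rw [hdec]
  refine MeasurableSet.iUnion fun m => (measurableSet_tau_eq X i m).inter ?_
  exact (((measurable_Pprod X m).mul_const c).add (measurable_Ssum X m))
    (measurableSet_singleton c)

lemma measurableSet_Ai_one (i : S) : MeasurableSet {ω | X.Ai i ω = 1} := by
  have hdec : {ω | X.Ai i ω = 1}
      = ⋃ m, ({ω | X.tau i 1 ω = m} ∩ {ω | X.Pprod m ω = 1}) := by
    ext ω
    simp only [mem_setOf_eq, mem_iUnion, mem_inter_iff]
    constructor
    · intro h
      exact ⟨X.tau i 1 ω, rfl, h⟩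
    · rintro ⟨m, hm, h⟩
      show X.Pprod (X.tau i 1 ω) ω = 1
      rw [hm]
      exact h
  rw [hdec]
  refine MeasurableSet.iUnion fun m => (measurableSet_tau_eq X i m).inter ?_
  exact (measurable_Pprod X m) (measurableSet_singleton 1)

lemma cycle_dirac (i : S) (c : ℝ)
    (hEc : X.P i {ω | X.Ai i ω * c + X.Bi i ω = c} = 1)
    (hone : X.P i {ω | X.Ai i ω = 1} = 1)
    (n : ℕ) (v : ℕ → S) (hv0 : v 0 = i) (hn : 0 < n) (hvn : v n = i)
    (hint : ∀ k, 0 < k → k < n → v k ≠ i)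
    (hp : ∀ k < n, 0 < X.p (v k) (v (k + 1))) :
    ∃ x : Fin n → ℝ × ℝ,
      (∀ k : Fin n, (x k).1 ≠ 0 ∧ X.K (v k) (v (k + 1)) = Measure.dirac (x k)) ∧
      compN n (extN x) = (1, 0) := by
  haveI := X.prob i
  haveI : ∀ k : Fin n, IsProbabilityMeasure (X.K (v ↑k) (v (↑k + 1))) := fun k => X.Kprob _ _
  have hpos : 0 < X.P i (pathEv X v n) := by
    rw [P_pathEv X i v n hv0, pos_iff_ne_zero]
    exact Finset.prod_ne_zero_iff.2 fun k hk => (hp k (Finset.mem_range.1 hk)).ne'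
  set G : Set Ω := {ω | X.Ai i ω * c + X.Bi i ω = c} ∩ {ω | X.Ai i ω = 1} with hG
  have h1 : X.P i {ω | X.Ai i ω * c + X.Bi i ω = c}ᶜ = 0 :=
    (prob_compl_eq_zero_iff (measurableSet_AiBi X i c)).2 hEc
  have h2 : X.P i {ω | X.Ai i ω = 1}ᶜ = 0 :=
    (prob_compl_eq_zero_iff (measurableSet_Ai_one X i)).2 hone
  have hGcompl : X.P i Gᶜ = 0 := by
    rw [hG, Set.compl_inter]
    exact le_antisymm ((measure_union_le _ _).trans (by rw [h1, h2, add_zero])) zero_le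
  have hEvG : X.P i (pathEv X v n ∩ G) = X.P i (pathEv X v n) := by
    refine le_antisymm (measure_mono inter_subset_left) ?_
    calc X.P i (pathEv X v n)
        ≤ X.P i (pathEv X v n ∩ G) + X.P i (pathEv X v n \ G) :=
          measure_le_inter_add_diff _ _ _
      _ ≤ X.P i (pathEv X v n ∩ G) + X.P i Gᶜ :=
          add_le_add le_rfl (measure_mono fun ω hω => hω.2)
      _ = X.P i (pathEv X v n ∩ G) := by rw [hGcompl, add_zero]
  have hincl : pathEv X v n ∩ G ⊆
      (fun ω (k : Fin n) => (X.A k ω, X.B k ω)) ⁻¹' {y | compN n (extN y) = (1, 0)} := by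
    rintro ω ⟨hEv, hG1, hG2⟩
    have htau : X.tau i 1 ω = n := tau_eq_on_pathEv X i v n hn hvn hint hEv
    have hAi : X.Ai i ω = X.Pprod n ω := by
      show X.Pprod (X.tau i 1 ω) ω = X.Pprod n ω
      rw [htau]
    have hBi : X.Bi i ω = X.Ssum n ω := by
      show X.Ssum (X.tau i 1 ω) ω = X.Ssum n ω
      rw [htau]
    have hProd1 : X.Pprod n ω = 1 := by rw [← hAi]; exact hG2
    have hSsum0 : X.Ssum n ω = 0 := by
      have h3 : X.Ai i ω * c + X.Bi i ω = c := hG1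
      rw [hAi, hBi, hProd1, one_mul] at h3
      linarith
    show compN n (extN fun k : Fin n => (X.A k ω, X.B k ω)) = (1, 0)
    have hcongr : compN n (extN fun k : Fin n => (X.A k ω, X.B k ω))
        = compN n fun k => (X.A k ω, X.B k ω) :=
      compN_congr n _ _ fun k hk => by simp [extN, hk]
    rw [hcongr, compN_pair]
    exact Prod.ext hProd1 hSsum0
  have hEmeas : MeasurableSet {y : Fin n → ℝ × ℝ | compN n (extN y) = (1, 0)} :=
    ((measurable_compN n).comp measurable_extN) (measurableSet_singleton ((1 : ℝ), (0 : ℝ)))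
  have hν := jointLaw X i v n hv0 hpos
  have hνval : Measure.pi (fun k : Fin n => X.K (v k) (v (k + 1)))
      {y | compN n (extN y) = (1, 0)} = 1 := by
    haveI : IsProbabilityMeasure (Measure.pi fun k : Fin n => X.K (v ↑k) (v (↑k + 1))) := by
      constructor
      rw [Measure.pi_univ]
      simp [measure_univ]
    refine le_antisymm prob_le_one ?_
    rw [← hν, Measure.map_apply (measurable_pairMap X n) hEmeas, Measure.smul_apply,
      Measure.restrict_apply ((measurable_pairMap X n) hEmeas), smul_eq_mul]
    have hle : X.P i (pathEv X v n) ≤ X.P i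
        ((fun ω (k : Fin n) => (X.A k ω, X.B k ω)) ⁻¹' {y | compN n (extN y) = (1, 0)}
          ∩ pathEv X v n) := by
      rw [← hEvG]
      exact measure_mono fun ω hω => ⟨hincl hω, hω.1⟩
    calc (1 : ℝ≥0∞) = (X.P i (pathEv X v n))⁻¹ * X.P i (pathEv X v n) :=
          (ENNReal.inv_mul_cancel hpos.ne' (measure_ne_top _ _)).symm
      _ ≤ _ := mul_le_mul_right hle _
  exact pi_comp_dirac n _ (fun k => X.Kprob _ _) (1, 0) (by norm_num) hνval

lemma edge_dirac (i j : S) (hp : 0 < X.p i j) (c : ℝ)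
    (hEc : X.P i {ω | X.Ai i ω * c + X.Bi i ω = c} = 1)
    (hone : X.P i {ω | X.Ai i ω = 1} = 1) :
    ∃ x : ℝ × ℝ, x.1 ≠ 0 ∧ X.K i j = Measure.dirac x := by
  classical
  by_cases hji : j = i
  · subst hji
    obtain ⟨x, hx, -⟩ := cycle_dirac X j c hEc hone 1 (fun _ => j) rfl one_pos rfl
      (fun k hk1 hk2 => by omega) (fun k hk => by
        have : k = 0 := by omega
        subst this
        exact hp)
    exact ⟨x 0, (hx 0).1, (hx 0).2⟩
  · obtain ⟨m, w, hw0, hwm, hwp⟩ := exists_pos_path_s13 X j i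
    have hm0 : m ≠ 0 := by
      intro h0
      rw [h0, hw0] at hwm
      exact hji hwm
    have hne : {k | w k = i}.Nonempty := ⟨m, hwm⟩
    set m' := sInf {k | w k = i} with hm'
    have hm'mem : w m' = i := Nat.sInf_mem hne
    have hm'le : m' ≤ m := Nat.sInf_le hwm
    have hm'pos : 0 < m' := by
      rcases Nat.eq_zero_or_pos m' with h0 | h
      · exfalso
        rw [h0, hw0] at hm'mem
        exact hji hm'mem
      · exact h
    have hint' : ∀ k < m', w k ≠ i := fun k hk => Nat.notMem_of_lt_sInf hk
    set v : ℕ → S := fun k => if k = 0 then i else w (k - 1) with hv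
    have hv0 : v 0 = i := by simp [hv]
    have hv1 : v 1 = j := by simp [hv, hw0]
    have hvn : v (m' + 1) = i := by
      simp only [hv, Nat.succ_ne_zero, if_false, Nat.add_sub_cancel]
      exact hm'mem
    obtain ⟨x, hx, -⟩ := cycle_dirac X i c hEc hone (m' + 1) v hv0 (Nat.succ_pos m') hvn
      (fun k hk1 hk2 => by
        have hkne : k ≠ 0 := by omega
        simp only [hv, hkne, if_false]
        exact hint' (k - 1) (by omega))
      (fun k hk => by
        rcases Nat.eq_zero_or_pos k with h0 | hkpos
        · subst h0
          rw [hv0, hv1]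
          exact hp
        · have hkne : k ≠ 0 := by omega
          have hkne1 : k + 1 ≠ 0 := by omega
          simp only [hv, hkne, hkne1, if_false]
          have : k + 1 - 1 = (k - 1) + 1 := by omega
          rw [this]
          exact hwp (k - 1) (by omega))
    refine ⟨x ⟨0, Nat.succ_pos m'⟩, (hx _).1, ?_⟩
    have := (hx ⟨0, Nat.succ_pos m'⟩).2
    simpa [hv0, hv1] using this

lemma pair_dirac_on_pathEv (i : S) (v : ℕ → S) (n : ℕ) (hv0 : v 0 = i)
    (k : ℕ) (hk : k < n) {x : ℝ × ℝ} (hd : X.K (v k) (v (k + 1)) = Measure.dirac x) :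
    X.P i (pathEv X v n ∩ {ω | (X.A k ω, X.B k ω) ≠ x}) = 0 := by
  have hsingle := modulated_single X i v n hv0 k hk {x}ᶜ (measurableSet_singleton x).compl
  have hzero : (Measure.dirac x : Measure (ℝ × ℝ)) {x}ᶜ = 0 := by
    rw [Measure.dirac_apply' _ (measurableSet_singleton x).compl]
    simp
  rw [hd, hzero, mul_zero] at hsingle
  have : {ω | (X.A k ω, X.B k ω) ≠ x} = {ω | (X.A k ω, X.B k ω) ∈ ({x}ᶜ : Set (ℝ × ℝ))} := by
    ext ω; simp
  rw [this]
  exact hsingle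

lemma pairs_dirac_on_pathEv (i : S) (v : ℕ → S) (n : ℕ) (hv0 : v 0 = i)
    (hpos : 0 < X.P i (pathEv X v n)) (f : ℕ → ℝ × ℝ)
    (hf : ∀ k < n, X.K (v k) (v (k + 1)) = Measure.dirac (f k)) :
    X.P i (pathEv X v n ∩ {ω | ¬ ∀ k < n, (X.A k ω, X.B k ω) = f k}) = 0 := by
  have hsub : pathEv X v n ∩ {ω | ¬ ∀ k < n, (X.A k ω, X.B k ω) = f k}
      ⊆ ⋃ k : Fin n, (pathEv X v n ∩ {ω | (X.A k ω, X.B k ω) ≠ f k}) := by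
    rintro ω ⟨h1, h2⟩
    simp only [mem_setOf_eq, not_forall] at h2
    obtain ⟨k, hk, hne⟩ := h2
    exact mem_iUnion.2 ⟨⟨k, hk⟩, h1, hne⟩
  have hterm : ∀ k : Fin n, X.P i (pathEv X v n ∩ {ω | (X.A k ω, X.B k ω) ≠ f k}) = 0 :=
    fun k => pair_dirac_on_pathEv X i v n hv0 k k.isLt (hf k k.isLt)
  refine le_antisymm ((measure_mono hsub).trans ((measure_iUnion_le _).trans ?_)) zero_le
  rw [ENNReal.tsum_eq_zero.2 hterm]

lemma Pπ_null (T : Set Ω) (hT : MeasurableSet T) (h : ∀ i, X.P i T = 0) : X.Pπ T = 0 := by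
  rw [MMSetting.Pπ, Measure.sum_apply _ hT]
  simp [h]

end MeasureLayer
end Infrastructure


/-- **Proposition 4.6** (consequences of degeneracy when all cycle products equal one).
In the Markov-modulated setting with `|S| > 1`, assume condition (E): for every `i ∈ S`
there is `c_i ∈ ℝ` with `P_i(A_1^i c_i + B_1^i = c_i) = 1`, and assume
`P_i(A_1^i = 1) = 1` for all `i ∈ S`. Then:
(a) there are functions `f_A : S² → ℝ \ {0}` and `f_B : S² → ℝ` with
`(A_1, B_1) = (f_A(M_0, M_1), f_B(M_0, M_1))` a.s.;
(b) there is a family `(Φ_{ij})` of nonconstant affine maps `x ↦ α_{ij} x + β_{ij}`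
with `Φ_{ij} = Φ_{ji}⁻¹` (so `Φ_{ii} = id`), such that conditioned on `M_n = j` the map
`Ψ_1 ∘ ⋯ ∘ Ψ_n` equals `Φ_{ij}` `P_i`-a.s. whenever `P_i(M_n = j) > 0`; in particular
`Ψ_n = Φ_{M_{n-1} M_n}` a.s. for all `n ≥ 1`;
(c) for each `(j, c) ∈ S × ℝ` there is a family `(c_i)_{i ∈ S}` with `c_j = c` satisfying
the degeneracy condition (D) and `Π_n c_{M_n} + ∑_{k=1}^n Π_{k-1} B_k = c_{M_0}` a.s.
for all `n ≥ 1`. -/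
theorem degeneracy_consequences_lattice
    {S : Type*} [MeasurableSpace S] [MeasurableSingletonClass S] [Countable S] [Nontrivial S]
    {Ω : Type*} [MeasurableSpace Ω] (X : MMSetting S Ω)
    (c₀ : S → ℝ) (hE : ∀ i : S, X.P i {ω | X.Ai i ω * c₀ i + X.Bi i ω = c₀ i} = 1)
    (hone : ∀ i : S, X.P i {ω | X.Ai i ω = 1} = 1) :
    (∃ fA fB : S → S → ℝ, (∀ i j : S, fA i j ≠ 0) ∧
        ∀ᵐ ω ∂ X.Pπ, X.A 0 ω = fA (X.M 0 ω) (X.M 1 ω) ∧ X.B 0 ω = fB (X.M 0 ω) (X.M 1 ω)) ∧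
      (∃ α β : S → S → ℝ,
        (∀ i j : S, α i j ≠ 0) ∧
        (∀ (i j : S) (x : ℝ), α i j * (α j i * x + β j i) + β i j = x) ∧
        (∀ i : S, α i i = 1 ∧ β i i = 0) ∧
        (∀ (i j : S) (n : ℕ), 0 < X.P i {ω | X.M n ω = j} →
          ∀ᵐ ω ∂ X.P i, X.M n ω = j → X.Pprod n ω = α i j ∧ X.Ssum n ω = β i j) ∧
        (∀ n : ℕ, ∀ᵐ ω ∂ X.Pπ,
          X.A n ω = α (X.M n ω) (X.M (n + 1) ω) ∧ X.B n ω = β (X.M n ω) (X.M (n + 1) ω))) ∧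
      (∀ (j : S) (cv : ℝ), ∃ c : S → ℝ, c j = cv ∧ X.DegenD c ∧
        ∀ n : ℕ, 1 ≤ n →
          ∀ᵐ ω ∂ X.Pπ, X.Pprod n ω * c (X.M n ω) + X.Ssum n ω = c (X.M 0 ω)) := by
  classical
  -- Dirac points for every edge
  have hKd : ∀ i j : S, ∃ x : ℝ × ℝ, x.1 ≠ 0 ∧ (0 < X.p i j → X.K i j = Measure.dirac x) := by
    intro i j
    by_cases hp : 0 < X.p i j
    · obtain ⟨x, hx1, hx2⟩ := edge_dirac X i j hp (c₀ i) (hE i) (hone i)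
      exact ⟨x, hx1, fun _ => hx2⟩
    · exact ⟨(1, 0), one_ne_zero, fun h => absurd h hp⟩
  choose g hgne hgd using hKd
  -- first-return cycles compose to the identity
  have hcyc : ∀ (i : S) (n : ℕ) (v : ℕ → S), v 0 = i → 0 < n → v n = i →
      (∀ k, 0 < k → k < n → v k ≠ i) → (∀ k < n, 0 < X.p (v k) (v (k + 1))) →
      pathComp g v n = (1, 0) := by
    intro i n v hv0 hn hvn hint hp
    obtain ⟨x, hx, hcomp⟩ := cycle_dirac X i (c₀ i) (hE i) (hone i) n v hv0 hn hvn hint hp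
    have hgx : ∀ (k : ℕ) (hk : k < n), g (v k) (v (k + 1)) = x ⟨k, hk⟩ := by
      intro k hk
      have h1 := hgd (v k) (v (k + 1)) (hp k hk)
      have h2 := (hx ⟨k, hk⟩).2
      exact dirac_point_eq (h1.symm.trans h2)
    show compN n (fun k => g (v k) (v (k + 1))) = (1, 0)
    rw [compN_congr n _ (extN x) (fun k hk => by rw [hgx k hk]; simp [extN, hk])]
    exact hcomp
  have hreach := exists_pos_path_s13 X
  -- the canonical affine maps Φ i j
  choose plen ppath hp0 hp1 hpe using hreach
  have hreach' : ∀ i j : S, ∃ (n : ℕ) (v : ℕ → S), v 0 = i ∧ v n = j ∧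
      ∀ k < n, 0 < X.p (v k) (v (k + 1)) :=
    fun i j => ⟨plen i j, ppath i j, hp0 i j, hp1 i j, hpe i j⟩
  set Φ : S → S → ℝ × ℝ := fun i j => pathComp g (ppath i j) (plen i j) with hΦdef
  have hΦpath : ∀ (i j : S) (n : ℕ) (v : ℕ → S), v 0 = i → v n = j →
      (∀ k < n, 0 < X.p (v k) (v (k + 1))) → pathComp g v n = Φ i j := fun i j n v hv0 hvn hvp =>
    pathComp_eq_of_paths X.p g hgne hcyc hreach' hv0 hvn hvp (hp0 i j) (hp1 i j) (hpe i j)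
  have hΦii : ∀ i : S, Φ i i = (1, 0) := fun i =>
    cycle_comp X.p g hcyc (plen i i) (ppath i i) i (hp0 i i) (hp1 i i) (hpe i i)
  have hΦfst : ∀ i j : S, (Φ i j).1 ≠ 0 := fun i j => pathComp_fst_ne g hgne _ _
  have hΦcomp : ∀ i k j : S, comp2 (Φ i k) (Φ k j) = Φ i j := by
    intro i k j
    obtain ⟨u, hu0, hun, hup, hucomp⟩ := concat_path X.p g (ppath i k) (plen i k)
      (ppath k j) (plen k j) (by rw [hp1 i k, hp0 k j]) (hpe i k) (hpe k j)
    rw [← hucomp]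
    exact hΦpath i j _ u (by rw [hu0, hp0 i k]) (by rw [hun, hp1 k j]) hup
  have hΦinv : ∀ i j : S, comp2 (Φ i j) (Φ j i) = (1, 0) := fun i j => by
    rw [hΦcomp i j i, hΦii i]
  have hedge : ∀ i j : S, 0 < X.p i j → Φ i j = g i j := by
    intro i j hp
    have h1 : pathComp g (fun k => if k = 0 then i else j) 1 = Φ i j :=
      hΦpath i j 1 _ (by simp) (by simp) (fun k hk => by
        have hk0 : k = 0 := by omega
        subst hk0
        simpa using hp)
    rw [← h1]
    show compN 1 (fun k => g (if k = 0 then i else j) (if k + 1 = 0 then i else j)) = g i j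
    rw [compN_succ]
    simp
  -- master almost-sure statement under each `P i`
  have hmaster : ∀ (i : S) (n : ℕ), ∀ᵐ ω ∂ X.P i,
      (∀ k < n, (X.A k ω, X.B k ω) = g (X.M k ω) (X.M (k + 1) ω) ∧
        0 < X.p (X.M k ω) (X.M (k + 1) ω)) ∧
      (∀ k ≤ n, X.Pprod k ω = (Φ i (X.M k ω)).1 ∧ X.Ssum k ω = (Φ i (X.M k ω)).2) := by
    intro i n
    rw [ae_iff]
    refine null_on_paths X i n _ fun v hv0 hpos => ?_
    have hedges := edge_pos_of_pathEv_pos X i v n hv0 hpos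
    have hdir : ∀ k < n, X.K (v k) (v (k + 1)) = Measure.dirac (g (v k) (v (k + 1))) :=
      fun k hk => hgd _ _ (hedges k hk)
    have hnull := pairs_dirac_on_pathEv X i v n hv0 hpos
      (fun k => g (v k) (v (k + 1))) hdir
    refine le_antisymm (le_trans (measure_mono ?_) hnull.le) zero_le
    rintro ω ⟨hEv, hT⟩
    refine ⟨hEv, fun hall => hT ?_⟩
    have hM := (mem_pathEv X).1 hEv
    constructor
    · intro k hk
      rw [hM k (le_of_lt hk), hM (k + 1) hk]
      exact ⟨hall k hk, hedges k hk⟩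
    · intro k hk
      have hPS : (X.Pprod k ω, X.Ssum k ω) = pathComp g v k := by
        have h1 : (X.Pprod k ω, X.Ssum k ω)
            = compN k (fun l => (X.A l ω, X.B l ω)) :=
          (compN_pair k (fun l => X.A l ω) (fun l => X.B l ω)).symm
        rw [h1]
        exact compN_congr k _ _ fun l hl => hall l (lt_of_lt_of_le hl hk)
      have hΦk : pathComp g v k = Φ i (v k) :=
        hΦpath i (v k) k v hv0 rfl (fun l hl => hedges l (lt_of_lt_of_le hl hk))
      rw [hM k hk]
      have hfin := hPS.trans hΦk
      exact ⟨congrArg Prod.fst hfin, congrArg Prod.snd hfin⟩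
  -- almost sure statement at time 0
  have hM0 : ∀ i : S, ∀ᵐ ω ∂ X.P i, X.M 0 ω = i := by
    intro i
    rw [ae_iff]
    exact P_M0_compl X i
  -- transfer to the stationary measure
  have hPπae : ∀ {Q : Ω → Prop}, (∀ i, ∀ᵐ ω ∂ X.P i, Q ω) → (∀ᵐ ω ∂ X.Pπ, Q ω) := by
    intro Q h
    have : ∀ᵐ ω ∂ Measure.sum (fun i => X.π i • X.P i), Q ω :=
      Measure.ae_sum_iff.2 fun i =>
        Measure.ae_smul_measure (h i) _
    exact this
  -- the edge-level a.s. identification, under Pπ, for every time n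
  have hae5 : ∀ n : ℕ, ∀ᵐ ω ∂ X.Pπ,
      X.A n ω = (Φ (X.M n ω) (X.M (n + 1) ω)).1 ∧
      X.B n ω = (Φ (X.M n ω) (X.M (n + 1) ω)).2 := by
    intro n
    refine hPπae fun i => ?_
    filter_upwards [hmaster i (n + 1)] with ω hQ
    obtain ⟨hpair, hppos⟩ := hQ.1 n (Nat.lt_succ_self n)
    have hΦg : Φ (X.M n ω) (X.M (n + 1) ω) = g (X.M n ω) (X.M (n + 1) ω) :=
      hedge _ _ hppos
    rw [hΦg]
    exact ⟨congrArg Prod.fst hpair, congrArg Prod.snd hpair⟩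
  refine ⟨⟨fun i j => (Φ i j).1, fun i j => (Φ i j).2, hΦfst, hae5 0⟩,
    ⟨fun i j => (Φ i j).1, fun i j => (Φ i j).2, hΦfst, ?_, ?_, ?_, hae5⟩, ?_⟩
  · -- inverse relation
    intro i j x
    have h1 : (Φ i j).1 * (Φ j i).1 = 1 := congrArg Prod.fst (hΦinv i j)
    have h2 : (Φ i j).2 + (Φ i j).1 * (Φ j i).2 = 0 := congrArg Prod.snd (hΦinv i j)
    linear_combination x * h1 + h2
  · -- identity on the diagonal
    intro i
    show (Φ i i).1 = 1 ∧ (Φ i i).2 = 0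
    rw [hΦii i]
    exact ⟨rfl, rfl⟩
  · -- conditional identification of the backward composition
    intro i j n _hpos
    filter_upwards [hmaster i n] with ω hQ hMn
    have := hQ.2 n le_rfl
    rw [hMn] at this
    exact this
  · -- part (c)
    intro j cv
    refine ⟨fun i => (Φ i j).1 * cv + (Φ i j).2, ?_, ?_, ?_⟩
    · show (Φ j j).1 * cv + (Φ j j).2 = cv
      rw [hΦii j]
      norm_num
    · -- degeneracy condition (D)
      show ∀ᵐ ω ∂ X.Pπ, X.A 0 ω * ((Φ (X.M 1 ω) j).1 * cv + (Φ (X.M 1 ω) j).2) + X.B 0 ω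
        = (Φ (X.M 0 ω) j).1 * cv + (Φ (X.M 0 ω) j).2
      filter_upwards [hae5 0] with ω hω
      obtain ⟨hA, hB⟩ := hω
      have h1 : (Φ (X.M 0 ω) (X.M 1 ω)).1 * (Φ (X.M 1 ω) j).1 = (Φ (X.M 0 ω) j).1 :=
        congrArg Prod.fst (hΦcomp (X.M 0 ω) (X.M 1 ω) j)
      have h2 : (Φ (X.M 0 ω) (X.M 1 ω)).2 +
          (Φ (X.M 0 ω) (X.M 1 ω)).1 * (Φ (X.M 1 ω) j).2 = (Φ (X.M 0 ω) j).2 :=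
        congrArg Prod.snd (hΦcomp (X.M 0 ω) (X.M 1 ω) j)
      rw [hA, hB]
      linear_combination cv * h1 + h2
    · -- invariance of the backward iteration
      intro n _hn
      refine hPπae fun i => ?_
      filter_upwards [hmaster i n, hM0 i] with ω hQ hω0
      obtain ⟨hPn, hSn⟩ := hQ.2 n le_rfl
      have h1 : (Φ i (X.M n ω)).1 * (Φ (X.M n ω) j).1 = (Φ i j).1 :=
        congrArg Prod.fst (hΦcomp i (X.M n ω) j)
      have h2 : (Φ i (X.M n ω)).2 +
          (Φ i (X.M n ω)).1 * (Φ (X.M n ω) j).2 = (Φ i j).2 :=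
        congrArg Prod.snd (hΦcomp i (X.M n ω) j)
      rw [hPn, hSn, hω0]
      linear_combination cv * h1 + h2


end Perpetuities
end
end
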